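/- arXiv:1609.08072 — 12 statements merged into one kernel-verified Lean document; each statement's English description precedes it below -/
import Mathlib

section
/- Let G be a finite group with |G| = n ≥ 2, and let X_G be the simple graph with vertex set G × G in which two distinct vertices u, v are adjacent if and only if u⁻¹v lies in {(s,1) : s ∈ G, s ≠ 1} ∪ {(1,s) : s ∈ G, s ≠ 1} ∪ {(s,s) : s ∈ G, s ≠ 1}. Then X_G is strongly regular with parameters (n², 3n−3, n, 6): it has n² vertices, is (3n−3)-regular, any two adjacent vertices have exactly n common neighbours, and any two distinct non-adjacent vertices have exactly 6 common neighbours. -/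
namespace SRG2Aux

variable {G : Type*} [Group G]

def f : Fin 3 → G × G → G := fun i u =>
  match i with
  | 0 => u.1
  | 1 => u.2
  | 2 => u.2 * u.1⁻¹

lemma inj2 (i j : Fin 3) (hij : i ≠ j) (u v : G × G)
    (h1 : f i u = f i v) (h2 : f j u = f j v) : u = v := by
  obtain ⟨a, b⟩ := u; obtain ⟨c, d⟩ := v
  fin_cases i <;> fin_cases j <;>
    simp_all [f, Prod.ext_iff, mul_left_inj, mul_right_inj]

def sol : Fin 3 → Fin 3 → G → G → G × G := fun i j a b =>
  match i, j with
  | 0, 1 => (a, b)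
  | 0, 2 => (a, b * a)
  | 1, 0 => (b, a)
  | 1, 2 => (b⁻¹ * a, a)
  | 2, 0 => (b, a * b)
  | 2, 1 => (a⁻¹ * b, b)
  | _, _ => (a, b)

lemma sol_spec (i j : Fin 3) (hij : i ≠ j) (a b : G) :
    f i (sol i j a b) = a ∧ f j (sol i j a b) = b := by
  fin_cases i <;> fin_cases j <;> simp_all [f, sol]

lemma sol_eq (i j : Fin 3) (hij : i ≠ j) (w : G × G) (a b : G)
    (ha : f i w = a) (hb : f j w = b) : w = sol i j a b :=
  inj2 i j hij _ _ (by rw [ha, (sol_spec i j hij a b).1])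
    (by rw [hb, (sol_spec i j hij a b).2])

lemma fiber_eq [Fintype G] [DecidableEq G] (i j : Fin 3) (hij : i ≠ j) (a : G) :
    (Finset.univ.filter fun w : G × G => f i w = a)
      = Finset.univ.image (fun s => sol i j a s) := by
  ext w
  simp only [Finset.mem_filter, Finset.mem_univ, true_and, Finset.mem_image]
  constructor
  · intro h
    exact ⟨f j w, (sol_eq i j hij w a (f j w) h rfl).symm⟩
  · rintro ⟨s, rfl⟩
    exact (sol_spec i j hij a s).1

lemma other_ne (i : Fin 3) :
    i ≠ (if i = 0 then 1 else 0) := by fin_cases i <;> decide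

lemma fiber_card [Fintype G] [DecidableEq G] (i : Fin 3) (a : G) :
    (Finset.univ.filter fun w : G × G => f i w = a).card = Fintype.card G := by
  set j := (if i = 0 then (1 : Fin 3) else 0) with hj
  rw [fiber_eq i j (other_ne i) a, Finset.card_image_of_injective _ ?_, Finset.card_univ]
  intro s t hst
  have := congrArg (f j) hst
  rwa [(sol_spec i j (other_ne i) a s).2, (sol_spec i j (other_ne i) a t).2] at this

def other2 : Fin 3 → Fin 3 × Fin 3 := fun i =>
  match i with
  | 0 => (1, 2)
  | 1 => (0, 2)
  | 2 => (0, 1)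

lemma other2_spec (i : Fin 3) :
    (other2 i).1 ≠ i ∧ (other2 i).2 ≠ i ∧ (other2 i).1 ≠ (other2 i).2 ∧
      ∀ l : Fin 3, l = i ∨ l = (other2 i).1 ∨ l = (other2 i).2 := by
  fin_cases i <;> exact ⟨by decide, by decide, by decide, by decide⟩

lemma adj_iff (X : SimpleGraph (G × G))
    (hadj : ∀ u v : G × G, X.Adj u v ↔ u ≠ v ∧
      ((∃ s : G, s ≠ 1 ∧ u⁻¹ * v = (s, 1)) ∨ (∃ s : G, s ≠ 1 ∧ u⁻¹ * v = (1, s)) ∨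
        (∃ s : G, s ≠ 1 ∧ u⁻¹ * v = (s, s))))
    (u v : G × G) : X.Adj u v ↔ u ≠ v ∧ ∃ i, f i u = f i v := by
  rw [hadj]
  refine and_congr_right fun hne => ?_
  constructor
  · rintro (⟨s, hs, h⟩ | ⟨s, hs, h⟩ | ⟨s, hs, h⟩) <;>
      rw [Prod.ext_iff] at h <;> simp only [Prod.fst_mul, Prod.snd_mul, Prod.fst_inv,
        Prod.snd_inv] at h
    · exact ⟨1, by simpa [f] using inv_mul_eq_one.mp h.2⟩
    · exact ⟨0, by simpa [f] using inv_mul_eq_one.mp h.1⟩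
    · refine ⟨2, ?_⟩
      have h2 : v.2 = u.2 * (u.1⁻¹ * v.1) := by rw [h.1, ← h.2]; group
      show u.2 * u.1⁻¹ = v.2 * v.1⁻¹
      rw [h2]; group
  · rintro ⟨i, hi⟩
    fin_cases i
    · refine Or.inr (Or.inl ⟨u.2⁻¹ * v.2, ?_, ?_⟩)
      · intro h
        exact hne (inj2 0 1 (by decide) u v hi (inv_mul_eq_one.mp h))
      · exact Prod.ext_iff.mpr ⟨inv_mul_eq_one.mpr hi, rfl⟩
    · refine Or.inl ⟨u.1⁻¹ * v.1, ?_, ?_⟩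
      · intro h
        exact hne (inj2 0 1 (by decide) u v (inv_mul_eq_one.mp h) hi)
      · exact Prod.ext_iff.mpr ⟨rfl, inv_mul_eq_one.mpr hi⟩
    · refine Or.inr (Or.inr ⟨u.1⁻¹ * v.1, ?_, ?_⟩)
      · intro h
        have h1 : f 0 u = f 0 v := inv_mul_eq_one.mp h
        exact hne (inj2 0 2 (by decide) u v h1 hi)
      · refine Prod.ext_iff.mpr ⟨rfl, ?_⟩
        show u.2⁻¹ * v.2 = u.1⁻¹ * v.1
        have hi' : u.2 * u.1⁻¹ = v.2 * v.1⁻¹ := hi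
        have h2 : v.2 = u.2 * u.1⁻¹ * v.1 := by
          rw [hi']; group
        rw [h2]; group

section Main

variable [Fintype G] [DecidableEq G] (X : SimpleGraph (G × G)) [DecidableRel X.Adj]
  (hA : ∀ u v : G × G, X.Adj u v ↔ u ≠ v ∧ ∃ i, f i u = f i v)

include hA

lemma deg (u : G × G) : X.degree u = 3 * Fintype.card G - 3 := by
  have hnf : X.neighborFinset u =
      ((Finset.univ.filter fun w : G × G => f 0 w = f 0 u) \ {u}) ∪
      (((Finset.univ.filter fun w : G × G => f 1 w = f 1 u) \ {u}) ∪
       ((Finset.univ.filter fun w : G × G => f 2 w = f 2 u) \ {u})) := by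
    ext w
    simp only [SimpleGraph.mem_neighborFinset, hA, Finset.mem_union, Finset.mem_sdiff,
      Finset.mem_filter, Finset.mem_univ, true_and, Finset.mem_singleton]
    constructor
    · rintro ⟨hne, i, hi⟩
      have hwu : ¬ w = u := fun h => hne h.symm
      fin_cases i
      · exact Or.inl ⟨hi.symm, hwu⟩
      · exact Or.inr (Or.inl ⟨hi.symm, hwu⟩)
      · exact Or.inr (Or.inr ⟨hi.symm, hwu⟩)
    · rintro (⟨h, hwu⟩ | ⟨h, hwu⟩ | ⟨h, hwu⟩)
      · exact ⟨fun hh => hwu hh.symm, 0, h.symm⟩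
      · exact ⟨fun hh => hwu hh.symm, 1, h.symm⟩
      · exact ⟨fun hh => hwu hh.symm, 2, h.symm⟩
  have hdisj : ∀ i j : Fin 3, i ≠ j → Disjoint
      ((Finset.univ.filter fun w : G × G => f i w = f i u) \ {u})
      ((Finset.univ.filter fun w : G × G => f j w = f j u) \ {u}) := by
    intro i j hij
    rw [Finset.disjoint_left]
    rintro w hw1 hw2
    rw [Finset.mem_sdiff, Finset.mem_filter] at hw1 hw2
    exact hw1.2 (Finset.mem_singleton.mpr (inj2 i j hij w u hw1.1.2 hw2.1.2))
  have hsub : ∀ i : Fin 3, ({u} : Finset (G × G)) ⊆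
      Finset.univ.filter fun w : G × G => f i w = f i u := by
    intro i w hw
    rw [Finset.mem_singleton] at hw
    subst hw
    simp
  have hcards : ∀ i : Fin 3,
      ((Finset.univ.filter fun w : G × G => f i w = f i u) \ {u}).card
        = Fintype.card G - 1 := by
    intro i
    rw [Finset.card_sdiff_of_subset (hsub i), fiber_card, Finset.card_singleton]
  have hc1 : 1 ≤ Fintype.card G := Fintype.card_pos
  rw [SimpleGraph.degree, hnf,
    Finset.card_union_of_disjoint, Finset.card_union_of_disjoint (hdisj 1 2 (by decide)),
    hcards, hcards, hcards]
  · omega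
  · rw [Finset.disjoint_union_right]
    exact ⟨hdisj 0 1 (by decide), hdisj 0 2 (by decide)⟩

lemma lam (hcard2 : 2 ≤ Fintype.card G) (u v : G × G) (huv : X.Adj u v) :
    Fintype.card (X.commonNeighbors u v) = Fintype.card G := by
  obtain ⟨hne, i, hi⟩ := (hA u v).mp huv
  have huniq : ∀ j, j ≠ i → f j u ≠ f j v := fun j hj h => hne (inj2 j i hj u v h hi)
  obtain ⟨hj, hk, hjk, hall⟩ := other2_spec i
  set j := (other2 i).1
  set k := (other2 i).2
  set w1 := sol j k (f j u) (f k v) with hw1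
  set w2 := sol k j (f k u) (f j v) with hw2
  have hw1j : f j w1 = f j u := (sol_spec j k hjk _ _).1
  have hw1k : f k w1 = f k v := (sol_spec j k hjk _ _).2
  have hw2k : f k w2 = f k u := (sol_spec k j (Ne.symm hjk) _ _).1
  have hw2j : f j w2 = f j v := (sol_spec k j (Ne.symm hjk) _ _).2
  rw [← Set.toFinset_card]
  have hset : (X.commonNeighbors u v).toFinset =
      ((Finset.univ.filter fun w : G × G => f i w = f i u) \ {u, v}) ∪ {w1, w2} := by
    ext w
    simp only [Set.mem_toFinset, SimpleGraph.mem_commonNeighbors, Finset.mem_union,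
      Finset.mem_sdiff, Finset.mem_filter, Finset.mem_univ, true_and,
      Finset.mem_insert, Finset.mem_singleton]
    constructor
    · rintro ⟨h1, h2⟩
      obtain ⟨hu, a, hau⟩ := (hA u w).mp h1
      obtain ⟨hv, b, hbv⟩ := (hA v w).mp h2
      have hwu : ¬ w = u := fun h => hu h.symm
      have hwv : ¬ w = v := fun h => hv h.symm
      by_cases hai : a = i
      · subst hai
        exact Or.inl ⟨hau.symm, by simp [hwu, hwv]⟩
      by_cases hbi : b = i
      · subst hbi
        exact Or.inl ⟨by rw [← hbv, ← hi], by simp [hwu, hwv]⟩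
      have hab : a ≠ b := by
        intro h
        subst h
        exact huniq a hai (hau.trans hbv.symm)
      have hweq : w = sol a b (f a u) (f b v) := sol_eq a b hab w _ _ hau.symm hbv.symm
      rcases hall a with rfl | ha | ha
      · exact absurd rfl hai
      · rcases hall b with rfl | hb | hb
        · exact absurd rfl hbi
        · exact absurd (ha.trans hb.symm) hab
        · exact Or.inr (Or.inl (by rw [hweq, ha, hb]))
      · rcases hall b with rfl | hb | hb
        · exact absurd rfl hbi
        · exact Or.inr (Or.inr (by rw [hweq, ha, hb]))
        · exact absurd (ha.trans hb.symm) hab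
    · rintro (⟨hwi, hw⟩ | rfl | rfl)
      · simp only [not_or] at hw
        exact ⟨(hA u w).mpr ⟨fun h => hw.1 h.symm, i, hwi.symm⟩,
          (hA v w).mpr ⟨fun h => hw.2 h.symm, i, by rw [← hi, ← hwi]⟩⟩
      · refine ⟨(hA u w1).mpr ⟨?_, j, hw1j.symm⟩, (hA v w1).mpr ⟨?_, k, hw1k.symm⟩⟩
        · intro h
          exact huniq k hk (by rw [h]; exact hw1k)
        · intro h
          exact huniq j hj (by rw [h]; exact hw1j.symm)
      · refine ⟨(hA u w2).mpr ⟨?_, k, hw2k.symm⟩, (hA v w2).mpr ⟨?_, j, hw2j.symm⟩⟩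
        · intro h
          exact huniq j hj (by rw [h]; exact hw2j)
        · intro h
          exact huniq k hk (by rw [h]; exact hw2k.symm)
  rw [hset]
  have hvmem : f i v = f i u := hi.symm
  have hsub2 : ({u, v} : Finset (G × G)) ⊆
      Finset.univ.filter fun w : G × G => f i w = f i u := by
    intro w hw
    rw [Finset.mem_insert, Finset.mem_singleton] at hw
    rcases hw with rfl | rfl <;> simp [hvmem]
  have hw1w2 : w1 ≠ w2 := by
    intro h
    exact huniq j hj (by rw [← hw1j, h, hw2j])
  have hd : Disjoint
      ((Finset.univ.filter fun w : G × G => f i w = f i u) \ {u, v})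
      ({w1, w2} : Finset (G × G)) := by
    rw [Finset.disjoint_left]
    rintro w hw hw'
    rw [Finset.mem_sdiff, Finset.mem_filter] at hw
    rw [Finset.mem_insert, Finset.mem_singleton] at hw'
    apply hw.2
    rcases hw' with rfl | rfl
    · have h' : w1 = u := inj2 i j (Ne.symm hj) _ u hw.1.2 hw1j
      rw [h']; simp
    · have h' : w2 = u := inj2 i k (Ne.symm hk) _ u hw.1.2 hw2k
      rw [h']; simp
  rw [Finset.card_union_of_disjoint hd, Finset.card_sdiff_of_subset hsub2, fiber_card,
    Finset.card_pair hne, Finset.card_pair hw1w2]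
  omega

lemma mu (u v : G × G) (hne : u ≠ v) (hnadj : ¬ X.Adj u v) :
    Fintype.card (X.commonNeighbors u v) = 6 := by
  have hfne : ∀ i, f i u ≠ f i v := fun i hi => hnadj ((hA u v).mpr ⟨hne, i, hi⟩)
  rw [← Set.toFinset_card]
  have hset : (X.commonNeighbors u v).toFinset =
      (Finset.univ.filter fun p : Fin 3 × Fin 3 => p.1 ≠ p.2).image
        (fun p => sol p.1 p.2 (f p.1 u) (f p.2 v)) := by
    ext w
    simp only [Set.mem_toFinset, SimpleGraph.mem_commonNeighbors, Finset.mem_image,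
      Finset.mem_filter, Finset.mem_univ, true_and]
    constructor
    · rintro ⟨h1, h2⟩
      obtain ⟨hu, i, hiu⟩ := (hA u w).mp h1
      obtain ⟨hv, j, hjv⟩ := (hA v w).mp h2
      have hij : i ≠ j := by
        rintro rfl
        exact hfne i (hiu.trans hjv.symm)
      exact ⟨(i, j), hij, (sol_eq i j hij w (f i u) (f j v) hiu.symm hjv.symm).symm⟩
    · rintro ⟨⟨i, j⟩, hij, rfl⟩
      have h1 : f i (sol i j (f i u) (f j v)) = f i u := (sol_spec i j hij _ _).1
      have h2 : f j (sol i j (f i u) (f j v)) = f j v := (sol_spec i j hij _ _).2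
      refine ⟨(hA u _).mpr ⟨?_, i, h1.symm⟩, (hA v _).mpr ⟨?_, j, h2.symm⟩⟩
      · intro h
        exact hfne j (by rw [h]; exact h2)
      · intro h
        exact hfne i (by rw [h]; exact h1.symm)
  rw [hset, Finset.card_image_of_injOn, show (Finset.univ.filter
      fun p : Fin 3 × Fin 3 => p.1 ≠ p.2).card = 6 by decide]
  rintro ⟨i, j⟩ hij ⟨k, l⟩ hkl heq
  simp only [Finset.coe_filter, Set.mem_setOf_eq, Finset.mem_univ, true_and] at hij hkl
  have heq' : sol i j (f i u) (f j v) = sol k l (f k u) (f l v) := heq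
  have hiw : f i (sol i j (f i u) (f j v)) = f i u := (sol_spec i j hij _ _).1
  have hjw : f j (sol i j (f i u) (f j v)) = f j v := (sol_spec i j hij _ _).2
  have hkw : f k (sol i j (f i u) (f j v)) = f k u := by
    rw [heq']; exact (sol_spec k l hkl _ _).1
  have hlw : f l (sol i j (f i u) (f j v)) = f l v := by
    rw [heq']; exact (sol_spec k l hkl _ _).2
  by_cases hik : i = k
  · subst hik
    by_cases hjl : j = l
    · subst hjl; rfl
    · exfalso
      have hwv := inj2 j l hjl _ v hjw hlw
      exact hfne i (by rw [← hiw, hwv])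
  · exfalso
    have hwu := inj2 i k hik _ u hiw hkw
    exact hfne j (by rw [← hjw, hwu])

end Main

end SRG2Aux

/-- For a finite group `G` with `|G| = n ≥ 2`, the Cayley graph `X_G` of `G × G` with respect to
`{(s,1)} ∪ {(1,s)} ∪ {(s,s)}` (`s ≠ 1`) is strongly regular with parameters
`(n², 3n-3, n, 6)`. -/
theorem stmt_2 {G : Type*} [Group G] [Fintype G] [DecidableEq G] (n : ℕ)
    (hn : Fintype.card G = n) (hn2 : 2 ≤ n)
    (X : SimpleGraph (G × G)) [DecidableRel X.Adj]
    (hadj : ∀ u v : G × G, X.Adj u v ↔ u ≠ v ∧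
      ((∃ s : G, s ≠ 1 ∧ u⁻¹ * v = (s, 1)) ∨ (∃ s : G, s ≠ 1 ∧ u⁻¹ * v = (1, s)) ∨
        (∃ s : G, s ≠ 1 ∧ u⁻¹ * v = (s, s)))) :
    X.IsSRGWith (n ^ 2) (3 * n - 3) n 6 := by
  subst hn
  have hA := SRG2Aux.adj_iff X hadj
  refine ⟨by simp [Fintype.card_prod, sq], fun v => SRG2Aux.deg X hA v,
    fun u v h => SRG2Aux.lam X hA hn2 u v h, fun u v hne h => SRG2Aux.mu X hA u v hne h⟩
end

section
/- Let F be a finite field with q elements where q ≡ 1 (mod 4), and for a ∈ F set S(a) = Σ_{x ∈ F} σ(x³ + a·x) ∈ ℤ. Then: (i) S(a) is an even integer for every a ∈ F; (ii) |S(a·z²)| = |S(a)| for all a ∈ F* and z ∈ F*, so |S(a)| depends only on whether a is a nonzero square or a nonsquare; and (iii) if a ∈ F* is a square and b ∈ F* is a nonsquare, then (S(a)/2)² + (S(b)/2)² = q. -/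
open Finset


section jac

variable {F : Type*} [Field F] [Fintype F] [DecidableEq F]

private lemma jac_sqrts (hF2 : ringChar F ≠ 2) (u : F) :
    ((univ.filter fun z : F => z ^ 2 = u).card : ℤ) = quadraticChar F u + 1 := by
  have := quadraticChar_card_sqrts hF2 u
  rwa [Set.toFinset_setOf] at this

private lemma jac_sq_val (u : F) :
    (quadraticChar F u : ℤ) ^ 2 = 1 - (if u = 0 then 1 else 0) := by
  by_cases hu : u = 0
  · simp [hu]
  · rcases quadraticChar_dichotomy hu with h | h <;> simp [hu, h]

private lemma jac_sum_sq_char (hF2 : ringChar F ≠ 2) :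
    ∑ z : F, (quadraticChar F z : ℤ) ^ 2 = (Fintype.card F : ℤ) - 1 := by
  have : ∀ z : F, (quadraticChar F z : ℤ) ^ 2 = 1 - (if z = 0 then 1 else 0) :=
    fun z => jac_sq_val z
  rw [Finset.sum_congr rfl fun z _ => this z, Finset.sum_sub_distrib, Finset.sum_boole]
  simp [Finset.filter_eq', Finset.card_univ]

private lemma jac_sum_shift (hF2 : ringChar F ≠ 2) {c : F} (hc : c ≠ 0) :
    ∑ v : F, quadraticChar F (v * (v + c)) = -1 := by
  have h0 : (quadraticChar F) ((0 : F) * (0 + c)) = 0 := by simp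
  rw [← Finset.sum_erase_add univ _ (Finset.mem_univ (0 : F)), h0, add_zero]
  have h1 : ∑ v ∈ univ.erase (0 : F), quadraticChar F (v * (v + c))
      = ∑ w ∈ univ.erase (1 : F), quadraticChar F w := by
    refine Finset.sum_nbij' (fun v => 1 + c * v⁻¹) (fun w => c * (w - 1)⁻¹) ?_ ?_ ?_ ?_ ?_
    · intro v hv
      have hv0 : v ≠ 0 := (Finset.mem_erase.mp hv).1
      simp only [Finset.mem_erase, Finset.mem_univ, and_true]
      intro h
      have : c * v⁻¹ = 0 := by linear_combination h
      exact hc (by simpa [hv0] using this)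
    · intro w hw
      have hw1 : w ≠ 1 := (Finset.mem_erase.mp hw).1
      simp only [Finset.mem_erase, Finset.mem_univ, and_true]
      have : w - 1 ≠ 0 := sub_ne_zero.mpr hw1
      exact mul_ne_zero hc (inv_ne_zero this)
    · intro v hv
      have hv0 : v ≠ 0 := (Finset.mem_erase.mp hv).1
      field_simp
      rw [show v + c - v = c by ring, div_self hc]
    · intro w hw
      have hw1 : w - 1 ≠ 0 := sub_ne_zero.mpr (Finset.mem_erase.mp hw).1
      field_simp
      ring
    · intro v hv
      have hv0 : v ≠ 0 := (Finset.mem_erase.mp hv).1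
      have hrw : v * (v + c) = v ^ 2 * (1 + c * v⁻¹) := by field_simp
      rw [hrw, map_mul, quadraticChar_sq_one' hv0, one_mul]
  rw [h1]
  have h2 : ∑ w ∈ univ.erase (1 : F), quadraticChar F w
      = (∑ w : F, quadraticChar F w) - quadraticChar F 1 :=
    Finset.sum_erase_eq_sub (Finset.mem_univ _)
  rw [h2, quadraticChar_sum_zero hF2]
  simp

private lemma jac_sum_shift2 (hF2 : ringChar F ≠ 2) (s t : F) :
    ∑ a : F, (quadraticChar F ((s + a) * (t + a)) : ℤ)
      = if s = t then (Fintype.card F : ℤ) - 1 else -1 := by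
  split_ifs with h
  · subst h
    have : ∀ a : F, (quadraticChar F ((s + a) * (s + a)) : ℤ)
        = (quadraticChar F (s + a) : ℤ) ^ 2 := by
      intro a; rw [map_mul]; ring
    rw [Finset.sum_congr rfl fun a _ => this a]
    rw [← jac_sum_sq_char hF2]
    exact Fintype.sum_equiv (Equiv.addLeft s) _ _ (fun a => rfl)
  · have hc : t - s ≠ 0 := sub_ne_zero.mpr (Ne.symm h)
    have := jac_sum_shift hF2 hc
    rw [← this]
    refine Fintype.sum_equiv (Equiv.addLeft s) _ _ ?_
    intro a
    have : (s + a) * (t + a) = (s + a) * ((s + a) + (t - s)) := by ring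
    rw [this]
    rfl

end jac

section jac2

variable {F : Type*} [Field F] [Fintype F] [DecidableEq F]

private lemma jac_S_mul (a : F) :
    ∑ x : F, (quadraticChar F (x ^ 3 + a * x) : ℤ)
      = ∑ x : F, (quadraticChar F x : ℤ) * quadraticChar F (x ^ 2 + a) := by
  refine Finset.sum_congr rfl fun x _ => ?_
  have : x ^ 3 + a * x = x * (x ^ 2 + a) := by ring
  rw [this, map_mul]

private lemma jac_sum_sq (hF2 : ringChar F ≠ 2) (h1 : quadraticChar F (-1 : F) = 1) :
    ∑ a : F, (∑ x : F, (quadraticChar F (x ^ 3 + a * x) : ℤ)) ^ 2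
      = 2 * (Fintype.card F : ℤ) * ((Fintype.card F : ℤ) - 1) := by
  have step1 : ∑ a : F, (∑ x : F, (quadraticChar F (x ^ 3 + a * x) : ℤ)) ^ 2
      = ∑ x : F, ∑ y : F, ((quadraticChar F x : ℤ) * quadraticChar F y)
          * ∑ a : F, (quadraticChar F ((x ^ 2 + a) * (y ^ 2 + a)) : ℤ) := by
    have e1 : ∀ a : F, (∑ x : F, (quadraticChar F (x ^ 3 + a * x) : ℤ)) ^ 2
        = ∑ x : F, ∑ y : F, ((quadraticChar F x : ℤ) * quadraticChar F y)
            * ((quadraticChar F (x ^ 2 + a) : ℤ) * quadraticChar F (y ^ 2 + a)) := by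
      intro a
      rw [jac_S_mul, sq, Finset.sum_mul_sum]
      exact Finset.sum_congr rfl fun x _ => Finset.sum_congr rfl fun y _ => by ring
    rw [Finset.sum_congr rfl fun a _ => e1 a]
    rw [Finset.sum_comm]
    refine Finset.sum_congr rfl fun x _ => ?_
    rw [Finset.sum_comm]
    refine Finset.sum_congr rfl fun y _ => ?_
    rw [Finset.mul_sum]
    exact Finset.sum_congr rfl fun a _ => by rw [map_mul]
  rw [step1]
  have step2 : ∀ x y : F, ((quadraticChar F x : ℤ) * quadraticChar F y)
        * ∑ a : F, (quadraticChar F ((x ^ 2 + a) * (y ^ 2 + a)) : ℤ)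
      = ((quadraticChar F x : ℤ) * quadraticChar F y)
        * (if x ^ 2 = y ^ 2 then (Fintype.card F : ℤ) - 1 else -1) := by
    intro x y
    rw [jac_sum_shift2 hF2 (x ^ 2) (y ^ 2)]
  rw [Finset.sum_congr rfl fun x _ => Finset.sum_congr rfl fun y _ => step2 x y]
  have step3 : ∀ x y : F, ((quadraticChar F x : ℤ) * quadraticChar F y)
        * (if x ^ 2 = y ^ 2 then (Fintype.card F : ℤ) - 1 else -1)
      = (Fintype.card F : ℤ) * (if x ^ 2 = y ^ 2 then (quadraticChar F x : ℤ) * quadraticChar F y else 0)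
        - (quadraticChar F x : ℤ) * quadraticChar F y := by
    intro x y
    split_ifs <;> ring
  rw [Finset.sum_congr rfl fun x _ => Finset.sum_congr rfl fun y _ => step3 x y]
  have inner : ∀ x : F,
      ∑ y : F, (if x ^ 2 = y ^ 2 then (quadraticChar F x : ℤ) * quadraticChar F y else 0)
        = if x = 0 then 0 else 2 := by
    intro x
    by_cases hx : x = 0
    · subst hx
      simp only [if_true]
      refine Finset.sum_eq_zero fun y _ => ?_
      split_ifs <;> simp
    · rw [if_neg hx]
      have hfilter : ∑ y : F, (if x ^ 2 = y ^ 2 then (quadraticChar F x : ℤ) * quadraticChar F y else 0)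
          = ∑ y ∈ univ.filter (fun y : F => x ^ 2 = y ^ 2),
              (quadraticChar F x : ℤ) * quadraticChar F y := (Finset.sum_filter _ _).symm
      have hset : univ.filter (fun y : F => x ^ 2 = y ^ 2) = {x, -x} := by
        ext y
        simp only [Finset.mem_filter, Finset.mem_univ, true_and, Finset.mem_insert,
          Finset.mem_singleton]
        constructor
        · intro h
          rcases sq_eq_sq_iff_eq_or_eq_neg.mp h.symm with h' | h'
          · exact Or.inl h'
          · exact Or.inr h'
        · rintro (rfl | rfl) <;> ring
      have hxne : x ≠ -x := by
        intro h
        apply hx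
        have h2 : (2 : F) * x = 0 := by linear_combination h
        rcases mul_eq_zero.mp h2 with h' | h'
        · exact absurd h' (Ring.two_ne_zero hF2)
        · exact h'
      rw [hfilter, hset, Finset.sum_pair hxne]
      have hneg : (quadraticChar F (-x) : ℤ) = quadraticChar F x := by
        rw [show -x = -1 * x by ring, map_mul, h1, one_mul]
      rw [hneg]
      have : (quadraticChar F x : ℤ) * quadraticChar F x = 1 := by
        rw [← sq]; exact quadraticChar_sq_one hx
      linear_combination 2 * this
  have perx : ∀ x : F, ∑ y : F,
      ((Fintype.card F : ℤ) * (if x ^ 2 = y ^ 2 then (quadraticChar F x : ℤ) * quadraticChar F y else 0)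
        - (quadraticChar F x : ℤ) * quadraticChar F y)
      = (Fintype.card F : ℤ) * (if x = 0 then 0 else 2)
        - (quadraticChar F x : ℤ) * ∑ y : F, (quadraticChar F y : ℤ) := by
    intro x
    rw [Finset.sum_sub_distrib]
    congr 1
    · rw [← Finset.mul_sum, inner x]
    · rw [Finset.mul_sum]
  rw [Finset.sum_congr rfl fun x _ => perx x, Finset.sum_sub_distrib, ← Finset.mul_sum,
    ← Finset.sum_mul, quadraticChar_sum_zero hF2]
  have hcount : ∑ x : F, (if x = 0 then (0 : ℤ) else 2) = 2 * ((Fintype.card F : ℤ) - 1) := by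
    have : ∀ x : F, (if x = 0 then (0 : ℤ) else 2) = 2 - (if x = 0 then 2 else 0) := by
      intro x; split_ifs <;> ring
    rw [Finset.sum_congr rfl fun x _ => this x, Finset.sum_sub_distrib]
    rw [Finset.sum_ite_eq' univ (0 : F) (fun _ => (2 : ℤ))]
    simp [Finset.card_univ, mul_comm]
    ring
  rw [hcount]
  ring

end jac2

section jac3

variable {F : Type*} [Field F] [Fintype F] [DecidableEq F]

private lemma jac_sq_val' (u : F) :
    (quadraticChar F u : ℤ) ^ 2 = 1 - (if u = 0 then 1 else 0) := by
  by_cases hu : u = 0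
  · simp [hu]
  · rcases quadraticChar_dichotomy hu with h | h <;> simp [hu, h]

private lemma jac_sqrts' (hF2 : ringChar F ≠ 2) (u : F) :
    ((univ.filter fun z : F => z ^ 2 = u).card : ℤ) = quadraticChar F u + 1 := by
  have := quadraticChar_card_sqrts hF2 u
  rwa [Set.toFinset_setOf] at this

private lemma jac_scale (a : F) {z : F} (hz : z ≠ 0) :
    ∑ x : F, (quadraticChar F (x ^ 3 + a * z ^ 2 * x) : ℤ)
      = quadraticChar F z * ∑ x : F, (quadraticChar F (x ^ 3 + a * x) : ℤ) := by
  rw [Finset.mul_sum]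
  refine (Fintype.sum_equiv (Equiv.mulLeft₀ z hz) _ _ ?_).symm
  intro y
  have h : (z * y) ^ 3 + a * z ^ 2 * (z * y) = (z * z ^ 2) * (y ^ 3 + a * y) := by ring
  show quadraticChar F z * quadraticChar F (y ^ 3 + a * y)
      = quadraticChar F ((z * y) ^ 3 + a * z ^ 2 * (z * y))
  rw [h, map_mul, map_mul, quadraticChar_sq_one' hz, mul_one]

private lemma jac_even (hF2 : ringChar F ≠ 2) (h1 : quadraticChar F (-1 : F) = 1) (a : F) :
    Even (∑ x : F, (quadraticChar F (x ^ 3 + a * x) : ℤ)) := by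
  have hT : Even (∑ x : F, (quadraticChar F (x ^ 3 + a * x) : ℤ) ^ 2) := by
    have e1 : ∑ x : F, (quadraticChar F (x ^ 3 + a * x) : ℤ) ^ 2
        = ∑ x : F, (1 - if x ^ 3 + a * x = 0 then 1 else 0) :=
      Finset.sum_congr rfl fun x _ => jac_sq_val' _
    have e2 : ∑ x : F, ((1 : ℤ) - if x ^ 3 + a * x = 0 then 1 else 0)
        = (Fintype.card F : ℤ) - ((univ.filter fun x : F => x ^ 3 + a * x = 0).card : ℤ) := by
      rw [Finset.sum_sub_distrib, Finset.sum_boole, Finset.sum_const, Finset.card_univ]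
      simp
    rw [e1, e2]
    have hq : Odd (Fintype.card F : ℤ) := by
      have := FiniteField.odd_card_of_char_ne_two hF2
      exact Int.odd_iff.mpr (by exact_mod_cast this)
    have hR : Odd ((univ.filter fun x : F => x ^ 3 + a * x = 0).card : ℤ) := by
      by_cases ha : a = 0
      · have hset : (univ.filter fun x : F => x ^ 3 + a * x = 0) = {0} := by
          ext x
          simp only [Finset.mem_filter, Finset.mem_univ, true_and, Finset.mem_singleton, ha,
            zero_mul, add_zero]
          constructor
          · intro h; exact pow_eq_zero_iff (n := 3) (by norm_num) |>.mp h
          · rintro rfl; simp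
        rw [hset]
        simp
      · have hsplit : (univ.filter fun x : F => x ^ 3 + a * x = 0)
            = insert (0 : F) (univ.filter fun x : F => x ^ 2 = -a) := by
          ext x
          simp only [Finset.mem_filter, Finset.mem_univ, true_and, Finset.mem_insert]
          constructor
          · intro h
            rcases mul_eq_zero.mp (show x * (x ^ 2 + a) = 0 by linear_combination h) with h' | h'
            · exact Or.inl h'
            · exact Or.inr (by linear_combination h')
          · rintro (rfl | h)
            · simp
            · linear_combination x * h
        have h0 : (0 : F) ∉ (univ.filter fun x : F => x ^ 2 = -a) := by
          simp only [Finset.mem_filter, Finset.mem_univ, true_and]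
          intro h
          exact ha (by linear_combination h)
        rw [hsplit, Finset.card_insert_of_notMem h0]
        push_cast
        rw [jac_sqrts' hF2 (-a)]
        have hna : (quadraticChar F (-a) : ℤ) = quadraticChar F a := by
          rw [show -a = -1 * a by ring, map_mul, h1, one_mul]
        rw [hna]
        rcases quadraticChar_dichotomy ha with h | h <;> rw [h] <;> norm_num [Int.odd_iff]
    exact hq.sub_odd hR
  have hD : Even (∑ x : F, ((quadraticChar F (x ^ 3 + a * x) : ℤ) ^ 2
      - quadraticChar F (x ^ 3 + a * x))) := by
    rw [even_iff_two_dvd]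
    refine Finset.dvd_sum fun x _ => ?_
    have h := Int.even_mul_succ_self ((quadraticChar F (x ^ 3 + a * x) : ℤ) - 1)
    have e : ((quadraticChar F (x ^ 3 + a * x) : ℤ) - 1)
        * (((quadraticChar F (x ^ 3 + a * x) : ℤ) - 1) + 1)
        = (quadraticChar F (x ^ 3 + a * x) : ℤ) ^ 2 - quadraticChar F (x ^ 3 + a * x) := by
      ring
    rw [e] at h
    exact h.two_dvd
  have hS : ∑ x : F, (quadraticChar F (x ^ 3 + a * x) : ℤ)
      = (∑ x : F, (quadraticChar F (x ^ 3 + a * x) : ℤ) ^ 2)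
        - ∑ x : F, ((quadraticChar F (x ^ 3 + a * x) : ℤ) ^ 2
            - quadraticChar F (x ^ 3 + a * x)) := by
    rw [← Finset.sum_sub_distrib]
    exact Finset.sum_congr rfl fun x _ => by ring
  rw [hS]
  exact hT.sub hD

private lemma jac_fiber (hF2 : ringChar F ≠ 2) {a b : F}
    (ha : quadraticChar F a = 1) (hb : quadraticChar F b = -1) (f : F → ℤ) :
    (∑ z : F, f (a * z ^ 2)) + (∑ z : F, f (b * z ^ 2)) = 2 * ∑ u : F, f u := by
  have ha0 : a ≠ 0 := by
    intro h; rw [h] at ha; simp at ha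
  have hb0 : b ≠ 0 := by
    intro h; rw [h] at hb; simp at hb
  have key : ∀ c : F, c ≠ 0 → ∑ z : F, f (c * z ^ 2)
      = ∑ u : F, ((univ.filter fun z : F => z ^ 2 = c⁻¹ * u).card : ℤ) * f u := by
    intro c hc
    rw [← Finset.sum_fiberwise univ (fun z : F => c * z ^ 2) (fun z => f (c * z ^ 2))]
    refine Finset.sum_congr rfl fun u _ => ?_
    have e : ∑ z ∈ univ.filter (fun z : F => c * z ^ 2 = u), f (c * z ^ 2)
        = ∑ z ∈ univ.filter (fun z : F => c * z ^ 2 = u), f u :=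
      Finset.sum_congr rfl fun z hz => by rw [(Finset.mem_filter.mp hz).2]
    have e2 : univ.filter (fun z : F => c * z ^ 2 = u)
        = univ.filter (fun z : F => z ^ 2 = c⁻¹ * u) := by
      ext z
      simp only [Finset.mem_filter, Finset.mem_univ, true_and]
      constructor
      · intro h; rw [← h]; field_simp
      · intro h; rw [h]; field_simp
    rw [e, e2, Finset.sum_const, nsmul_eq_mul]
  rw [key a ha0, key b hb0, ← Finset.sum_add_distrib]
  rw [Finset.mul_sum]
  refine Finset.sum_congr rfl fun u _ => ?_
  rw [jac_sqrts' hF2, jac_sqrts' hF2]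
  have hainv : (quadraticChar F (a⁻¹ * u) : ℤ) = quadraticChar F u := by
    rw [map_mul]
    have : (quadraticChar F a⁻¹ : ℤ) = 1 := by
      have h2 : (quadraticChar F a⁻¹ : ℤ) * quadraticChar F a = 1 := by
        rw [← map_mul, inv_mul_cancel₀ ha0, map_one]
      rw [ha, mul_one] at h2; exact h2
    rw [this, one_mul]
  have hbinv : (quadraticChar F (b⁻¹ * u) : ℤ) = -quadraticChar F u := by
    rw [map_mul]
    have : (quadraticChar F b⁻¹ : ℤ) = -1 := by
      have h2 : (quadraticChar F b⁻¹ : ℤ) * quadraticChar F b = 1 := by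
        rw [← map_mul, inv_mul_cancel₀ hb0, map_one]
      rw [hb] at h2
      linarith
    rw [this]; ring
  rw [hainv, hbinv]
  ring

end jac3

section jacmain

variable {F : Type*} [Field F] [Fintype F] [DecidableEq F]

private lemma jac_S_zero (hF2 : ringChar F ≠ 2) :
    ∑ x : F, (quadraticChar F (x ^ 3 + 0 * x) : ℤ) = 0 := by
  have : ∀ x : F, (quadraticChar F (x ^ 3 + 0 * x) : ℤ) = quadraticChar F x := by
    intro x
    by_cases hx : x = 0
    · simp [hx]
    · rw [show x ^ 3 + 0 * x = x * x ^ 2 by ring, map_mul, quadraticChar_sq_one' hx, mul_one]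
  rw [Finset.sum_congr rfl fun x _ => this x]
  exact quadraticChar_sum_zero hF2

end jacmain


/-- **Jacobsthal's theorem.** Let `F` be a finite field with `q ≡ 1 (mod 4)` elements and let
`σ` be the quadratic character of `F` (with values in `ℤ`). Set `S a = ∑ x, σ (x³ + a x)`.
Then (i) `S a` is even for every `a`; (ii) `|S (a z²)| = |S a|` for nonzero `a, z`, so `|S a|`
only depends on whether `a` is a square; (iii) if `a` is a nonzero square and `b` a nonsquare,
then `(S a / 2)² + (S b / 2)² = q`. -/
theorem stmt_3 {F : Type*} [Field F] [Fintype F] (q : ℕ)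
    (hq : Fintype.card F = q) (hmod : q % 4 = 1)
    (σ : F → ℤ) (hσ0 : σ 0 = 0)
    (hσ1 : ∀ x : F, x ≠ 0 → IsSquare x → σ x = 1)
    (hσ2 : ∀ x : F, ¬ IsSquare x → σ x = -1) :
    (∀ a : F, Even (∑ x : F, σ (x ^ 3 + a * x))) ∧
    (∀ a z : F, a ≠ 0 → z ≠ 0 →
      |∑ x : F, σ (x ^ 3 + a * z ^ 2 * x)| = |∑ x : F, σ (x ^ 3 + a * x)|) ∧
    (∀ a b : F, a ≠ 0 → b ≠ 0 → IsSquare a → ¬ IsSquare b →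
      ((∑ x : F, σ (x ^ 3 + a * x)) / 2) ^ 2 + ((∑ x : F, σ (x ^ 3 + b * x)) / 2) ^ 2
        = (q : ℤ)) := by
  classical
  subst hq
  have hF2 : ringChar F ≠ 2 := by
    intro h
    have h2 := FiniteField.even_card_of_char_two h
    omega
  have h1 : quadraticChar F (-1 : F) = 1 := by
    rw [quadraticChar_one_iff_isSquare (neg_ne_zero.mpr one_ne_zero)]
    rw [FiniteField.isSquare_neg_one_iff]
    omega
  have hσ' : ∀ y : F, σ y = quadraticChar F y := by
    intro y
    by_cases hy : y = 0
    · rw [hy, hσ0]; simp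
    · by_cases hs : IsSquare y
      · rw [hσ1 y hy hs, (quadraticChar_one_iff_isSquare hy).mpr hs]
      · rw [hσ2 y hs, quadraticChar_neg_one_iff_not_isSquare.mpr hs]
  simp only [hσ']
  refine ⟨fun a => jac_even hF2 h1 a, fun a z ha hz => ?_, fun a b ha hb hsa hsb => ?_⟩
  · rw [jac_scale a hz, abs_mul]
    rcases quadraticChar_dichotomy hz with h | h <;> rw [h] <;> simp
  · have hca : quadraticChar F a = 1 := (quadraticChar_one_iff_isSquare ha).mpr hsa
    have hcb : quadraticChar F b = -1 := quadraticChar_neg_one_iff_not_isSquare.mpr hsb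
    have hla : ∀ (c : F), quadraticChar F c ≠ 0 →
        ∑ z : F, (∑ x : F, (quadraticChar F (x ^ 3 + c * z ^ 2 * x) : ℤ)) ^ 2
          = ((Fintype.card F : ℤ) - 1)
            * (∑ x : F, (quadraticChar F (x ^ 3 + c * x) : ℤ)) ^ 2 := by
      intro c hc
      rw [← jac_sum_sq_char hF2, Finset.sum_mul]
      refine Finset.sum_congr rfl fun z _ => ?_
      by_cases hz : z = 0
      · subst hz
        have e0 : ∑ x : F, (quadraticChar F (x ^ 3 + c * 0 ^ 2 * x) : ℤ) = 0 := by
          rw [← jac_S_zero (F := F) hF2]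
          exact Finset.sum_congr rfl fun x _ => by
            rw [show x ^ 3 + c * 0 ^ 2 * x = x ^ 3 + 0 * x by ring]
        rw [e0]
        simp
      · rw [jac_scale c hz]
        ring
    have hfib := jac_fiber hF2 hca hcb
      (fun u => (∑ x : F, (quadraticChar F (x ^ 3 + u * x) : ℤ)) ^ 2)
    rw [hla a (by rw [hca]; norm_num), hla b (by rw [hcb]; norm_num), jac_sum_sq hF2 h1] at hfib
    have hne : ((Fintype.card F : ℤ) - 1) ≠ 0 := by
      have := Fintype.one_lt_card (α := F)
      have : (1 : ℤ) < (Fintype.card F : ℤ) := by exact_mod_cast this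
      omega
    have h4 : (∑ x : F, (quadraticChar F (x ^ 3 + a * x) : ℤ)) ^ 2
        + (∑ x : F, (quadraticChar F (x ^ 3 + b * x) : ℤ)) ^ 2
        = 4 * (Fintype.card F : ℤ) := by
      apply mul_left_cancel₀ hne
      linear_combination hfib
    obtain ⟨m, hm⟩ := jac_even hF2 h1 a
    obtain ⟨n, hn⟩ := jac_even hF2 h1 b
    rw [hm, hn]
    have hm2 : (m + m) / 2 = m := by omega
    have hn2 : (n + n) / 2 = n := by omega
    rw [hm2, hn2]
    rw [hm, hn] at h4
    have h8 : (4 : ℤ) * (m ^ 2 + n ^ 2) = 4 * (Fintype.card F : ℤ) := by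
      linear_combination h4
    have := mul_left_cancel₀ (by norm_num : (4 : ℤ) ≠ 0) h8
    linarith
end

section
/- For a prime power q ≡ 1 (mod 4), the Paley graph P(q) is strongly regular with parameters (q, (q−1)/2, (q−5)/4, (q−1)/4): it has q vertices, is (q−1)/2-regular, any two adjacent vertices have exactly (q−5)/4 common neighbours, and any two distinct non-adjacent vertices have exactly (q−1)/4 common neighbours. -/
open Finset

section Aux

variable {F : Type*} [Field F] [Fintype F] [DecidableEq F]

private lemma paley_chi_eq (w : F) (hw : w ≠ 0) :
    quadraticChar F w = if IsSquare w then 1 else -1 := by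
  by_cases h : IsSquare w
  · simp [h, (quadraticChar_one_iff_isSquare hw).mpr h]
  · simp [h, quadraticChar_neg_one_iff_not_isSquare.mpr h]

private lemma paley_sumA (hF : ringChar F ≠ 2) :
    ∑ w : F, quadraticChar F (w * (w - 1)) = -1 := by
  have h0 : ∑ w ∈ (univ : Finset F).erase 0, quadraticChar F (w * (w - 1)) =
      ∑ w : F, quadraticChar F (w * (w - 1)) := by
    apply Finset.sum_subset (Finset.subset_univ _)
    intro x _ hx
    have : x = 0 := by simpa using hx
    subst this; simp
  rw [← h0]
  have h1 : ∀ w ∈ (univ : Finset F).erase 0,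
      quadraticChar F (w * (w - 1)) = quadraticChar F (1 - w⁻¹) := by
    intro w hw
    have hw0 : w ≠ 0 := by simpa using hw
    have hrw : w * (w - 1) = w ^ 2 * (1 - w⁻¹) := by
      field_simp
    rw [hrw, map_mul, quadraticChar_sq_one' hw0, one_mul]
  rw [Finset.sum_congr rfl h1]
  have h2 : ∑ w ∈ (univ : Finset F).erase 0, quadraticChar F (1 - w⁻¹) =
      ∑ t ∈ (univ : Finset F).erase 1, quadraticChar F t := by
    apply Finset.sum_nbij' (fun w => 1 - w⁻¹) (fun t => (1 - t)⁻¹)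
    · intro a ha
      have ha0 : a ≠ 0 := by simpa using ha
      simp only [Finset.mem_erase, Finset.mem_univ, and_true]
      intro h
      have h' : a⁻¹ = 0 := by linear_combination -h
      exact ha0 (inv_eq_zero.mp h')
    · intro t ht
      have ht1 : t ≠ 1 := by simpa using ht
      simp only [Finset.mem_erase, Finset.mem_univ, and_true]
      exact inv_ne_zero (sub_ne_zero.mpr (Ne.symm ht1))
    · intro a ha
      simp
    · intro t ht
      rw [inv_inv]; ring
    · intro a _; rfl
  rw [h2, Finset.sum_erase_eq_sub (Finset.mem_univ _), quadraticChar_sum_zero hF, map_one]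
  norm_num

private lemma paley_neg_one (hF : ringChar F ≠ 2) (h4 : Fintype.card F % 4 = 1) :
    quadraticChar F (-1) = 1 := by
  rw [quadraticChar_one_iff_isSquare (neg_ne_zero.mpr one_ne_zero),
    FiniteField.isSquare_neg_one_iff]
  omega

variable (F) in
private def paleyS : Finset F := ((univ : Finset F).erase 0).erase 1

private lemma paley_mem_S {w : F} : w ∈ paleyS F ↔ w ≠ 1 ∧ w ≠ 0 := by
  simp [paleyS]

private lemma paley_card_S : ((paleyS F).card : ℤ) = (Fintype.card F : ℤ) - 2 := by
  have h2 : 1 < Fintype.card F := Fintype.one_lt_card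
  rw [paleyS, Finset.card_erase_of_mem, Finset.card_erase_of_mem (Finset.mem_univ _)]
  · rw [Finset.card_univ]; push_cast; omega
  · simp [one_ne_zero]

private lemma paley_T1 (hF : ringChar F ≠ 2) :
    ∑ w ∈ paleyS F, quadraticChar F w * quadraticChar F (w - 1) = -1 := by
  have h0 : ∑ w ∈ paleyS F, quadraticChar F w * quadraticChar F (w - 1) =
      ∑ w : F, quadraticChar F w * quadraticChar F (w - 1) := by
    apply Finset.sum_subset (Finset.subset_univ _)
    intro x _ hx
    rw [paley_mem_S] at hx
    push_neg at hx
    by_cases h1 : x = 1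
    · subst h1; simp
    · have : x = 0 := hx h1
      subst this; simp
  rw [h0]
  have h1 : ∀ w ∈ (univ : Finset F), quadraticChar F w * quadraticChar F (w - 1) =
      quadraticChar F (w * (w - 1)) := fun w _ => (map_mul _ _ _).symm
  rw [Finset.sum_congr rfl h1]
  exact paley_sumA hF

private lemma paley_T2 (hF : ringChar F ≠ 2) :
    ∑ w ∈ paleyS F, quadraticChar F w = -1 := by
  have h0 : ∑ w ∈ paleyS F, quadraticChar F w =
      ∑ w ∈ (univ : Finset F).erase 1, quadraticChar F w := by
    apply Finset.sum_subset
    · intro x hx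
      rw [paley_mem_S] at hx
      simp [hx.1]
    · intro x hx hx'
      have hx1 : x ≠ 1 := by simpa using hx
      rw [paley_mem_S] at hx'
      push_neg at hx'
      have : x = 0 := hx' hx1
      subst this; simp
  rw [h0, Finset.sum_erase_eq_sub (Finset.mem_univ _), quadraticChar_sum_zero hF, map_one]
  norm_num

private lemma paley_T3 (hF : ringChar F ≠ 2) (h4 : Fintype.card F % 4 = 1) :
    ∑ w ∈ paleyS F, quadraticChar F (w - 1) = -1 := by
  have h0 : ∑ w ∈ paleyS F, quadraticChar F (w - 1) =
      ∑ w ∈ (univ : Finset F).erase 0, quadraticChar F (w - 1) := by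
    apply Finset.sum_subset
    · intro x hx
      rw [paley_mem_S] at hx
      simp [hx.2]
    · intro x hx hx'
      have hx0 : x ≠ 0 := by simpa using hx
      rw [paley_mem_S] at hx'
      push_neg at hx'
      by_cases h1 : x = 1
      · subst h1; simp
      · exact absurd (hx' h1) hx0
  have h1 : ∑ w : F, quadraticChar F (w - 1) = 0 := by
    have := Equiv.sum_comp (Equiv.subRight (1 : F)) (fun t => quadraticChar F t)
    simp only [Equiv.subRight_apply] at this
    rw [this]
    exact quadraticChar_sum_zero hF
  rw [h0, Finset.sum_erase_eq_sub (Finset.mem_univ _), h1,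
    show (0 : F) - 1 = -1 by ring, paley_neg_one hF h4]
  ring

private lemma paley_sum_ite (P : F → Prop) [DecidablePred P] :
    ∑ w ∈ paleyS F, (if P w then (4 : ℤ) else 0) =
      4 * (((paleyS F).filter P).card : ℤ) := by
  rw [← Finset.sum_filter, Finset.sum_const, nsmul_eq_mul]
  ring

/-- Count of `w ∉ {0,1}` with `w` and `w - 1` both squares. -/
private lemma paley_count_adj (hF : ringChar F ≠ 2) (h4 : Fintype.card F % 4 = 1) :
    4 * ((((paleyS F).filter fun w => IsSquare w ∧ IsSquare (w - 1)).card : ℤ)) =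
      (Fintype.card F : ℤ) - 5 := by
  have key : ∀ w ∈ paleyS F, (quadraticChar F w + 1) * (quadraticChar F (w - 1) + 1) =
      if IsSquare w ∧ IsSquare (w - 1) then (4 : ℤ) else 0 := by
    intro w hw
    rw [paley_mem_S] at hw
    have hw0 : w ≠ 0 := hw.2
    have hw1 : w - 1 ≠ 0 := sub_ne_zero.mpr hw.1
    rw [paley_chi_eq w hw0, paley_chi_eq _ hw1]
    by_cases h1 : IsSquare w <;> by_cases h2 : IsSquare (w - 1) <;>
      simp [h1, h2] <;> norm_num
  rw [← paley_sum_ite, ← Finset.sum_congr rfl key]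
  have expand : ∀ w ∈ paleyS F,
      (quadraticChar F w + 1) * (quadraticChar F (w - 1) + 1) =
        quadraticChar F w * quadraticChar F (w - 1) + quadraticChar F w
          + quadraticChar F (w - 1) + 1 := by
    intro w _; ring
  rw [Finset.sum_congr rfl expand]
  simp only [Finset.sum_add_distrib, Finset.sum_const, nsmul_eq_mul, mul_one]
  rw [paley_T1 hF, paley_T2 hF, paley_T3 hF h4, paley_card_S]
  ring

/-- Count of `w ∉ {0,1}` with `w` and `w - 1` both nonsquares. -/
private lemma paley_count_nadj (hF : ringChar F ≠ 2) (h4 : Fintype.card F % 4 = 1) :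
    4 * ((((paleyS F).filter fun w => ¬IsSquare w ∧ ¬IsSquare (w - 1)).card : ℤ)) =
      (Fintype.card F : ℤ) - 1 := by
  have key : ∀ w ∈ paleyS F, (1 - quadraticChar F w) * (1 - quadraticChar F (w - 1)) =
      if ¬IsSquare w ∧ ¬IsSquare (w - 1) then (4 : ℤ) else 0 := by
    intro w hw
    rw [paley_mem_S] at hw
    have hw0 : w ≠ 0 := hw.2
    have hw1 : w - 1 ≠ 0 := sub_ne_zero.mpr hw.1
    rw [paley_chi_eq w hw0, paley_chi_eq _ hw1]
    by_cases h1 : IsSquare w <;> by_cases h2 : IsSquare (w - 1) <;>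
      simp [h1, h2] <;> norm_num
  rw [← paley_sum_ite, ← Finset.sum_congr rfl key]
  have expand : ∀ w ∈ paleyS F,
      (1 - quadraticChar F w) * (1 - quadraticChar F (w - 1)) =
        quadraticChar F w * quadraticChar F (w - 1) - quadraticChar F w
          - quadraticChar F (w - 1) + 1 := by
    intro w _; ring
  rw [Finset.sum_congr rfl expand]
  simp only [Finset.sum_sub_distrib, Finset.sum_add_distrib, Finset.sum_const,
    nsmul_eq_mul, mul_one]
  rw [paley_T1 hF, paley_T2 hF, paley_T3 hF h4, paley_card_S]
  ring

/-- Count of nonzero squares. -/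
private lemma paley_count_sq (hF : ringChar F ≠ 2) :
    2 * ((((univ : Finset F).filter fun u => u ≠ 0 ∧ IsSquare u).card : ℤ)) =
      (Fintype.card F : ℤ) - 1 := by
  have key : ∀ w ∈ (univ : Finset F).erase 0, quadraticChar F w + 1 =
      if IsSquare w then (2 : ℤ) else 0 := by
    intro w hw
    have hw0 : w ≠ 0 := by simpa using hw
    rw [paley_chi_eq w hw0]
    by_cases h : IsSquare w <;> simp [h]
  have h1 : ((univ : Finset F).filter fun u => u ≠ 0 ∧ IsSquare u) =
      ((univ : Finset F).erase 0).filter IsSquare := by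
    ext u
    simp [and_comm]
  rw [h1]
  have h2 : ∑ w ∈ (univ : Finset F).erase 0, (if IsSquare w then (2 : ℤ) else 0) =
      2 * ((((univ : Finset F).erase 0).filter IsSquare).card : ℤ) := by
    rw [← Finset.sum_filter, Finset.sum_const, nsmul_eq_mul]
    ring
  rw [← h2, ← Finset.sum_congr rfl key, Finset.sum_add_distrib,
    Finset.sum_erase_eq_sub (Finset.mem_univ _), quadraticChar_sum_zero hF, quadraticChar_zero,
    Finset.sum_const, nsmul_eq_mul, mul_one, Finset.card_erase_of_mem (Finset.mem_univ _),
    Finset.card_univ]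
  have h3 : 1 ≤ Fintype.card F := Fintype.card_pos
  push_cast [Nat.cast_sub h3]
  ring

private lemma paley_mul_sq_iff {a b : F} (ha : a ≠ 0) (hb : b ≠ 0) (hsa : IsSquare a) :
    IsSquare (a * b) ↔ IsSquare b := by
  rw [← quadraticChar_one_iff_isSquare (mul_ne_zero ha hb), map_mul,
    (quadraticChar_one_iff_isSquare ha).mpr hsa, one_mul,
    quadraticChar_one_iff_isSquare hb]

private lemma paley_mul_nonsq_iff {a b : F} (ha : a ≠ 0) (hb : b ≠ 0) (hsa : ¬IsSquare a) :
    IsSquare (a * b) ↔ ¬IsSquare b := by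
  rw [← quadraticChar_one_iff_isSquare (mul_ne_zero ha hb), map_mul,
    quadraticChar_neg_one_iff_not_isSquare.mpr hsa]
  rw [← quadraticChar_neg_one_iff_not_isSquare]
  constructor
  · intro h
    have := paley_chi_eq b hb
    by_cases hs : IsSquare b
    · rw [this, if_pos hs] at h; norm_num at h
    · rw [this, if_neg hs]
  · intro h; rw [h]; ring

end Aux

/-- **Paley graphs are strongly regular.** For a prime power `q ≡ 1 (mod 4)`, the Paley graph
`P(q)` (vertices: the field with `q` elements, edges: pairs whose difference is a nonzero
square) is strongly regular with parameters `(q, (q-1)/2, (q-5)/4, (q-1)/4)`. -/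
theorem stmt_4 {F : Type*} [Field F] [Fintype F] [DecidableEq F] (q : ℕ)
    (hq : Fintype.card F = q) (hmod : q % 4 = 1)
    (X : SimpleGraph F) [DecidableRel X.Adj]
    (hadj : ∀ x y : F, X.Adj x y ↔ x ≠ y ∧ IsSquare (x - y)) :
    X.IsSRGWith q ((q - 1) / 2) ((q - 5) / 4) ((q - 1) / 4) := by
  have h2 : 1 < q := hq ▸ Fintype.one_lt_card
  have hF : ringChar F ≠ 2 := by
    intro h
    have h' := FiniteField.even_card_of_char_two h
    rw [hq] at h'
    omega
  have hq5 : 5 ≤ q := by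
    have := FiniteField.odd_card_of_char_ne_two hF
    omega
  have h4 : Fintype.card F % 4 = 1 := by rw [hq]; exact hmod
  -- common neighbour count, reduced to a normalized count
  have hcn : ∀ x y : F, x ≠ y →
      Fintype.card (X.commonNeighbors x y) =
        ((paleyS F).filter fun w => IsSquare ((x - y) * w) ∧
          IsSquare ((x - y) * (w - 1))).card := by
    intro x y hxy
    have ha : x - y ≠ 0 := sub_ne_zero.mpr hxy
    rw [← Set.toFinset_card]
    apply Finset.card_nbij' (fun z => (x - z) * (x - y)⁻¹) (fun w => x - (x - y) * w)
    · intro z hz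
      beta_reduce
      rw [Finset.mem_coe, Set.mem_toFinset, SimpleGraph.mem_commonNeighbors, hadj, hadj] at hz
      obtain ⟨⟨hzx, hsx⟩, hzy, hsy⟩ := hz
      have hxz : x - z ≠ 0 := sub_ne_zero.mpr hzx
      have key1 : (x - y) * ((x - z) * (x - y)⁻¹) = x - z := by field_simp
      have key2 : (x - y) * ((x - z) * (x - y)⁻¹ - 1) = y - z := by
        rw [mul_sub, mul_one, key1]; ring
      rw [Finset.mem_coe, Finset.mem_filter, paley_mem_S]
      refine ⟨⟨?_, ?_⟩, ?_, ?_⟩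
      · intro h
        rw [h, mul_one] at key1
        exact hzy (sub_right_injective key1)
      · exact mul_ne_zero hxz (inv_ne_zero ha)
      · rw [key1]; exact hsx
      · rw [key2]; exact hsy
    · intro w hw
      beta_reduce
      rw [Finset.mem_coe, Finset.mem_filter, paley_mem_S] at hw
      obtain ⟨⟨hw1, hw0⟩, hs1, hs2⟩ := hw
      have key1 : x - (x - (x - y) * w) = (x - y) * w := by ring
      have key2 : y - (x - (x - y) * w) = (x - y) * (w - 1) := by ring
      rw [Finset.mem_coe, Set.mem_toFinset, SimpleGraph.mem_commonNeighbors, hadj, hadj]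
      refine ⟨⟨?_, ?_⟩, ?_, ?_⟩
      · intro h
        apply mul_ne_zero ha hw0
        rw [← key1, ← h]; ring
      · rw [key1]; exact hs1
      · intro h
        apply mul_ne_zero ha (sub_ne_zero.mpr hw1)
        rw [← key2, ← h]; ring
      · rw [key2]; exact hs2
    · intro z _
      field_simp
      ring
    · intro w _
      field_simp
      ring
  constructor
  · exact hq
  · -- regularity
    intro v
    rw [SimpleGraph.degree]
    have hb : (X.neighborFinset v).card =
        ((univ : Finset F).filter fun u => u ≠ 0 ∧ IsSquare u).card := by
      apply Finset.card_nbij' (fun w => v - w) (fun u => v - u)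
      · intro w hw
        beta_reduce
        rw [Finset.mem_coe, SimpleGraph.mem_neighborFinset, hadj] at hw
        simp only [Finset.mem_coe, Finset.mem_filter, Finset.mem_univ, true_and]
        exact ⟨sub_ne_zero.mpr hw.1, hw.2⟩
      · intro u hu
        beta_reduce
        simp only [Finset.mem_coe, Finset.mem_filter, Finset.mem_univ, true_and] at hu
        rw [Finset.mem_coe, SimpleGraph.mem_neighborFinset, hadj]
        constructor
        · intro h
          apply hu.1
          rw [← sub_sub_cancel v u, ← h, sub_self]
        · rw [show v - (v - u) = u by ring]; exact hu.2
      · intro w _; ring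
      · intro u _; ring
    rw [hb]
    have hc := paley_count_sq (F := F) hF
    rw [hq] at hc
    omega
  · -- adjacent common neighbours
    intro v w hvw
    rw [hadj] at hvw
    obtain ⟨hne, hsq⟩ := hvw
    have ha : v - w ≠ 0 := sub_ne_zero.mpr hne
    rw [hcn v w hne]
    have hfilter : ((paleyS F).filter fun u => IsSquare ((v - w) * u) ∧
        IsSquare ((v - w) * (u - 1))) =
        ((paleyS F).filter fun u => IsSquare u ∧ IsSquare (u - 1)) := by
      apply Finset.filter_congr
      intro u hu
      rw [paley_mem_S] at hu
      rw [paley_mul_sq_iff ha hu.2 hsq, paley_mul_sq_iff ha (sub_ne_zero.mpr hu.1) hsq]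
    rw [hfilter]
    have hc := paley_count_adj (F := F) hF h4
    rw [hq] at hc
    omega
  · -- non-adjacent common neighbours
    intro v w hne hnadj
    rw [hadj] at hnadj
    push_neg at hnadj
    have hnsq : ¬IsSquare (v - w) := hnadj hne
    have ha : v - w ≠ 0 := sub_ne_zero.mpr hne
    rw [hcn v w hne]
    have hfilter : ((paleyS F).filter fun u => IsSquare ((v - w) * u) ∧
        IsSquare ((v - w) * (u - 1))) =
        ((paleyS F).filter fun u => ¬IsSquare u ∧ ¬IsSquare (u - 1)) := by
      apply Finset.filter_congr
      intro u hu
      rw [paley_mem_S] at hu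
      rw [paley_mul_nonsq_iff ha hu.2 hnsq,
        paley_mul_nonsq_iff ha (sub_ne_zero.mpr hu.1) hnsq]
    rw [hfilter]
    have hc := paley_count_nadj (F := F) hF h4
    rw [hq] at hc
    omega
end

section
/- Let q be an odd prime power. The Paley graph P(q²) has chromatic number equal to q and independence number equal to q. -/
/-- For an odd prime power `q`, the Paley graph `P(q²)` has chromatic number `q` and
independence number `q`. -/
theorem stmt_5 {F : Type*} [Field F] [Fintype F] (q : ℕ)
    (hq : ∃ p k : ℕ, p.Prime ∧ Odd p ∧ k ≠ 0 ∧ q = p ^ k)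
    (hcard : Fintype.card F = q ^ 2)
    (X : SimpleGraph F)
    (hadj : ∀ x y : F, X.Adj x y ↔ x ≠ y ∧ IsSquare (x - y)) :
    X.chromaticNumber = (q : ℕ∞) ∧
    (∃ s : Finset F, (∀ x ∈ s, ∀ y ∈ s, x ≠ y → ¬ X.Adj x y) ∧ s.card = q) ∧
    (∀ s : Finset F, (∀ x ∈ s, ∀ y ∈ s, x ≠ y → ¬ X.Adj x y) → s.card ≤ q) := by
  classical
  obtain ⟨p, k, hp, hpodd, hk0, hqeq⟩ := hq
  have hq1 : 1 < q := by
    rw [hqeq]; exact Nat.one_lt_pow hk0 hp.one_lt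
  have hq0 : 0 < q := Nat.lt_of_lt_of_le Nat.zero_lt_one hq1.le
  have hqodd : Odd q := by rw [hqeq]; exact hpodd.pow
  -- characteristic
  have hring : ringChar F = p := by
    obtain ⟨n, hrp, hn⟩ := FiniteField.card F (ringChar F)
    have hpd : p ∣ ringChar F := by
      have h1 : p ∣ Fintype.card F := by
        rw [hcard, hqeq, ← pow_mul]
        exact dvd_pow_self p (by positivity)
      rw [hn] at h1
      exact hp.dvd_of_dvd_pow h1
    exact ((Nat.prime_dvd_prime_iff_eq hp hrp).mp hpd).symm
  haveI hchar : CharP F p := hring ▸ ringChar.charP F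
  have h2 : ringChar F ≠ 2 := by
    rw [hring]; rintro rfl; exact (by decide : ¬ Odd 2) hpodd
  haveI : Fact p.Prime := ⟨hp⟩
  haveI : ExpChar F p := ExpChar.prime hp
  -- the subfield (as a finset)
  obtain ⟨K, hKcard, hKmem⟩ :
      ∃ K : Finset F, K.card = q ∧ ∀ x : F, x ∈ K ↔ x ^ q = x := by
    obtain ⟨g, hg⟩ := IsCyclic.exists_generator (α := Fˣ)
    have hgord : orderOf g = q ^ 2 - 1 := by
      rw [orderOf_eq_card_of_forall_mem_zpowers hg, Nat.card_eq_fintype_card,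
        Fintype.card_units, hcard]
    have hordζ : orderOf (g ^ (q + 1)) = q - 1 := by
      rw [orderOf_pow, hgord]
      have h1 : q ^ 2 - 1 = (q + 1) * (q - 1) := by
        have := Nat.sq_sub_sq q 1
        simpa using this
      rw [h1, Nat.gcd_comm, Nat.gcd_eq_left (dvd_mul_right _ _),
        Nat.mul_div_cancel_left _ (by omega : 0 < q + 1)]
    have hprim : IsPrimitiveRoot ((g : F) ^ (q + 1)) (q - 1) := by
      have h3 := IsPrimitiveRoot.orderOf ((g ^ (q + 1) : Fˣ) : F)
      rw [orderOf_units, hordζ] at h3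
      simpa using h3
    refine ⟨insert (0 : F) (Polynomial.nthRootsFinset (q - 1) (1 : F)), ?_, ?_⟩
    · rw [Finset.card_insert_of_notMem
        (fun h => Polynomial.ne_zero_of_mem_nthRootsFinset one_ne_zero h rfl),
        hprim.card_nthRootsFinset]
      omega
    · intro x
      constructor
      · intro hx
        rcases Finset.mem_insert.mp hx with rfl | hx
        · rw [zero_pow hq0.ne']
        · have hx1 : x ^ (q - 1) = 1 := (Polynomial.mem_nthRootsFinset (by omega) 1).mp hx
          calc x ^ q = x ^ (q - 1) * x := by
                rw [← pow_succ]; congr 1; omega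
            _ = x := by rw [hx1, one_mul]
      · intro hx
        by_cases hx0 : x = 0
        · exact Finset.mem_insert.mpr (Or.inl hx0)
        · refine Finset.mem_insert.mpr
            (Or.inr ((Polynomial.mem_nthRootsFinset (by omega) 1).mpr ?_))
          have h4 : x ^ (q - 1) * x = 1 * x := by
            rw [← pow_succ, one_mul]; rw [show q - 1 + 1 = q by omega, hx]
          exact mul_right_cancel₀ hx0 h4
  -- elements of K are squares
  have hKsq : ∀ x : F, x ^ q = x → IsSquare x := by
    intro x hx
    by_cases hx0 : x = 0
    · exact ⟨0, by rw [hx0, mul_zero]⟩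
    · have hx1 : x ^ (q - 1) = 1 := by
        have h4 : x ^ (q - 1) * x = 1 * x := by
          rw [← pow_succ, one_mul]; rw [show q - 1 + 1 = q by omega, hx]
        exact mul_right_cancel₀ hx0 h4
      rw [FiniteField.isSquare_iff h2 hx0, hcard]
      have hhalf : q ^ 2 / 2 = (q - 1) * ((q + 1) / 2) := by
        obtain ⟨t, ht⟩ := hqodd
        rw [ht]
        have e1 : (2 * t + 1) ^ 2 = 2 * (2 * (t * t) + 2 * t) + 1 := by ring
        have e2 : (2 * t + 1 - 1) * ((2 * t + 1 + 1) / 2) = 2 * (t * t) + 2 * t := by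
          rw [show (2 * t + 1 + 1) / 2 = t + 1 by omega,
            show 2 * t + 1 - 1 = 2 * t by omega]
          ring
        rw [e1, e2]
        set u := t * t
        omega
      rw [hhalf, pow_mul, hx1, one_pow]
  -- K is closed under subtraction
  have hKsub : ∀ x y : F, x ^ q = x → y ^ q = y → (x - y) ^ q = x - y := by
    intro x y hx hy
    rw [hqeq] at hx hy ⊢
    rw [sub_pow_char_pow, hx, hy]
  -- a nonsquare
  obtain ⟨c, hcns⟩ := FiniteField.exists_nonsquare h2
  have hc0 : c ≠ 0 := fun h => hcns ⟨0, by rw [h, mul_zero]⟩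
  -- nonsquare times nonzero square is a nonsquare
  have hns : ∀ z : F, z ≠ 0 → IsSquare z → ¬ IsSquare (c * z) := by
    intro z hz hzs
    rintro ⟨t, ht⟩
    obtain ⟨u, hu⟩ := hzs
    have hu0 : u ≠ 0 := fun h => hz (by simp [hu, h])
    refine hcns ⟨t * u⁻¹, ?_⟩
    field_simp
    linear_combination ht - c * hu
  -- upper bound on independent sets
  have hub : ∀ s : Finset F, (∀ x ∈ s, ∀ y ∈ s, x ≠ y → ¬ X.Adj x y) → s.card ≤ q := by
    intro s hs
    have hinj : Set.InjOn (fun z : F × F => z.2 - z.1) ↑(K ×ˢ s) := by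
      rintro ⟨k₁, s₁⟩ h₁ ⟨k₂, s₂⟩ h₂ h
      simp only [Finset.coe_product, Set.mem_prod, Finset.mem_coe] at h₁ h₂
      simp only at h
      by_cases hss : s₁ = s₂
      · subst hss
        have : k₁ = k₂ := by linear_combination -h
        simp [this]
      · exfalso
        have hd : s₁ - s₂ = k₁ - k₂ := by linear_combination h
        have hk : (k₁ - k₂) ^ q = k₁ - k₂ :=
          hKsub _ _ ((hKmem _).mp h₁.1) ((hKmem _).mp h₂.1)
        exact hs s₁ h₁.2 s₂ h₂.2 hss ((hadj s₁ s₂).mpr ⟨hss, hd ▸ hKsq _ hk⟩)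
    have hle := Finset.card_le_card_of_injOn _ (fun _ _ => Finset.mem_univ _) hinj
    rw [Finset.card_product, hKcard, Finset.card_univ, hcard, pow_two] at hle
    exact Nat.le_of_mul_le_mul_left hle hq0
  -- the independent set
  have hindset : ∀ x ∈ K.image (fun y => c * y), ∀ y ∈ K.image (fun y => c * y),
      x ≠ y → ¬ X.Adj x y := by
    intro x hx y hy hne hAdj
    obtain ⟨a, ha, rfl⟩ := Finset.mem_image.mp hx
    obtain ⟨b, hb, rfl⟩ := Finset.mem_image.mp hy
    have hab : a ≠ b := fun h => hne (by rw [h])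
    have hsq : IsSquare (c * a - c * b) := ((hadj _ _).mp hAdj).2
    have hd : c * a - c * b = c * (a - b) := by ring
    rw [hd] at hsq
    exact hns (a - b) (sub_ne_zero.mpr hab)
      (hKsq _ (hKsub a b ((hKmem a).mp ha) ((hKmem b).mp hb))) hsq
  have himgcard : (K.image (fun y => c * y)).card = q := by
    rw [Finset.card_image_of_injective _ (mul_right_injective₀ hc0), hKcard]
  -- the additive subgroup c • K
  set A : AddSubgroup F :=
    { carrier := {x : F | ∃ y : F, y ^ q = y ∧ x = c * y}
      zero_mem' := ⟨0, by rw [zero_pow hq0.ne'], by rw [mul_zero]⟩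
      add_mem' := by
        rintro x₁ x₂ ⟨y₁, hy₁, rfl⟩ ⟨y₂, hy₂, rfl⟩
        refine ⟨y₁ + y₂, ?_, by ring⟩
        rw [hqeq] at hy₁ hy₂ ⊢
        rw [add_pow_char_pow, hy₁, hy₂]
      neg_mem' := by
        rintro x ⟨y, hy, rfl⟩
        exact ⟨-y, by rw [hqodd.neg_pow, hy], by ring⟩ } with hA
  have hANatcard : Nat.card A = q := by
    have hAset : (A : Set F) = ↑(K.image (fun y => c * y)) := by
      ext x
      simp only [hA, AddSubgroup.coe_set_mk, Set.mem_setOf_eq, Finset.coe_image,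
        Set.mem_image, Finset.mem_coe]
      constructor
      · rintro ⟨y, hy, rfl⟩; exact ⟨y, (hKmem y).mpr hy, rfl⟩
      · rintro ⟨y, hy, rfl⟩; exact ⟨y, (hKmem y).mp hy, rfl⟩
    have h5 : Nat.card A = (A : Set F).ncard := Nat.card_coe_set_eq _
    rw [hAset, Set.ncard_coe_finset, himgcard] at h5
    exact h5
  haveI : Fintype (F ⧸ A) := Fintype.ofFinite _
  have hQcard : Fintype.card (F ⧸ A) = q := by
    have h1 := AddSubgroup.card_eq_card_quotient_mul_card_addSubgroup A
    rw [hANatcard, Nat.card_eq_fintype_card, Nat.card_eq_fintype_card, hcard, pow_two] at h1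
    exact Nat.eq_of_mul_eq_mul_right hq0 h1.symm
  -- the coloring
  have hvalid : ∀ {x y : F}, X.Adj x y → (x : F ⧸ A) ≠ (y : F ⧸ A) := by
    intro x y hAdj heq
    obtain ⟨hne, hsq⟩ := (hadj x y).mp hAdj
    have hmem : -x + y ∈ A := (QuotientAddGroup.eq).mp heq
    obtain ⟨z, hz, hcz⟩ := hmem
    have hz0 : z ≠ 0 := by
      rintro rfl
      rw [mul_zero] at hcz
      exact hne (by linear_combination -hcz)
    have hxy : x - y = c * (-z) := by linear_combination -hcz
    rw [hxy] at hsq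
    exact hns (-z) (neg_ne_zero.mpr hz0) (hKsq _ (by rw [hqodd.neg_pow, hz])) hsq
  have hcol : X.Colorable q := by
    have := (SimpleGraph.Coloring.mk (fun x : F => (x : F ⧸ A)) hvalid).colorable
    rwa [hQcard] at this
  -- lower bound on the chromatic number
  have hlow : ∀ n : ℕ, X.Colorable n → q ≤ n := by
    intro n hn
    obtain ⟨C⟩ := hn
    have hsum : Fintype.card F =
        ∑ i : Fin n, (Finset.univ.filter fun x : F => C x = i).card := by
      rw [← Finset.card_univ]
      exact Finset.card_eq_sum_card_fiberwise (fun x _ => Finset.mem_univ (C x))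
    have hfib : ∀ i : Fin n, (Finset.univ.filter fun x : F => C x = i).card ≤ q := by
      intro i
      apply hub
      intro x hx y hy hne hAdj
      rw [Finset.mem_filter] at hx hy
      exact C.valid hAdj (by rw [hx.2, hy.2])
    have hle : Fintype.card F ≤ n * q := by
      rw [hsum]
      calc ∑ i : Fin n, (Finset.univ.filter fun x : F => C x = i).card
          ≤ ∑ _i : Fin n, q := Finset.sum_le_sum fun i _ => hfib i
        _ = n * q := by rw [Finset.sum_const, Finset.card_univ, Fintype.card_fin, smul_eq_mul]
    rw [hcard, pow_two] at hle
    exact Nat.le_of_mul_le_mul_right hle hq0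
  refine ⟨?_, ⟨K.image (fun y => c * y), hindset, himgcard⟩, hub⟩
  apply le_antisymm hcol.chromaticNumber_le
  rw [SimpleGraph.chromaticNumber]
  exact le_iInf₂ fun n hn => Nat.cast_le.mpr (hlow n hn)
end

section
/- Let F be a finite field of odd characteristic with q elements, q > 9, and let f ∈ F[X] be a polynomial of degree 3. Then there exists x ∈ F such that f(x) ≠ 0 and f(x) is not a square in F. -/
open Polynomial Finset

/-- Let `F` be a finite field of odd characteristic with `q > 9` elements, and let `f` be a
cubic polynomial over `F`. Then some nonzero value of `f` is a nonsquare. -/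
theorem stmt_7 {F : Type*} [Field F] [Fintype F] (q : ℕ)
    (hq : Fintype.card F = q) (hchar : ringChar F ≠ 2) (hq9 : 9 < q)
    (f : Polynomial F) (hdeg : f.natDegree = 3) :
    ∃ x : F, f.eval x ≠ 0 ∧ ¬ IsSquare (f.eval x) := by
  classical
  by_contra hcon
  push_neg at hcon
  -- basic numerics
  have hodd : q % 2 = 1 := hq ▸ FiniteField.odd_card_of_char_ne_two hchar
  set m : ℕ := q / 2 with hm
  have h2m : 2 * m = q - 1 := by rw [hm]; omega
  have hqm : q = 2 * m + 1 := by omega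
  have hm5 : 5 ≤ m := by omega
  have hq2 : 1 < q := by omega
  have hcardF : (q : F) = 0 := hq ▸ FiniteField.cast_card_eq_zero F
  have h2ne : (2 : F) ≠ 0 := Ring.two_ne_zero hchar
  -- f is nonzero
  have hf0 : f ≠ 0 := fun h => by simp [h] at hdeg
  -- all nonzero values a of f satisfy a ^ m = 1
  have hval : ∀ x : F, f.eval x ≠ 0 → (f.eval x) ^ m = 1 := by
    intro x hx
    have := (FiniteField.isSquare_iff hchar hx).mp (hcon x hx)
    rwa [hq] at this
  -- the auxiliary polynomial g
  set g : Polynomial F := f ^ (m + 1) - f with hg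
  have hpowdeg : (f ^ (m + 1)).natDegree = 3 * (m + 1) := by
    rw [natDegree_pow, hdeg]; ring
  have hgdeg : g.natDegree = 3 * (m + 1) := by
    have h2 : f.natDegree < (f ^ (m + 1)).natDegree := by rw [hpowdeg, hdeg]; omega
    rw [hg, natDegree_sub_eq_left_of_natDegree_lt h2, hpowdeg]
  have hgne : g ≠ 0 := by
    intro h
    rw [h, natDegree_zero] at hgdeg
    omega
  -- g vanishes everywhere
  have hgeval : ∀ x : F, g.eval x = 0 := by
    intro x
    rw [hg]
    simp only [eval_sub, eval_pow]
    rcases eq_or_ne (f.eval x) 0 with h | h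
    · rw [h, zero_pow (Nat.succ_ne_zero m), sub_zero]
    · rw [pow_succ, hval x h, one_mul, sub_self]
  -- X^q - X divides g
  have hmonic : ((X : F[X]) ^ q - X).Monic := by
    apply monic_X_pow_sub
    rw [degree_X]
    exact_mod_cast hq2
  have hXdeg : ((X : F[X]) ^ q - X).natDegree = q :=
    FiniteField.X_pow_card_sub_X_natDegree_eq F (hq ▸ hq2)
  have hroots_univ : ((X : F[X]) ^ q - X).roots = Finset.univ.val := by
    have := FiniteField.roots_X_pow_card_sub_X F
    rwa [hq] at this
  have hprod : ((Finset.univ.val : Multiset F).map fun a => X - C a).prod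
      = (X : F[X]) ^ q - X := by
    have hcard : Multiset.card ((X : F[X]) ^ q - X).roots
        = ((X : F[X]) ^ q - X).natDegree := by
      rw [hroots_univ, hXdeg, ← hq]
      exact Finset.card_univ
    have := prod_multiset_X_sub_C_of_monic_of_roots_card_eq hmonic hcard
    rwa [hroots_univ] at this
  have hdvd : ((X : F[X]) ^ q - X) ∣ g := by
    rw [← hprod, Multiset.prod_X_sub_C_dvd_iff_le_roots hgne]
    refine Multiset.le_iff_count.2 fun x => ?_
    have hx : x ∈ g.roots := by
      rw [mem_roots hgne]
      exact hgeval x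
    rw [Multiset.count_eq_one_of_mem Finset.univ.nodup (Finset.mem_univ x)]
    exact Multiset.one_le_count_iff_mem.2 hx
  obtain ⟨A, hA⟩ := hdvd
  have hXne : ((X : F[X]) ^ q - X) ≠ 0 := hmonic.ne_zero
  have hAne : A ≠ 0 := by
    intro h; rw [h, mul_zero] at hA; exact hgne hA
  have hAdeg : A.natDegree = m + 2 := by
    have := congrArg natDegree hA
    rw [hgdeg, natDegree_mul hXne hAne, hXdeg] at this
    omega
  -- evaluation of A at nonroots of f
  have hAeval : ∀ x : F, f.eval x ≠ 0 → A.eval x = 2⁻¹ * f.derivative.eval x := by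
    intro x hx
    have hd1 : g.derivative = C ((m + 1 : ℕ) : F) * f ^ m * f.derivative - f.derivative := by
      rw [hg, derivative_sub, derivative_pow, Nat.add_sub_cancel]
    have hd2 : g.derivative.eval x = ((m : F) + 1) * f.derivative.eval x
        - f.derivative.eval x := by
      rw [hd1]
      simp [hval x hx]
    have hxq : x ^ q = x := hq ▸ FiniteField.pow_card x
    have hd3 : g.derivative.eval x = - A.eval x := by
      rw [hA, derivative_mul]
      simp only [eval_add, eval_mul, eval_sub, eval_pow, eval_X, derivative_sub,
        derivative_X_pow, derivative_X, eval_one, eval_natCast, eval_C]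
      rw [hxq]
      simp [hcardF]
    -- (m : F) + 1 = 2⁻¹ since 2*m+1 = q and (q:F)=0
    have hmF : (2 : F) * ((m : F) + 1) = 1 := by
      have hh : ((2 * m + 1 : ℕ) : F) = 0 := by rw [← hqm]; exact hcardF
      push_cast at hh
      linear_combination hh
    have hmF' : (m : F) + 1 = 2⁻¹ := by
      field_simp
      linear_combination hmF
    have hfin : - A.eval x = ((m : F) + 1 - 1) * f.derivative.eval x := by
      rw [← hd3, hd2]; ring
    rw [hmF'] at hfin
    have h21 : (2 : F)⁻¹ - 1 = -2⁻¹ * 1 := by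
      field_simp
      ring
    rw [h21] at hfin
    linear_combination -hfin
  -- the difference polynomial vanishes at ≥ q - 3 points but has degree m + 2 < q - 3
  set D : Polynomial F := A - C 2⁻¹ * f.derivative with hD
  have hDdeg : D.natDegree ≤ m + 2 := by
    apply le_trans (natDegree_sub_le _ _)
    apply max_le (le_of_eq hAdeg)
    apply le_trans natDegree_mul_le
    rw [natDegree_C]
    have := natDegree_derivative_le f
    omega
  have hDzero : D = 0 := by
    apply Polynomial.eq_zero_of_natDegree_lt_card_of_eval_eq_zero D
      (Subtype.val_injective (p := fun x : F => f.eval x ≠ 0))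
    · rintro ⟨x, hx⟩
      simp only [hD, eval_sub, eval_mul, eval_C]
      rw [hAeval x hx]; ring
    · have hroots : f.roots.toFinset.card ≤ 3 := by
        apply le_trans (Multiset.toFinset_card_le _)
        exact_mod_cast hdeg ▸ (Polynomial.card_roots' f)
      have hcard : Fintype.card {x : F // f.eval x ≠ 0} =
          (Finset.univ.filter fun x : F => f.eval x ≠ 0).card :=
        Fintype.card_subtype _
      have h1 : (Finset.univ.filter fun x : F => ¬ f.eval x ≠ 0).card ≤ 3 := by
        apply le_trans _ hroots
        apply Finset.card_le_card
        intro x hx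
        simp only [Finset.mem_filter, not_not] at hx
        rw [Multiset.mem_toFinset, mem_roots hf0]
        exact hx.2
      have h2 := Finset.card_filter_add_card_filter_not
        (s := (Finset.univ : Finset F)) (p := fun x : F => f.eval x ≠ 0)
      rw [Finset.card_univ, hq] at h2
      have : D.natDegree < q - 3 := by omega
      omega
  -- conclude A = -C 2⁻¹ * f', contradicting its degree
  have hAeq : A = C 2⁻¹ * f.derivative := by
    have := hDzero
    rw [hD, sub_eq_zero] at this
    exact this
  have : A.natDegree ≤ 2 := by
    rw [hAeq]
    apply le_trans natDegree_mul_le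
    rw [natDegree_C]
    have := natDegree_derivative_le f
    omega
  omega
end

section
/- Let F ⊆ K be finite fields with |F| = q and [K : F] = n, let Tr : K → F be the field trace of the extension K/F, and let χ be a nontrivial multiplicative character of K with complex values. Define the Eisenstein sum E(χ) = Σ_{s ∈ K, Tr(s) = 1} χ(s). Then |E(χ)| = q^{(n−1)/2} if the restriction of χ to F* is nontrivial, and |E(χ)| = q^{n/2 − 1} if the restriction of χ to F* is trivial. -/
open Finset

section aux
variable {R : Type*} [Field R] [Fintype R]

lemma conj_gaussSum' (χ : MulChar R ℂ) (ψ : AddChar R ℂ) :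
    (starRingEnd ℂ) (gaussSum χ ψ) = gaussSum χ⁻¹ ψ⁻¹ := by
  rw [gaussSum, gaussSum, map_sum]
  refine Finset.sum_congr rfl fun a _ => ?_
  rw [map_mul]
  congr 1
  · exact MulChar.star_apply' χ a
  · rw [AddChar.inv_apply', ← AddChar.inv_apply_eq_conj]

lemma abs_gaussSum' {χ : MulChar R ℂ} (hχ : χ ≠ 1) {ψ : AddChar R ℂ} (hψ : ψ.IsPrimitive) :
    ‖gaussSum χ ψ‖ = Real.sqrt (Fintype.card R) := by
  have h := gaussSum_mul_gaussSum_eq_card hχ hψ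
  rw [← conj_gaussSum', Complex.mul_conj] at h
  have h2 : Complex.normSq (gaussSum χ ψ) = (Fintype.card R : ℝ) := by exact_mod_cast h
  rw [Complex.norm_def, h2]

end aux

/-- **Absolute value of Eisenstein sums.** Let `F ⊆ K` be finite fields with `|F| = q` and
`[K : F] = n`, let `Tr` be the trace of `K/F`, and let `χ` be a nontrivial complex-valued
multiplicative character of `K`. Put `E(χ) = ∑_{Tr s = 1} χ s`. Then `|E(χ)| = q^((n-1)/2)`
if the restriction of `χ` to `F*` is nontrivial, and `|E(χ)| = q^(n/2 - 1)` if it is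
trivial. -/
theorem stmt_8 {F K : Type*} [Field F] [Field K] [Fintype F] [Fintype K] [DecidableEq F]
    [Algebra F K] (q n : ℕ) (hq : Fintype.card F = q) (hn : Module.finrank F K = n)
    (χ : MulChar K ℂ) (hχ : χ ≠ 1) :
    (¬ (∀ a : F, a ≠ 0 → χ (algebraMap F K a) = 1) →
      ‖∑ s ∈ Finset.univ.filter fun s : K => Algebra.trace F K s = 1, χ s‖
        = (q : ℝ) ^ (((n : ℝ) - 1) / 2)) ∧
    ((∀ a : F, a ≠ 0 → χ (algebraMap F K a) = 1) →
      ‖∑ s ∈ Finset.univ.filter fun s : K => Algebra.trace F K s = 1, χ s‖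
        = (q : ℝ) ^ ((n : ℝ) / 2 - 1)) := by
  classical
  subst hq hn
  have hq0 : (0:ℝ) < (Fintype.card F : ℝ) := by
    exact_mod_cast Fintype.card_pos
  -- the restricted character
  let χF : MulChar F ℂ :=
    { toMonoidHom := χ.toMonoidHom.comp (algebraMap F K : F →+* K).toMonoidHom
      map_nonunit' := fun a ha => by
        have ha0 : a = 0 := by simpa [isUnit_iff_ne_zero] using ha
        subst ha0
        simpa using χ.map_nonunit not_isUnit_zero }
  have hχFapp : ∀ a : F, χF a = χ (algebraMap F K a) := fun a => rfl
  -- additive characters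
  let ψF : AddChar F ℂ := AddChar.FiniteField.primitiveChar_to_Complex F
  have hψF : ψF.IsPrimitive := AddChar.FiniteField.primitiveChar_to_Complex_isPrimitive F
  have hψF1 : ψF ≠ 1 := by
    have := hψF (one_ne_zero (α := F))
    rwa [AddChar.mulShift_one] at this
  let Ψ : AddChar K ℂ := ψF.compAddMonoidHom (Algebra.trace F K).toAddMonoidHom
  have hΨapp : ∀ s : K, Ψ s = ψF (Algebra.trace F K s) := fun _ => rfl
  have htr : Function.Surjective (Algebra.trace F K) := Algebra.trace_surjective F K
  have hΨ : Ψ.IsPrimitive := by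
    refine AddChar.IsPrimitive.of_ne_one ?_
    intro hcon
    apply hψF1
    ext t
    obtain ⟨s, rfl⟩ := htr t
    have := DFunLike.congr_fun hcon s
    simpa [hΨapp] using this
  -- fiber sums
  set E : ℂ := ∑ s ∈ Finset.univ.filter fun s : K => Algebra.trace F K s = 1, χ s with hE
  set S : F → ℂ :=
    fun t => ∑ s ∈ Finset.univ.filter fun s : K => Algebra.trace F K s = t, χ s with hS
  have hkey : ∀ (a : F) (s : K),
      Algebra.trace F K (algebraMap F K a * s) = a * Algebra.trace F K s := by
    intro a s
    rw [← Algebra.smul_def, map_smul, smul_eq_mul]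
  have hfiber : ∀ t : F, t ≠ 0 → S t = χF t * E := by
    intro t ht
    have htK : algebraMap F K t ≠ 0 := by
      simpa using (map_ne_zero (algebraMap F K)).mpr ht
    rw [hS, hE, Finset.mul_sum]
    refine Finset.sum_nbij' (fun s => (algebraMap F K t)⁻¹ * s)
      (fun s => algebraMap F K t * s) ?_ ?_ ?_ ?_ ?_
    · intro s hs
      rw [Finset.mem_filter] at hs ⊢
      refine ⟨Finset.mem_univ _, ?_⟩
      rw [← map_inv₀, hkey, hs.2, inv_mul_cancel₀ ht]
    · intro s hs
      rw [Finset.mem_filter] at hs ⊢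
      refine ⟨Finset.mem_univ _, ?_⟩
      rw [hkey, hs.2, mul_one]
    · intro s _
      field_simp
    · intro s _
      field_simp
    · intro s _
      rw [hχFapp, ← map_mul, ← mul_assoc, mul_inv_cancel₀ htK, one_mul]
  have hdecomp : gaussSum χ Ψ = ∑ t : F, ψF t * S t := by
    rw [gaussSum,
      ← Finset.sum_fiberwise_of_maps_to (g := fun s : K => Algebra.trace F K s)
        (t := Finset.univ) (fun s _ => Finset.mem_univ _) (fun s => χ s * Ψ s)]
    refine Finset.sum_congr rfl fun t _ => ?_
    rw [hS, Finset.mul_sum]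
    refine Finset.sum_congr rfl fun s hs => ?_
    rw [Finset.mem_filter] at hs
    rw [hΨapp, hs.2, mul_comm]
  have htot : ∑ t : F, S t = 0 := by
    rw [hS,
      Finset.sum_fiberwise_of_maps_to (g := fun s : K => Algebra.trace F K s)
        (t := Finset.univ) (fun s _ => Finset.mem_univ _) (fun s => χ s)]
    exact MulChar.sum_eq_zero_of_ne_one hχ
  have habsK := abs_gaussSum' hχ hΨ
  have hcardK : (Fintype.card K : ℝ) =
      (Fintype.card F : ℝ) ^ (Module.finrank F K : ℕ) := by
    exact_mod_cast congrArg (Nat.cast : ℕ → ℝ) (Module.card_eq_pow_finrank (K := F) (V := K))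
  have hsqrtK : Real.sqrt (Fintype.card K) =
      (Fintype.card F : ℝ) ^ ((Module.finrank F K : ℝ) / 2) := by
    rw [hcardK, Real.sqrt_eq_rpow, ← Real.rpow_natCast ((Fintype.card F : ℝ)) _,
      ← Real.rpow_mul hq0.le]
    ring_nf
  constructor
  · -- restriction nontrivial
    intro h
    have hχF1 : χF ≠ 1 := by
      intro hcon
      apply h
      intro a ha
      rw [← hχFapp, hcon]
      exact MulChar.one_apply_coe (Units.mk0 a ha)
    have hsum0 : ∑ t ∈ Finset.univ.erase (0:F), χF t = 0 := by
      have h0 := MulChar.sum_eq_zero_of_ne_one hχF1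
      rwa [← Finset.add_sum_erase _ _ (Finset.mem_univ (0:F)),
        MulChar.map_nonunit χF not_isUnit_zero, zero_add] at h0
    have hS0 : S 0 = 0 := by
      have := htot
      rw [← Finset.add_sum_erase _ _ (Finset.mem_univ (0:F))] at this
      have h2 : ∑ t ∈ Finset.univ.erase (0:F), S t =
          (∑ t ∈ Finset.univ.erase (0:F), χF t) * E := by
        rw [Finset.sum_mul]
        exact Finset.sum_congr rfl fun t ht => hfiber t (Finset.ne_of_mem_erase ht)
      rw [h2, hsum0, zero_mul, add_zero] at this
      exact this
    have hGG : gaussSum χ Ψ = gaussSum χF ψF * E := by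
      rw [hdecomp, gaussSum, Finset.sum_mul,
        ← Finset.add_sum_erase _ (fun t => ψF t * S t) (Finset.mem_univ (0:F)),
        ← Finset.add_sum_erase _ (fun t => χF t * ψF t * E) (Finset.mem_univ (0:F)),
        hS0, mul_zero, MulChar.map_nonunit χF not_isUnit_zero, zero_mul, zero_mul,
        zero_add, zero_add]
      refine Finset.sum_congr rfl fun t ht => ?_
      rw [hfiber t (Finset.ne_of_mem_erase ht)]
      ring
    have habsF := abs_gaussSum' hχF1 hψF
    rw [hGG, norm_mul, habsF, hsqrtK] at habsK
    have hsqrtF : Real.sqrt (Fintype.card F) = (Fintype.card F : ℝ) ^ ((1:ℝ)/2) := by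
      rw [Real.sqrt_eq_rpow]
    rw [hsqrtF] at habsK
    have hne : (Fintype.card F : ℝ) ^ ((1:ℝ)/2) ≠ 0 := by positivity
    have hEabs : ‖E‖ =
        (Fintype.card F : ℝ) ^ ((Module.finrank F K : ℝ) / 2) /
          (Fintype.card F : ℝ) ^ ((1:ℝ)/2) := by
      field_simp at habsK ⊢
      linarith [habsK]
    rw [hEabs, ← Real.rpow_sub hq0]
    ring_nf
  · -- restriction trivial
    intro h
    have hψF0 : ψF ≠ 0 := by
      intro h0
      apply hψF1
      ext x
      rw [h0]
      simp
    have hψsum : ∑ t ∈ Finset.univ.erase (0:F), ψF t = -1 := by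
      have h0 : ∑ t : F, ψF t = 0 := AddChar.sum_eq_zero_iff_ne_zero.mpr hψF0
      rw [← Finset.add_sum_erase _ _ (Finset.mem_univ (0:F)), AddChar.map_zero_eq_one] at h0
      linear_combination h0
    have hSconst : ∀ t : F, t ≠ 0 → S t = E := by
      intro t ht
      rw [hfiber t ht, hχFapp, h t ht, one_mul]
    have hcarde : (((Finset.univ.erase (0:F)).card : ℕ) : ℂ) = (Fintype.card F : ℂ) - 1 := by
      rw [Finset.card_erase_of_mem (Finset.mem_univ _), Finset.card_univ,
        Nat.cast_sub Fintype.card_pos, Nat.cast_one]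
    have hS0 : S 0 = -((Fintype.card F : ℂ) - 1) * E := by
      have h0 := htot
      rw [← Finset.add_sum_erase _ _ (Finset.mem_univ (0:F))] at h0
      have h2 : ∑ t ∈ Finset.univ.erase (0:F), S t = ((Fintype.card F : ℂ) - 1) * E := by
        rw [Finset.sum_congr rfl fun t ht => hSconst t (Finset.ne_of_mem_erase ht),
          Finset.sum_const, nsmul_eq_mul, hcarde]
      rw [h2] at h0
      linear_combination h0
    have hGG : gaussSum χ Ψ = -(Fintype.card F : ℂ) * E := by
      rw [hdecomp, ← Finset.add_sum_erase _ (fun t => ψF t * S t) (Finset.mem_univ (0:F)),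
        AddChar.map_zero_eq_one, one_mul, hS0]
      have h2 : ∑ t ∈ Finset.univ.erase (0:F), ψF t * S t =
          (∑ t ∈ Finset.univ.erase (0:F), ψF t) * E := by
        rw [Finset.sum_mul]
        exact Finset.sum_congr rfl fun t ht => by rw [hSconst t (Finset.ne_of_mem_erase ht)]
      rw [h2, hψsum]
      ring
    rw [hGG, norm_mul] at habsK
    have habsq : ‖(-(Fintype.card F : ℂ))‖ = (Fintype.card F : ℝ) := by
      rw [norm_neg, Complex.norm_natCast]
    rw [habsq, hsqrtK] at habsK
    have hEabs : ‖E‖ =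
        (Fintype.card F : ℝ) ^ ((Module.finrank F K : ℝ) / 2) / (Fintype.card F : ℝ) := by
      field_simp at habsK ⊢
      linarith [habsK]
    rw [hEabs, Real.rpow_sub hq0, Real.rpow_one]
end

section
/- Let X be a finite connected d-regular simple graph on n vertices with diameter 2 and girth 5. Then n = d² + 1 and d ∈ {2, 3, 7, 57}; hence (n, d) is one of (5,2), (10,3), (50,7), (3250,57). -/
open SimpleGraph Matrix Finset

section HS
variable {V : Type*} {G : SimpleGraph V}

private lemma hs_nt (D t : ℤ) (hD : 2 ≤ D) (h : (4*D - 3) * t^2 = (D^2 - 2*D)^2) :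
    D = 2 ∨ D = 3 ∨ D = 7 ∨ D = 57 := by
  rcases eq_or_ne t 0 with ht | ht
  · subst ht
    simp only [ne_eq, OfNat.ofNat_ne_zero, not_false_eq_true, zero_pow, mul_zero] at h
    have : D * (D - 2) = 0 := by nlinarith [sq_nonneg (D^2 - 2*D)]
    rcases mul_eq_zero.mp this with h1 | h1 <;> omega
  · have hdvd : t ∣ D^2 - 2*D := by
      rw [← Int.pow_dvd_pow_iff (two_ne_zero)]
      exact ⟨4*D - 3, by linarith [h]⟩
    obtain ⟨q, hq⟩ := hdvd
    have ht2 : (t:ℤ)^2 ≠ 0 := pow_ne_zero _ ht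
    have hq2 : 4*D - 3 = q^2 := by
      have : (4*D-3) * t^2 = q^2 * t^2 := by rw [h, hq]; ring
      exact mul_right_cancel₀ ht2 this
    have hq15 : q ∣ 15 := by
      refine ⟨q^3 - 2*q - 16*t, ?_⟩
      have : 16 * (D^2 - 2*D) = q^4 - 2*q^2 - 15 := by nlinarith [hq2]
      nlinarith [hq, this]
    have hna : q.natAbs ∣ 15 := by
      have := Int.natAbs_dvd_natAbs.mpr hq15; simpa using this
    have hle : q.natAbs ≤ 15 := Nat.le_of_dvd (by norm_num) hna
    have hsq : 4*D - 3 = (q.natAbs : ℤ)^2 := by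
      rw [hq2, ← Int.natAbs_pow_two]
    interval_cases h' : q.natAbs <;> omega

private lemma hs_no_tri (hg : G.egirth = 5) {a b c : V} (hab : G.Adj a b) (hbc : G.Adj b c)
    (hca : G.Adj c a) : False := by
  have hcyc : (Walk.cons hab (Walk.cons hbc (Walk.cons hca Walk.nil))).IsCycle := by
    simp [Walk.isCycle_def, Walk.isTrail_def, Sym2.eq_iff, hab.ne, hbc.ne, hca.ne,
      hab.ne', hbc.ne', hca.ne']
  have := le_egirth.mp hg.ge a _ hcyc
  norm_num at this

private lemma hs_no_sq (hg : G.egirth = 5) {a b c x : V} (hac : a ≠ c) (hbx : b ≠ x)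
    (hab : G.Adj a b) (hbc : G.Adj b c) (hcx : G.Adj c x) (hxa : G.Adj x a) : False := by
  have hcyc : (Walk.cons hab (Walk.cons hbc (Walk.cons hcx (Walk.cons hxa Walk.nil)))).IsCycle := by
    simp [Walk.isCycle_def, Walk.isTrail_def, Sym2.eq_iff, hab.ne, hbc.ne, hcx.ne, hxa.ne,
      hab.ne', hbc.ne', hcx.ne', hxa.ne', hac, hac.symm, hbx, hbx.symm]
  have := le_egirth.mp hg.ge a _ hcyc
  norm_num at this

private lemma hs_common (hconn : G.Connected) (hdiam : G.diam = 2) {u w : V} (hne : u ≠ w)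
    (hna : ¬G.Adj u w) : ∃ y, G.Adj u y ∧ G.Adj y w := by
  have htop : G.ediam ≠ ⊤ := ediam_ne_top_of_diam_ne_zero (by omega)
  have h2 : G.dist u w ≤ 2 := hdiam ▸ dist_le_diam htop
  have h0 : G.dist u w ≠ 0 := by
    rw [dist_ne_zero_iff_ne_and_reachable]
    exact ⟨hne, hconn.preconnected u w⟩
  have h1 : G.dist u w ≠ 1 := fun h => hna (dist_eq_one_iff_adj.mp h)
  have hd : G.dist u w = 2 := by omega
  obtain ⟨p, hp⟩ := hconn.exists_walk_length_eq_dist u w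
  rw [hd] at hp
  cases p with
  | nil => simp at hp
  | cons h q =>
    cases q with
    | nil => simp at hp
    | cons h' r =>
      cases r with
      | nil => exact ⟨_, h, h'⟩
      | cons h'' s => simp [Nat.succ_eq_add_one] at hp

private lemma hs_d_ge_two [Fintype V] [DecidableEq V] [DecidableRel G.Adj] {d : ℕ}
    (hconn : G.Connected) (hreg : G.IsRegularOfDegree d) (hdiam : G.diam = 2) : 2 ≤ d := by
  have : Nontrivial V := nontrivial_of_diam_ne_zero (G := G) (by omega)
  obtain ⟨u, w, huw⟩ := exists_dist_eq_diam (G := G)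
  rw [hdiam] at huw
  have hne : u ≠ w := by rintro rfl; rw [dist_self] at huw; omega
  have hna : ¬G.Adj u w := fun h => by rw [dist_eq_one_iff_adj.mpr h] at huw; omega
  obtain ⟨y, hy1, hy2⟩ := hs_common hconn hdiam hne hna
  have hsub : ({u, w} : Finset V) ⊆ G.neighborFinset y := by
    intro z hz
    simp only [Finset.mem_insert, Finset.mem_singleton] at hz
    rcases hz with rfl | rfl
    · exact (mem_neighborFinset _ _ _).mpr hy1.symm
    · exact (mem_neighborFinset _ _ _).mpr hy2
  have := Finset.card_le_card hsub
  rw [Finset.card_pair hne] at this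
  simpa [hreg y] using this

private lemma hs_matrix [Fintype V] [DecidableEq V] [DecidableRel G.Adj] {d : ℕ}
    (hconn : G.Connected) (hreg : G.IsRegularOfDegree d)
    (hdiam : G.diam = 2) (hgirth : G.egirth = 5) :
    G.adjMatrix ℝ * G.adjMatrix ℝ + G.adjMatrix ℝ
      = ((d : ℝ) - 1) • (1 : Matrix V V ℝ) + Matrix.of (fun _ _ => (1 : ℝ)) := by
  ext u w
  by_cases huw : u = w
  · subst huw
    simp only [Matrix.add_apply, adjMatrix_apply, Matrix.smul_apply, Matrix.one_apply_eq,
      Matrix.of_apply, smul_eq_mul, mul_one]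
    rw [adjMatrix_mul_self_apply_self]
    simp [hreg u]
  · have hcard : ((G.adjMatrix ℝ * G.adjMatrix ℝ) u w)
        = ((G.neighborFinset u).filter (fun y => G.Adj y w)).card := by
      rw [adjMatrix_mul_apply]
      rw [Finset.card_filter]
      push_cast
      exact Finset.sum_congr rfl fun y _ => by simp [adjMatrix_apply]
    by_cases hadj : G.Adj u w
    · have hempty : (G.neighborFinset u).filter (fun y => G.Adj y w) = ∅ := by
        rw [Finset.filter_eq_empty_iff]
        intro y hy
        rw [mem_neighborFinset] at hy
        exact fun hyw => hs_no_tri hgirth hy hyw hadj.symm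
      simp [hcard, hempty, hadj, Matrix.one_apply_ne huw]
    · obtain ⟨y₀, hy₀⟩ := hs_common hconn hdiam huw hadj
      have hone : (G.neighborFinset u).filter (fun y => G.Adj y w) = {y₀} := by
        apply Finset.eq_singleton_iff_unique_mem.mpr
        refine ⟨by simp [mem_neighborFinset, hy₀.1, hy₀.2], ?_⟩
        intro y hy
        simp only [Finset.mem_filter, mem_neighborFinset] at hy
        by_contra hne
        exact hs_no_sq hgirth huw hne hy.1 hy.2 hy₀.2.symm hy₀.1.symm
      simp [hcard, hone, hadj, Matrix.one_apply_ne huw]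

end HS

set_option maxHeartbeats 2000000

/-- **Hoffman–Singleton theorem.** If a finite connected `d`-regular simple graph on `n`
vertices has diameter `2` and girth `5`, then `n = d² + 1` and `d ∈ {2, 3, 7, 57}`. -/
theorem stmt_11 {V : Type*} [Fintype V] (G : SimpleGraph V) [DecidableRel G.Adj]
    (d : ℕ) (hconn : G.Connected) (hreg : G.IsRegularOfDegree d)
    (hdiam : G.diam = 2) (hgirth : G.egirth = 5) :
    Fintype.card V = d ^ 2 + 1 ∧ (d = 2 ∨ d = 3 ∨ d = 7 ∨ d = 57) := by
  classical
  have hNT : Nontrivial V := nontrivial_of_diam_ne_zero (G := G) (by omega)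
  have hd2 : 2 ≤ d := hs_d_ge_two hconn hreg hdiam
  set A : Matrix V V ℝ := G.adjMatrix ℝ with hAdef
  set Jm : Matrix V V ℝ := Matrix.of (fun _ _ => (1 : ℝ)) with hJmdef
  set Rm : Matrix V V ℝ := ((d : ℝ) - 1) • (1 : Matrix V V ℝ) + Jm with hRmdef
  have hM : A * A + A = Rm := hs_matrix hconn hreg hdiam hgirth
  -- row and column sums
  have hrowA : ∀ v : V, ∑ y, A v y = (d : ℝ) := by
    intro v
    simp only [hAdef, adjMatrix_apply, Finset.sum_boole]
    rw [← neighborFinset_eq_filter]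
    exact_mod_cast congrArg Nat.cast (hreg v)
  have hcolA : ∀ y : V, ∑ x, A x y = (d : ℝ) := by
    intro y
    rw [← hrowA y]
    exact Finset.sum_congr rfl fun x _ => by simp [hAdef, adjMatrix_apply, adj_comm]
  -- cardinality
  set n : ℕ := Fintype.card V with hndef
  have hcardR : (n : ℝ) = (d : ℝ)^2 + 1 := by
    obtain ⟨v₀⟩ := (inferInstance : Nonempty V)
    have hrow : ∑ y, (A * A + A) v₀ y = ∑ y, Rm v₀ y := by rw [hM]
    have hL : ∑ y, (A * A + A) v₀ y = (d : ℝ) * d + d := by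
      simp only [Matrix.add_apply, Finset.sum_add_distrib, hrowA v₀, Matrix.mul_apply]
      rw [Finset.sum_comm]
      congr 1
      calc ∑ z, ∑ y, A v₀ z * A z y = ∑ z, A v₀ z * ∑ y, A z y := by
            simp_rw [Finset.mul_sum]
        _ = ∑ z, A v₀ z * d := Finset.sum_congr rfl fun z _ => by rw [hrowA z]
        _ = (∑ z, A v₀ z) * d := by rw [Finset.sum_mul]
        _ = (d : ℝ) * d := by rw [hrowA v₀]
    have hR : ∑ y, Rm v₀ y = ((d : ℝ) - 1) + n := by
      simp only [hRmdef, hJmdef, Matrix.add_apply, Matrix.smul_apply, Matrix.of_apply,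
        smul_eq_mul, Finset.sum_add_distrib, Finset.sum_const, Finset.card_univ,
        nsmul_eq_mul, mul_one]
      rw [← Finset.mul_sum]
      simp [Matrix.one_apply, hndef]
    rw [hL, hR] at hrow
    linarith
  have hcard : n = d ^ 2 + 1 := by exact_mod_cast hcardR
  refine ⟨hcard, ?_⟩
  -- spectral part
  have hA : A.IsHermitian := by
    ext i j
    simp [hAdef, Matrix.conjTranspose_apply, adjMatrix_apply, adj_comm]
  set eig : V → ℝ := hA.eigenvalues with heig
  set U : Matrix V V ℝ := (hA.eigenvectorUnitary : Matrix V V ℝ) with hUdef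
  set D : Matrix V V ℝ := Matrix.diagonal (RCLike.ofReal ∘ hA.eigenvalues) with hDdef
  have hU2 : star U * U = 1 := Matrix.mem_unitaryGroup_iff'.mp hA.eigenvectorUnitary.2
  have hDtr : ∀ B : Matrix V V ℝ, Matrix.trace (U * B * star U) = Matrix.trace B := by
    intro B
    rw [Matrix.trace_mul_cycle, hU2, Matrix.one_mul]
  have hspec : A = U * D * star U := hA.spectral_theorem
  have hAtr : Matrix.trace A = 0 := trace_adjMatrix ℝ G
  have htr1 : ∑ i, eig i = 0 := by
    have h1 : Matrix.trace A = 0 := hAtr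
    rw [hspec, hDtr] at h1
    rw [← h1, hDdef, Matrix.trace_diagonal]
    simp [heig]
  have hJtr : Matrix.trace Jm = (n : ℝ) := by
    simp [hJmdef, Matrix.trace, Matrix.diag, hndef]
  have htr2 : ∑ i, (eig i)^2 = (n : ℝ) * d := by
    have e2 : A * A = U * (D * D) * star U := by
      conv_lhs => rw [hspec]
      simp only [Matrix.mul_assoc]
      rw [← Matrix.mul_assoc (star U) U (D * star U), hU2, Matrix.one_mul]
    have h1 : Matrix.trace (A * A) = ∑ i, (eig i)^2 := by
      rw [e2, hDtr, hDdef, Matrix.diagonal_mul_diagonal, Matrix.trace_diagonal]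
      simp [heig, sq]
    have h2 : Matrix.trace (A * A) = (n : ℝ) * d := by
      have h := congrArg Matrix.trace hM
      rw [Matrix.trace_add, hRmdef, Matrix.trace_add, Matrix.trace_smul, Matrix.trace_one,
        hJtr, hAtr, add_zero] at h
      rw [h, smul_eq_mul, ← hndef]
      ring
    rw [← h1, h2]
  have h3 : ∀ j : V, eig j = d ∨ (eig j)^2 + eig j = (d : ℝ) - 1 := by
    intro j
    by_cases hmu : eig j = d
    · exact Or.inl hmu
    right
    set v : V → ℝ := ⇑(hA.eigenvectorBasis j) with hvdef
    have hv : A *ᵥ v = eig j • v := hA.mulVec_eigenvectorBasis j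
    have hvne : v ≠ 0 := by
      intro h
      apply (hA.eigenvectorBasis).toBasis.ne_zero j
      rw [OrthonormalBasis.coe_toBasis]
      ext x
      exact congrFun h x
    obtain ⟨x₀, hx₀⟩ := Function.ne_iff.mp hvne
    have hsv : ∑ x, v x = 0 := by
      have h1 : ∑ x, (A *ᵥ v) x = (d : ℝ) * ∑ x, v x := by
        simp only [Matrix.mulVec, dotProduct]
        rw [Finset.sum_comm]
        calc ∑ y, ∑ x, A x y * v y = ∑ y, (∑ x, A x y) * v y := by
              simp_rw [Finset.sum_mul]
          _ = ∑ y, (d : ℝ) * v y := Finset.sum_congr rfl fun y _ => by rw [hcolA y]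
          _ = (d : ℝ) * ∑ y, v y := by rw [Finset.mul_sum]
      have h2 : ∑ x, (A *ᵥ v) x = eig j * ∑ x, v x := by
        rw [hv]
        simp [Finset.mul_sum]
      have h4 : (eig j - d) * ∑ x, v x = 0 := by
        rw [sub_mul, ← h2, ← h1, sub_self]
      rcases mul_eq_zero.mp h4 with h5 | h5
      · exact absurd (by linarith [h5] : eig j = (d:ℝ)) hmu
      · exact h5
    have key := congrArg (fun M => M *ᵥ v) hM
    have hx := congrFun key x₀
    have hL : ((A * A + A) *ᵥ v) x₀ = ((eig j)^2 + eig j) * v x₀ := by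
      rw [Matrix.add_mulVec, ← Matrix.mulVec_mulVec, hv, Matrix.mulVec_smul, hv]
      simp [sq]
      ring
    have hR : (Rm *ᵥ v) x₀ = ((d : ℝ) - 1) * v x₀ := by
      rw [hRmdef, Matrix.add_mulVec, Matrix.smul_mulVec, Matrix.one_mulVec]
      have hJv : (Jm *ᵥ v) x₀ = 0 := by
        simp [hJmdef, Matrix.mulVec, dotProduct, hsv]
      simp [hJv]
    rw [hL, hR] at hx
    exact mul_right_cancel₀ hx₀ hx
  -- counting multiplicities
  set P : Finset V := Finset.univ.filter (fun i => eig i = (d : ℝ)) with hPdef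
  set S : Finset V := Finset.univ.filter (fun i => ¬ eig i = (d : ℝ)) with hSdef
  have hPS : P.card + S.card = n := by
    rw [hPdef, hSdef, Finset.card_filter_add_card_filter_not]
    rw [Finset.card_univ]
  have hsumP : ∑ i ∈ P, eig i = (P.card : ℝ) * d := by
    rw [Finset.sum_congr rfl (fun i hi => (Finset.mem_filter.mp hi).2), Finset.sum_const]
    rw [nsmul_eq_mul]
  have hsplit1 : ∑ i ∈ P, eig i + ∑ i ∈ S, eig i = 0 := by
    rw [hPdef, hSdef, Finset.sum_filter_add_sum_filter_not, htr1]
  have hsplit2 : ∑ i ∈ P, (eig i)^2 + ∑ i ∈ S, (eig i)^2 = (n : ℝ) * d := by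
    rw [hPdef, hSdef, Finset.sum_filter_add_sum_filter_not, htr2]
  have hsumP2 : ∑ i ∈ P, (eig i)^2 = (P.card : ℝ) * d^2 := by
    rw [Finset.sum_congr rfl (fun i hi => by rw [(Finset.mem_filter.mp hi).2]), Finset.sum_const]
    simp [mul_comm]
  have hSsq : ∑ i ∈ S, (eig i)^2 = (S.card : ℝ) * ((d:ℝ) - 1) - ∑ i ∈ S, eig i := by
    have hh : ∀ i ∈ S, (eig i)^2 = ((d:ℝ) - 1) - eig i := by
      intro i hi
      have := (h3 i).resolve_left (Finset.mem_filter.mp hi).2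
      linarith
    rw [Finset.sum_congr rfl hh, Finset.sum_sub_distrib, Finset.sum_const]
    simp [mul_comm]
  have hScardR : (S.card : ℝ) = (n : ℝ) - P.card := by
    have h := hPS
    push_cast [← h]
    ring
  -- derive P.card = 1
  have hk1 : P.card = 1 := by
    have hSd : ∑ i ∈ S, eig i = -((P.card : ℝ) * d) := by linarith [hsplit1, hsumP]
    have heq : (P.card : ℝ) * d^2 + ((S.card : ℝ) * ((d:ℝ)-1) + (P.card : ℝ) * d)
        = (n : ℝ) * d := by
      have e1 := hsplit2
      rw [hsumP2, hSsq, hSd] at e1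
      linarith
    rw [hScardR, hcardR] at heq
    have hz : ((P.card : ℝ) - 1) * ((d:ℝ)^2 + 1) = 0 := by nlinarith [heq]
    have hd0 : ((d:ℝ)^2 + 1) ≠ 0 := by positivity
    have : (P.card : ℝ) = 1 := by
      rcases mul_eq_zero.mp hz with h | h
      · linarith
      · exact absurd h hd0
    exact_mod_cast this
  -- now the ±√(4d-3) counting
  set c : ℝ := Real.sqrt (4*(d:ℝ) - 3) with hcdef
  have hdR : (2:ℝ) ≤ d := by exact_mod_cast hd2
  have hc2 : c^2 = 4*(d:ℝ) - 3 := Real.sq_sqrt (by linarith)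
  have hcpos : 0 < c := Real.sqrt_pos.mpr (by linarith)
  have hS2 : ∀ i ∈ S, (2 * eig i + 1)^2 = c^2 := by
    intro i hi
    have := (h3 i).resolve_left (Finset.mem_filter.mp hi).2
    rw [hc2]
    nlinarith [this]
  set Q : Finset V := S.filter (fun i => 0 < 2 * eig i + 1) with hQdef
  set R : Finset V := S.filter (fun i => ¬ 0 < 2 * eig i + 1) with hRdef
  have hQR : Q.card + R.card = S.card := by
    rw [hQdef, hRdef, Finset.card_filter_add_card_filter_not]
  have hQval : ∀ i ∈ Q, 2 * eig i + 1 = c := by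
    intro i hi
    obtain ⟨hiS, hipos⟩ := Finset.mem_filter.mp hi
    have h := hS2 i hiS
    rw [sq_eq_sq_iff_abs_eq_abs, abs_of_pos hipos, abs_of_pos hcpos] at h
    exact h
  have hRval : ∀ i ∈ R, 2 * eig i + 1 = -c := by
    intro i hi
    obtain ⟨hiS, hipos⟩ := Finset.mem_filter.mp hi
    have h := hS2 i hiS
    rw [sq_eq_sq_iff_abs_eq_abs, abs_of_pos hcpos,
      abs_of_nonpos (by linarith [not_lt.mp hipos])] at h
    linarith
  have hsumS : ∑ i ∈ S, (2 * eig i + 1) = c * ((Q.card : ℝ) - R.card) := by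
    rw [← Finset.sum_filter_add_sum_filter_not S (fun i => 0 < 2 * eig i + 1)]
    rw [Finset.sum_congr rfl (fun i hi => hQval i hi),
      Finset.sum_congr rfl (fun i hi => hRval i hi)]
    simp only [Finset.sum_const, nsmul_eq_mul, ← hQdef, ← hRdef]
    ring
  have hsumS' : ∑ i ∈ S, (2 * eig i + 1) = (d:ℝ)^2 - 2*d := by
    have hSd : ∑ i ∈ S, eig i = -((1 : ℝ) * d) := by
      rw [hk1] at hsumP
      push_cast at hsumP
      linarith [hsplit1, hsumP]
    have hScard2 : (S.card : ℝ) = (d:ℝ)^2 := by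
      rw [hScardR, hcardR, hk1]
      push_cast
      ring
    calc ∑ i ∈ S, (2 * eig i + 1) = 2 * ∑ i ∈ S, eig i + (S.card : ℝ) := by
          rw [Finset.sum_add_distrib, ← Finset.mul_sum, Finset.sum_const, nsmul_eq_mul, mul_one]
      _ = (d:ℝ)^2 - 2*d := by rw [hSd, hScard2]; ring
  have hfin : c * ((Q.card : ℝ) - R.card) = (d:ℝ)^2 - 2*d := by
    rw [← hsumS, hsumS']
  have hZ : (4*(d:ℤ) - 3) * ((Q.card : ℤ) - (R.card : ℤ))^2 = ((d:ℤ)^2 - 2*(d:ℤ))^2 := by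
    have hsq2 := congrArg (fun x : ℝ => x^2) hfin
    simp only [mul_pow] at hsq2
    rw [hc2] at hsq2
    have : ((4*(d:ℝ) - 3)) * (((Q.card:ℝ)) - (R.card:ℝ))^2 = ((d:ℝ)^2 - 2*(d:ℝ))^2 := hsq2
    exact_mod_cast this
  rcases hs_nt (d:ℤ) ((Q.card : ℤ) - (R.card : ℤ)) (by exact_mod_cast hd2) hZ
    with h | h | h | h <;> omega
end

section
/- Let X be a finite connected simple graph with chromatic number χ and largest adjacency eigenvalue α_max. Then χ ≤ 1 + α_max (as real numbers). -/
open Matrix Finset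


lemma rayleigh_bound {n : Type*} [Fintype n] [DecidableEq n] {A : Matrix n n ℝ}
    (hA : A.IsHermitian) {α : ℝ} (h : ∀ i, hA.eigenvalues i ≤ α) (x : n → ℝ) :
    x ⬝ᵥ (A *ᵥ x) ≤ α * (x ⬝ᵥ x) := by
  classical
  set U : Matrix n n ℝ := (hA.eigenvectorUnitary : Matrix n n ℝ) with hU
  have hmem := hA.eigenvectorUnitary.2
  have hUU : U * star U = 1 := (Matrix.mem_unitaryGroup_iff).mp hmem
  set y : n → ℝ := star U *ᵥ x with hy
  have hsU : star U = Uᵀ := by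
    rw [Matrix.star_eq_conjTranspose, Matrix.conjTranspose_eq_transpose_of_trivial]
  have hswap : ∀ z : n → ℝ, y ⬝ᵥ z = x ⬝ᵥ (U *ᵥ z) := by
    intro z
    rw [hy, hsU, Matrix.mulVec_transpose, ← dotProduct_mulVec]
  have hAx : x ⬝ᵥ (A *ᵥ x) = y ⬝ᵥ ((Matrix.diagonal hA.eigenvalues) *ᵥ y) := by
    conv_lhs => rw [hA.spectral_theorem, Unitary.conjStarAlgAut_apply]
    have hco : (RCLike.ofReal ∘ hA.eigenvalues : n → ℝ) = hA.eigenvalues := by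
      ext i; simp
    rw [hco, ← Matrix.mulVec_mulVec, ← Matrix.mulVec_mulVec, ← hswap]
  have hxx : x ⬝ᵥ x = y ⬝ᵥ y := by
    rw [hswap, hy, Matrix.mulVec_mulVec, hUU, Matrix.one_mulVec]
  rw [hAx, hxx]
  have hdiag : y ⬝ᵥ ((Matrix.diagonal hA.eigenvalues) *ᵥ y)
      = ∑ i, hA.eigenvalues i * (y i * y i) := by
    simp [dotProduct, Matrix.mulVec_diagonal]
    exact Finset.sum_congr rfl fun i _ => by ring
  rw [hdiag]
  have : α * (y ⬝ᵥ y) = ∑ i, α * (y i * y i) := by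
    simp [dotProduct, Finset.mul_sum]
  rw [this]
  exact Finset.sum_le_sum fun i _ => by nlinarith [mul_self_nonneg (y i), h i]


lemma hasEig {n : Type*} [Fintype n] [DecidableEq n] {A : Matrix n n ℝ}
    (hA : A.IsHermitian) (i : n) :
    Module.End.HasEigenvalue (Matrix.toLin' A) (hA.eigenvalues i) := by
  apply Module.End.hasEigenvalue_of_hasEigenvector (x := ⇑(hA.eigenvectorBasis i))
  constructor
  · rw [Module.End.mem_eigenspace_iff, Matrix.toLin'_apply, hA.mulVec_eigenvectorBasis]
  · intro hzero
    refine hA.eigenvectorBasis.toBasis.ne_zero i ?_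
    rw [OrthonormalBasis.coe_toBasis]
    exact (WithLp.equiv 2 _).injective (by simpa using hzero)


lemma crit_set {V : Type*} [Fintype V] [DecidableEq V] (G : SimpleGraph V)
    [DecidableRel G.Adj] {m : ℕ} (hm : 0 < m) (hcol : ¬ G.Colorable m) :
    ∃ s : Finset V, s.Nonempty ∧ ∀ v ∈ s, m ≤ (s.filter (G.Adj v)).card := by
  classical
  set P : Finset V → Prop :=
    fun s => ∃ C : V → Fin m, ∀ u ∈ s, ∀ v ∈ s, G.Adj u v → C u ≠ C v with hP
  have hPuniv : ¬ P Finset.univ := by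
    rintro ⟨C, hC⟩
    exact hcol ⟨SimpleGraph.Coloring.mk C fun hadj =>
      hC _ (Finset.mem_univ _) _ (Finset.mem_univ _) hadj⟩
  have hQ : ∃ n, ∃ s : Finset V, s.card = n ∧ ¬ P s :=
    ⟨Finset.univ.card, Finset.univ, rfl, hPuniv⟩
  obtain ⟨s, hcard, hs⟩ := Nat.find_spec hQ
  have hmin : ∀ t : Finset V, t.card < Nat.find hQ → P t := by
    intro t ht
    by_contra h
    exact Nat.find_min hQ (hcard ▸ (hcard ▸ ht)) ⟨t, rfl, h⟩
  have hne : s.Nonempty := by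
    rcases Finset.eq_empty_or_nonempty s with rfl | h
    · exact absurd ⟨fun _ => ⟨0, hm⟩, by simp⟩ hs
    · exact h
  refine ⟨s, hne, fun v hv => ?_⟩
  by_contra hdeg
  push_neg at hdeg
  have herase : (s.erase v).card < Nat.find hQ := by
    rw [← hcard]
    exact Finset.card_erase_lt_of_mem hv
  obtain ⟨C, hC⟩ := hmin _ herase
  set N : Finset V := (s.erase v).filter (G.Adj v) with hN
  have hNsub : N ⊆ s.filter (G.Adj v) :=
    Finset.filter_subset_filter _ (Finset.erase_subset _ _)
  have hNcard : (N.image C).card < m :=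
    lt_of_le_of_lt (Finset.card_image_le) (lt_of_le_of_lt (Finset.card_le_card hNsub) hdeg)
  have : ∃ c : Fin m, c ∉ N.image C := by
    by_contra h
    push_neg at h
    have : (Finset.univ : Finset (Fin m)) ⊆ N.image C := fun c _ => h c
    have := Finset.card_le_card this
    simp at this
    omega
  obtain ⟨c, hc⟩ := this
  apply hs
  refine ⟨Function.update C v c, fun u hu w hw hadj => ?_⟩
  have hCv : ∀ w ∈ s, w ≠ v → G.Adj v w → Function.update C v c w ≠ c := by
    intro w hw hwv hadj
    have hwN : w ∈ N := Finset.mem_filter.mpr ⟨Finset.mem_erase.mpr ⟨hwv, hw⟩, hadj⟩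
    rw [Function.update_of_ne hwv]
    exact fun h => hc (h ▸ Finset.mem_image_of_mem C hwN)
  by_cases huv : u = v <;> by_cases hwv : w = v
  · rw [huv, hwv] at hadj; exact absurd hadj (G.loopless.irrefl v)
  · rw [huv, Function.update_self]
    exact fun h => (hCv w hw hwv (huv ▸ hadj)) h.symm
  · rw [hwv, Function.update_self]
    exact fun h => hCv u hu huv (hwv ▸ hadj.symm) h
  · rw [Function.update_of_ne huv, Function.update_of_ne hwv]
    exact hC u (Finset.mem_erase.mpr ⟨huv, hu⟩) w (Finset.mem_erase.mpr ⟨hwv, hw⟩) hadj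

/-- **Wilf's bound.** For a finite connected simple graph, the chromatic number satisfies
`χ ≤ 1 + α_max`, where `α_max` is the largest adjacency eigenvalue. -/
theorem stmt_15 {V : Type*} [Fintype V] [DecidableEq V] (G : SimpleGraph V)
    [DecidableRel G.Adj] (hconn : G.Connected)
    (αmax : ℝ)
    (hmax : IsGreatest {μ : ℝ | Module.End.HasEigenvalue (Matrix.toLin' (G.adjMatrix ℝ)) μ}
      αmax) :
    (G.chromaticNumber.toNat : ℝ) ≤ 1 + αmax := by
  classical
  haveI : Nonempty V := hconn.nonempty
  set A : Matrix V V ℝ := G.adjMatrix ℝ with hAdef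
  have hA : A.IsHermitian := by
    rw [Matrix.IsHermitian, Matrix.conjTranspose_eq_transpose_of_trivial]
    exact G.isSymm_adjMatrix
  have hle : ∀ i, hA.eigenvalues i ≤ αmax := fun i => hmax.2 (hasEig hA i)
  have key : ∀ x : V → ℝ, x ⬝ᵥ (A *ᵥ x) ≤ αmax * (x ⬝ᵥ x) := rayleigh_bound hA hle
  -- indicator-vector computation for any Finset s
  have indic : ∀ s : Finset V,
      (∑ u ∈ s, ((s.filter (G.Adj u)).card : ℝ)) ≤ αmax * s.card := by
    intro s
    set x : V → ℝ := fun v => if v ∈ s then 1 else 0 with hx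
    have hxx : x ⬝ᵥ x = (s.card : ℝ) := by
      simp [dotProduct, hx, ite_and]
    have hAx : x ⬝ᵥ (A *ᵥ x) = ∑ u ∈ s, ((s.filter (G.Adj u)).card : ℝ) := by
      simp only [dotProduct, Matrix.mulVec, hx, ite_mul, one_mul, zero_mul,
        Finset.sum_ite_mem, Finset.univ_inter]
      refine Finset.sum_congr rfl fun u hu => ?_
      simp only [dotProduct, mul_ite, mul_one, mul_zero, Finset.sum_ite_mem,
        Finset.univ_inter, hAdef, SimpleGraph.adjMatrix_apply]
      rw [Finset.sum_boole]
    have := key x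
    rwa [hAx, hxx] at this
  have h0 : 0 ≤ αmax := by
    have h1 := indic Finset.univ
    have h2 : (0:ℝ) ≤ ∑ u ∈ Finset.univ, (((Finset.univ.filter (G.Adj u)).card : ℝ)) :=
      Finset.sum_nonneg fun u _ => Nat.cast_nonneg _
    have hcard : (0:ℝ) < (Finset.univ : Finset V).card := by
      have := Finset.univ_nonempty (α := V)
      exact_mod_cast Finset.card_pos.mpr this
    nlinarith
  set k := G.chromaticNumber.toNat with hk
  rcases le_or_gt k 1 with hk1 | hk1
  · have : (k : ℝ) ≤ 1 := by exact_mod_cast hk1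
    linarith
  · set m := k - 1 with hm
    have hm0 : 0 < m := by omega
    have hNcol : ¬ G.Colorable m := by
      intro hc
      have h1 := hc.chromaticNumber_le
      have hmtop : (m : ℕ∞) < ⊤ := ENat.coe_lt_top m
      have hfin : G.chromaticNumber ≠ ⊤ := (h1.trans_lt hmtop).ne
      rw [← ENat.coe_toNat hfin] at h1
      have : k ≤ m := by exact_mod_cast h1
      omega
    obtain ⟨s, hsne, hdeg⟩ := crit_set G hm0 hNcol
    have hlow : (m : ℝ) * s.card ≤ ∑ u ∈ s, ((s.filter (G.Adj u)).card : ℝ) := by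
      calc (m : ℝ) * s.card = ∑ _u ∈ s, (m : ℝ) := by
            rw [Finset.sum_const, nsmul_eq_mul, mul_comm]
        _ ≤ _ := Finset.sum_le_sum fun u hu => by exact_mod_cast hdeg u hu
    have hcard : (0:ℝ) < s.card := by exact_mod_cast Finset.card_pos.mpr hsne
    have hfin : (m : ℝ) ≤ αmax := by
      have := (hlow.trans (indic s))
      nlinarith
    have : (k : ℝ) = (m : ℝ) + 1 := by
      have : k = m + 1 := by omega
      exact_mod_cast this
    linarith
end

section
/- Let X be a finite connected simple graph with at least 2 vertices, with chromatic number χ, largest adjacency eigenvalue α_max, and smallest adjacency eigenvalue α_min (which is negative). Then χ ≥ 1 + α_max/(−α_min). -/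
open Matrix Finset in
private lemma hoffman_delta_sum {k : ℕ} (a d : Fin k) :
    ∑ j : Fin k, (((if a = j then (1:ℝ) else 0) - 1/k) * ((if d = j then (1:ℝ) else 0) - 1/k))
      = (if a = d then 1 else 0) - 1/k := by
  have hk : (k : ℝ) ≠ 0 := by
    have : 0 < k := a.pos
    positivity
  have expand : ∀ j : Fin k,
      (((if a = j then (1:ℝ) else 0) - 1/k) * ((if d = j then (1:ℝ) else 0) - 1/k))
      = (if a = j then (1:ℝ) else 0) * (if d = j then (1:ℝ) else 0)
        - (1/k) * (if a = j then (1:ℝ) else 0) - (1/k) * (if d = j then (1:ℝ) else 0)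
        + (1/k) * (1/k) := by
    intro j; ring
  rw [Finset.sum_congr rfl fun j _ => expand j]
  rw [Finset.sum_add_distrib, Finset.sum_sub_distrib, Finset.sum_sub_distrib,
    ← Finset.mul_sum, ← Finset.mul_sum]
  have h1 : ∑ j : Fin k, ((if a = j then (1:ℝ) else 0) * (if d = j then (1:ℝ) else 0))
      = if a = d then 1 else 0 := by
    simp only [ite_mul, one_mul, zero_mul]
    rw [Finset.sum_ite_eq]
    simp [eq_comm]
  have h2 : ∑ j : Fin k, (if a = j then (1:ℝ) else 0) = 1 := by
    rw [Finset.sum_ite_eq]; simp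
  have h3 : ∑ j : Fin k, (if d = j then (1:ℝ) else 0) = 1 := by
    rw [Finset.sum_ite_eq]; simp
  rw [h1, h2, h3, Finset.sum_const, Finset.card_univ, Fintype.card_fin]
  field_simp
  rw [nsmul_eq_mul]
  have hkk : (k:ℝ) * ((k:ℝ) * (1 / (k:ℝ)^2)) = 1 := by
    rw [mul_one_div, ← mul_div_assoc, ← sq, div_self (pow_ne_zero 2 hk)]
  linarith

open Matrix Finset in
private lemma hoffman_rayleigh {V : Type*} [Fintype V] [DecidableEq V] {A : Matrix V V ℝ}
    (hA : A.IsHermitian) {c C : ℝ}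
    (hc : ∀ i, c ≤ hA.eigenvalues i) (hC : ∀ i, hA.eigenvalues i ≤ C) (z : V → ℝ) :
    c * (z ⬝ᵥ z) ≤ z ⬝ᵥ (A *ᵥ z) ∧ z ⬝ᵥ (A *ᵥ z) ≤ C * (z ⬝ᵥ z) := by
  classical
  set b := hA.eigenvectorBasis with hb
  set μ := hA.eigenvalues with hμ
  have hsymm : Aᵀ = A := by
    have := hA
    rwa [Matrix.IsHermitian, Matrix.conjTranspose_eq_transpose_of_trivial] at this
  let zE : EuclideanSpace ℝ V := WithLp.toLp 2 z
  let yE : EuclideanSpace ℝ V := WithLp.toLp 2 (A *ᵥ z)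
  have hinner : ∀ (w1 w2 : EuclideanSpace ℝ V), (inner ℝ w1 w2 : ℝ) = (w1 : V → ℝ) ⬝ᵥ (w2 : V → ℝ) := by
    intro w1 w2
    simp [PiLp.inner_apply, dotProduct, RCLike.inner_apply, mul_comm]
  have hbz : ∀ i, (inner ℝ (b i) yE : ℝ) = μ i * (inner ℝ (b i) zE : ℝ) := by
    intro i
    rw [hinner, hinner]
    change ((b i : EuclideanSpace ℝ V) : V → ℝ) ⬝ᵥ (A *ᵥ z) = μ i * (((b i : EuclideanSpace ℝ V) : V → ℝ) ⬝ᵥ z)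
    have : ((b i : EuclideanSpace ℝ V) : V → ℝ) ⬝ᵥ (A *ᵥ z) = (A *ᵥ ((b i : EuclideanSpace ℝ V) : V → ℝ)) ⬝ᵥ z := by
      rw [Matrix.dotProduct_mulVec, ← Matrix.mulVec_transpose, hsymm]
    have h2 : A *ᵥ ((b i : EuclideanSpace ℝ V) : V → ℝ) = μ i • ((b i : EuclideanSpace ℝ V) : V → ℝ) :=
      hA.mulVec_eigenvectorBasis i
    rw [this, h2, smul_dotProduct]
    simp
  have hform : z ⬝ᵥ (A *ᵥ z) = ∑ i, μ i * (inner ℝ (b i) zE : ℝ)^2 := by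
    rw [← hinner zE yE, ← b.sum_inner_mul_inner zE yE]
    refine Finset.sum_congr rfl fun i _ => ?_
    rw [hbz i, real_inner_comm zE (b i)]
    ring
  have hnorm : z ⬝ᵥ z = ∑ i, (inner ℝ (b i) zE : ℝ)^2 := by
    rw [← hinner zE zE, ← b.sum_inner_mul_inner zE zE]
    refine Finset.sum_congr rfl fun i _ => ?_
    rw [real_inner_comm zE (b i)]
    ring
  constructor
  · rw [hform, hnorm, Finset.mul_sum]
    exact Finset.sum_le_sum fun i _ => by nlinarith [sq_nonneg (inner ℝ (b i) zE : ℝ), hc i]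
  · rw [hform, hnorm, Finset.mul_sum]
    exact Finset.sum_le_sum fun i _ => by nlinarith [sq_nonneg (inner ℝ (b i) zE : ℝ), hC i]

open Matrix Finset in
/-- **Hoffman's bound.** For a finite connected simple graph with at least two vertices, with
largest adjacency eigenvalue `α_max` and smallest adjacency eigenvalue `α_min` (which is
negative), the chromatic number satisfies `χ ≥ 1 + α_max / (-α_min)`. -/
theorem stmt_16 {V : Type*} [Fintype V] [DecidableEq V] (G : SimpleGraph V)
    [DecidableRel G.Adj] (hconn : G.Connected) (hn : 2 ≤ Fintype.card V)
    (αmax αmin : ℝ)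
    (hmax : IsGreatest {μ : ℝ | Module.End.HasEigenvalue (Matrix.toLin' (G.adjMatrix ℝ)) μ}
      αmax)
    (hmin : IsLeast {μ : ℝ | Module.End.HasEigenvalue (Matrix.toLin' (G.adjMatrix ℝ)) μ}
      αmin) :
    αmin < 0 ∧ 1 + αmax / (-αmin) ≤ (G.chromaticNumber.toNat : ℝ) := by
  classical
  set A := G.adjMatrix ℝ with hAdef
  have hA : A.IsHermitian := by
    rw [Matrix.IsHermitian, Matrix.conjTranspose_eq_transpose_of_trivial]
    exact G.isSymm_adjMatrix
  -- each eigenvalue of `hA` is an eigenvalue of `toLin' A`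
  have hev : ∀ i, Module.End.HasEigenvalue (Matrix.toLin' A) (hA.eigenvalues i) := by
    intro i
    refine Module.End.hasEigenvalue_of_hasEigenvector
      (x := ((hA.eigenvectorBasis i : EuclideanSpace ℝ V) : V → ℝ)) ⟨?_, ?_⟩
    · rw [Module.End.mem_eigenspace_iff, Matrix.toLin'_apply]
      exact hA.mulVec_eigenvectorBasis i
    · exact fun h => hA.eigenvectorBasis.orthonormal.ne_zero i (by simpa using h)
  have hlb : ∀ i, αmin ≤ hA.eigenvalues i := fun i => hmin.2 (hev i)
  have hub : ∀ i, hA.eigenvalues i ≤ αmax := fun i => hmax.2 (hev i)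
  -- get an edge
  obtain ⟨u, v0, huv0⟩ := Fintype.exists_pair_of_one_lt_card (by omega : 1 < Fintype.card V)
  obtain ⟨w⟩ := hconn.preconnected u v0
  have hadj : G.Adj u (w.getVert 1) := w.adj_snd (SimpleGraph.Walk.not_nil_of_ne huv0)
  set v := w.getVert 1 with hv
  have hne : u ≠ v := G.ne_of_adj hadj
  -- αmax ≥ 1
  have hαmax1 : (1:ℝ) ≤ αmax := by
    set wv := (Pi.single u (1:ℝ) + Pi.single v 1 : V → ℝ) with hwv
    have h := (hoffman_rayleigh hA hlb hub wv).2
    have e1 : wv ⬝ᵥ (A *ᵥ wv) = 2 := by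
      simp [hwv, Matrix.mulVec_add, dotProduct_add, add_dotProduct,
        Matrix.mulVec_single, single_dotProduct, hAdef, hadj, hadj.symm,
        hne, hne.symm]
      norm_num
    have e2 : wv ⬝ᵥ wv = 2 := by
      simp [hwv, dotProduct_add, add_dotProduct,
        single_dotProduct, dotProduct_single, Pi.single_apply, hne, hne.symm]
      norm_num
    rw [e1, e2] at h
    linarith
  -- the chromatic number and a coloring
  set k := G.chromaticNumber.toNat with hk
  have hcol : G.Colorable k := G.colorable_chromaticNumber_of_fintype
  let C : G.Coloring (Fin k) := hcol.some
  have hk2 : 2 ≤ k := by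
    have h1 : C u ≠ C v := C.valid hadj
    have : Nontrivial (Fin k) := ⟨⟨C u, C v, h1⟩⟩
    have h2 := Fintype.one_lt_card_iff_nontrivial.2 this
    simp at h2; omega
  -- the top eigenvector
  obtain ⟨x, hx⟩ := hmax.1.exists_hasEigenvector
  have hx0 : x ≠ 0 := hx.2
  have hxA : A *ᵥ x = αmax • x := by
    rw [← Matrix.toLin'_apply]; exact hx.apply_eq_smul
  set X := x ⬝ᵥ x with hXdef
  have hXnn : 0 ≤ X := Finset.sum_nonneg fun i _ => mul_self_nonneg _
  have hX : 0 < X :=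
    hXnn.lt_of_ne (Ne.symm (fun h => hx0 (dotProduct_self_eq_zero.1 h)))
  -- the auxiliary vectors
  set cc : ℝ := (k : ℝ) with hcc
  set f : Fin k → Fin k → ℝ := fun a j => (if a = j then 1 else 0) - 1/cc with hf
  set z : Fin k → V → ℝ := fun j p => f (C p) j * x p with hz
  have hfsum : ∀ a d : Fin k, ∑ j, f a j * f d j = (if a = d then 1 else 0) - 1/cc :=
    fun a d => hoffman_delta_sum a d
  have hdot : ∀ y : V → ℝ, y ⬝ᵥ (A *ᵥ y) = ∑ p, ∑ q, A p q * (y p * y q) := by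
    intro y
    simp only [dotProduct, Matrix.mulVec, Finset.mul_sum]
    exact Finset.sum_congr rfl fun p _ => Finset.sum_congr rfl fun q _ => by ring
  have hS2 : ∑ j, (z j ⬝ᵥ z j) = (1 - 1/cc) * X := by
    have h1 : ∀ j, z j ⬝ᵥ z j = ∑ p, (f (C p) j * f (C p) j) * (x p * x p) := by
      intro j
      simp only [dotProduct, hz]
      exact Finset.sum_congr rfl fun p _ => by ring
    rw [Finset.sum_congr rfl fun j _ => h1 j, Finset.sum_comm]
    have h2 : ∀ p : V, ∑ j, (f (C p) j * f (C p) j) * (x p * x p)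
        = (1 - 1/cc) * (x p * x p) := by
      intro p
      rw [← Finset.sum_mul, hfsum]
      simp
    rw [Finset.sum_congr rfl fun p _ => h2 p, ← Finset.mul_sum]
    rfl
  have hzsum : ∀ p q : V, ∑ j, z j p * z j q
      = ((if C p = C q then 1 else 0) - 1/cc) * (x p * x q) := by
    intro p q
    calc ∑ j, z j p * z j q = (∑ j, f (C p) j * f (C q) j) * (x p * x q) := by
          rw [Finset.sum_mul]; exact Finset.sum_congr rfl fun j _ => by ring
      _ = _ := by rw [hfsum]
  have hAdelta : ∀ p q : V, (A p q) * ((if C p = C q then 1 else 0) - 1/cc)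
      = A p q * (-(1/cc)) := by
    intro p q
    by_cases h : G.Adj p q
    · have hCpq : C p ≠ C q := C.valid h
      simp [hCpq]
    · simp [hAdef, h]
  have hAx : x ⬝ᵥ (A *ᵥ x) = αmax * X := by
    rw [hxA, dotProduct_smul]; simp [hXdef]
  have hS1 : ∑ j, (z j ⬝ᵥ (A *ᵥ z j)) = -(1/cc) * (αmax * X) := by
    have h1 : ∑ j, (z j ⬝ᵥ (A *ᵥ z j)) = ∑ p, ∑ q, A p q * (∑ j, z j p * z j q) := by
      rw [Finset.sum_congr rfl fun j (_ : j ∈ Finset.univ) => hdot (z j), Finset.sum_comm]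
      refine Finset.sum_congr rfl fun p _ => ?_
      rw [Finset.sum_comm]
      exact Finset.sum_congr rfl fun q _ => (Finset.mul_sum _ _ _).symm
    have h2 : ∀ p q : V, A p q * (∑ j, z j p * z j q)
        = -(1/cc) * (A p q * (x p * x q)) := by
      intro p q
      rw [hzsum, ← mul_assoc, hAdelta]
      ring
    rw [h1, Finset.sum_congr rfl fun p _ => Finset.sum_congr rfl fun q _ => h2 p q]
    simp only [← Finset.mul_sum]
    rw [← hdot x, hAx]
  have hineq : αmin * ((1 - 1/cc) * X) ≤ -(1/cc) * (αmax * X) := by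
    rw [← hS2, ← hS1, Finset.mul_sum]
    exact Finset.sum_le_sum fun j _ => (hoffman_rayleigh hA hlb hub (z j)).1
  have hcc2 : (2:ℝ) ≤ cc := by rw [hcc]; exact_mod_cast hk2
  have hcc0 : (0:ℝ) < cc := by linarith
  have ht : (1/cc) * cc = 1 := by field_simp
  have hkey : αmax ≤ (cc - 1) * (-αmin) := by
    have h4 := mul_le_mul_of_nonneg_right hineq hcc0.le
    have e : αmin * ((1 - 1/cc) * X) * cc = αmin * ((cc - 1) * X) := by
      field_simp
    have e2 : -(1/cc) * (αmax * X) * cc = -(αmax * X) := by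
      field_simp
    rw [e, e2] at h4
    nlinarith [hX, h4]
  have hminneg : αmin < 0 := by nlinarith [hαmax1, hkey, hcc2]
  refine ⟨hminneg, ?_⟩
  have hdivle : αmax / (-αmin) ≤ cc - 1 :=
    (div_le_iff₀ (by linarith : (0:ℝ) < -αmin)).2 (by nlinarith [hkey])
  linarith
end

section
/- Let X be a finite connected simple graph on n ≥ 2 vertices and let λ₂ be the second-smallest eigenvalue (with multiplicity) of its Laplacian matrix. Then for every vertex subset S with 0 < |S| ≤ n/2 one has |∂S| ≥ (λ₂/2)·|S|; consequently the isoperimetric constant satisfies β ≥ λ₂/2. -/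
open Matrix Finset
open scoped InnerProductSpace

lemma key {V : Type*} [Fintype V] [DecidableEq V] (A : Matrix V V ℝ)
    (hA : A.IsHermitian) (μ : ℝ) (i0 : V)
    (hμ : ∀ j, j ≠ i0 → μ ≤ hA.eigenvalues j)
    (x : EuclideanSpace ℝ V) (hx : ⟪(hA.eigenvectorBasis i0), x⟫_ℝ = 0) :
    μ * ⟪x, x⟫_ℝ ≤ ⟪x, (WithLp.toLp 2 (A *ᵥ x) : EuclideanSpace ℝ V)⟫_ℝ := by
  have h1 : ∀ u v : EuclideanSpace ℝ V, ⟪u, v⟫_ℝ = (u : V → ℝ) ⬝ᵥ (v : V → ℝ) := by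
    intro u v
    simp [PiLp.inner_apply, dotProduct, RCLike.inner_apply, mul_comm]
  have hA' : Aᵀ = A := by simpa [Matrix.IsHermitian] using hA
  have hxy : ∀ j, ⟪(hA.eigenvectorBasis j), (WithLp.toLp 2 (A *ᵥ x) : EuclideanSpace ℝ V)⟫_ℝ
      = hA.eigenvalues j * ⟪(hA.eigenvectorBasis j), x⟫_ℝ := by
    intro j
    rw [h1, h1, WithLp.ofLp_toLp, dotProduct_mulVec]
    have hsym : ∀ v : V → ℝ, v ᵥ* A = A *ᵥ v := by
      intro v
      conv_lhs => rw [← hA']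
      rw [vecMul_transpose]
    have h3 : (hA.eigenvectorBasis j : V → ℝ) ᵥ* A
        = hA.eigenvalues j • (hA.eigenvectorBasis j : V → ℝ) :=
      (hsym _).trans (hA.mulVec_eigenvectorBasis j)
    rw [h3, smul_dotProduct]
    rfl
  rw [← (hA.eigenvectorBasis).sum_inner_mul_inner x x,
    ← (hA.eigenvectorBasis).sum_inner_mul_inner x (WithLp.toLp 2 (A *ᵥ x) : EuclideanSpace ℝ V), Finset.mul_sum]
  refine Finset.sum_le_sum fun j _ => ?_
  rw [hxy j]
  rcases eq_or_ne j i0 with rfl | hj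
  · simp [hx]
  · have h2 : ⟪x, (hA.eigenvectorBasis j)⟫_ℝ = ⟪(hA.eigenvectorBasis j), x⟫_ℝ :=
      real_inner_comm _ _
    rw [h2]
    have := hμ j hj
    nlinarith [sq_nonneg (⟪(hA.eigenvectorBasis j), x⟫_ℝ)]


/-- **Alon–Milman bound.** For a finite connected simple graph on `n ≥ 2` vertices with
Laplacian eigenvalues `0 = λ₁ ≤ λ₂ ≤ …` (listed with multiplicity), every vertex subset `S`
with `0 < |S| ≤ n/2` satisfies `|∂S| ≥ (λ₂/2)|S|`; hence the isoperimetric constant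
satisfies `β ≥ λ₂/2`. -/
theorem stmt_17 {V : Type*} [Fintype V] [DecidableEq V] (G : SimpleGraph V)
    [DecidableRel G.Adj] (hconn : G.Connected) (hn : 2 ≤ Fintype.card V)
    (hL : (G.lapMatrix ℝ).IsHermitian)
    (lam : Fin (Fintype.card V) → ℝ) (hmono : Monotone lam)
    (e : Fin (Fintype.card V) ≃ V) (hlam : ∀ i, lam i = hL.eigenvalues (e i))
    (β : ℝ)
    (hβ : IsLeast {r : ℝ | ∃ S : Finset V, S.Nonempty ∧ 2 * S.card ≤ Fintype.card V ∧
        r = ((((S ×ˢ Sᶜ).filter fun p => G.Adj p.1 p.2).card : ℝ) / S.card)} β) :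
    (∀ S : Finset V, S.Nonempty → 2 * S.card ≤ Fintype.card V →
      lam ⟨1, hn⟩ / 2 * S.card ≤ (((S ×ˢ Sᶜ).filter fun p => G.Adj p.1 p.2).card : ℝ)) ∧
    lam ⟨1, hn⟩ / 2 ≤ β := by
  obtain ⟨i0, hi0val⟩ : ∃ i : Fin (Fintype.card V), (i : ℕ) = 0 := ⟨⟨0, by omega⟩, rfl⟩
  -- eigenvalues are nonneg
  have hnn : ∀ j : V, 0 ≤ hL.eigenvalues j := fun j =>
    (SimpleGraph.posSemidef_lapMatrix ℝ G).eigenvalues_nonneg j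
  -- smallest eigenvalue is zero
  have hdet : (G.lapMatrix ℝ).det = 0 := by
    rw [← Matrix.exists_mulVec_eq_zero_iff]
    refine ⟨fun _ => 1, ?_, G.lapMatrix_mulVec_const_eq_zero⟩
    have hne : Nonempty V := Fintype.card_pos_iff.mp (by omega)
    intro h
    exact one_ne_zero (congrFun h (Classical.arbitrary V))
  have hprod : ∏ j : V, hL.eigenvalues j = 0 := by
    have h := hL.det_eq_prod_eigenvalues
    rw [hdet] at h
    exact_mod_cast h.symm
  obtain ⟨j0, -, hj0⟩ := Finset.prod_eq_zero_iff.mp hprod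
  have hlam0 : lam i0 = 0 := by
    have h1 : lam (e.symm j0) = 0 := by rw [hlam]; simpa using hj0
    have h2 : lam i0 ≤ lam (e.symm j0) := hmono (by rw [Fin.le_def, hi0val]; omega)
    have h3 : 0 ≤ lam i0 := by rw [hlam]; exact hnn _
    linarith
  -- the eigenvector for the zero eigenvalue is constant
  have hvec0 : (G.lapMatrix ℝ) *ᵥ (hL.eigenvectorBasis (e i0) : V → ℝ) = 0 := by
    have h := hL.mulVec_eigenvectorBasis (e i0)
    have h0 : hL.eigenvalues (e i0) = 0 := by rw [← hlam]; exact hlam0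
    rw [h0, zero_smul] at h
    exact h
  have hconst : ∀ u w : V, hL.eigenvectorBasis (e i0) u = hL.eigenvectorBasis (e i0) w := by
    have h := (G.lapMatrix_mulVec_eq_zero_iff_forall_reachable
        (x := (hL.eigenvectorBasis (e i0) : V → ℝ))).mp hvec0
    exact fun u w => h u w (hconn.preconnected u w)
  -- comparison for the other eigenvalues
  have hμ : ∀ j : V, j ≠ e i0 → lam ⟨1, hn⟩ ≤ hL.eigenvalues j := by
    intro j hj
    have h1 : lam (e.symm j) = hL.eigenvalues j := by rw [hlam]; simp
    rw [← h1]
    apply hmono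
    have h2 : e.symm j ≠ i0 := by
      intro h
      exact hj (by rw [← h, Equiv.apply_symm_apply])
    rw [Fin.le_def]
    have h3 := Fin.val_ne_of_ne h2
    rw [hi0val] at h3
    simp only [Fin.val_mk]
    omega
  have hlam1nn : 0 ≤ lam ⟨1, hn⟩ := by rw [hlam]; exact hnn _
  have hinner : ∀ u v : EuclideanSpace ℝ V, ⟪u, v⟫_ℝ = ∑ i : V, u i * v i := by
    intro u v
    simp [PiLp.inner_apply, RCLike.inner_apply, mul_comm]
  -- main estimate
  have main : ∀ S : Finset V, S.Nonempty → 2 * S.card ≤ Fintype.card V →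
      lam ⟨1, hn⟩ / 2 * S.card ≤ (((S ×ˢ Sᶜ).filter fun p => G.Adj p.1 p.2).card : ℝ) := by
    intro S hSne hScard
    set nn : ℝ := (Fintype.card V : ℝ) with hnndef
    set s : ℝ := (S.card : ℝ) with hsdef
    set c : ℝ := (((S ×ˢ Sᶜ).filter fun p => G.Adj p.1 p.2).card : ℝ) with hcdef
    have hcard : S.card ≤ Fintype.card V := by omega
    have hcompl : ((Sᶜ.card : ℕ) : ℝ) = nn - s := by
      rw [Finset.card_compl, Nat.cast_sub hcard]
    have hs_pos : 0 < s := by rw [hsdef]; exact_mod_cast hSne.card_pos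
    have h2s : 2 * s ≤ nn := by rw [hsdef, hnndef]; exact_mod_cast hScard
    have hnn_pos : (0:ℝ) < nn := by
      rw [hnndef]
      have : 0 < Fintype.card V := by omega
      exact_mod_cast this
    -- the test vector
    set x : EuclideanSpace ℝ V := WithLp.toLp 2 (fun v => if v ∈ S then nn - s else -s) with hxdef
    have hxS : ∀ v ∈ S, x v = nn - s := fun v hv => by simp [hxdef, hv]
    have hxSc : ∀ v ∈ Sᶜ, x v = -s := fun v hv => by
      rw [Finset.mem_compl] at hv; simp [hxdef, hv]
    -- sum of x is zero
    have hsum0 : ∑ v : V, x v = 0 := by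
      have h1 : ∑ v ∈ S, x v = ∑ _v ∈ S, (nn - s) := Finset.sum_congr rfl hxS
      have h2 : ∑ v ∈ Sᶜ, x v = ∑ _v ∈ Sᶜ, (-s) := Finset.sum_congr rfl hxSc
      rw [← Finset.sum_add_sum_compl S (fun v => x v), h1, h2,
        Finset.sum_const, Finset.sum_const, nsmul_eq_mul, nsmul_eq_mul, hcompl]
      ring
    -- x is orthogonal to the constant eigenvector
    have hx : ⟪(hL.eigenvectorBasis (e i0)), x⟫_ℝ = 0 := by
      obtain ⟨v₀, hv₀⟩ := hSne
      rw [hinner]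
      have : ∀ v : V, hL.eigenvectorBasis (e i0) v * x v
          = hL.eigenvectorBasis (e i0) v₀ * x v := fun v => by rw [hconst v v₀]
      rw [Finset.sum_congr rfl fun v _ => this v, ← Finset.mul_sum, hsum0, mul_zero]
    -- norm of x
    have hxx : ⟪x, x⟫_ℝ = s * (nn - s) * nn := by
      have h1 : ∑ v ∈ S, x v * x v = ∑ _v ∈ S, (nn - s) * (nn - s) :=
        Finset.sum_congr rfl fun v hv => by rw [hxS v hv]
      have h2 : ∑ v ∈ Sᶜ, x v * x v = ∑ _v ∈ Sᶜ, (-s) * (-s) :=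
        Finset.sum_congr rfl fun v hv => by rw [hxSc v hv]
      rw [hinner, ← Finset.sum_add_sum_compl S (fun v => x v * x v), h1, h2,
        Finset.sum_const, Finset.sum_const, nsmul_eq_mul, nsmul_eq_mul, hcompl]
      ring
    -- quadratic form of x
    have hswap : (((Sᶜ ×ˢ S).filter fun p => G.Adj p.1 p.2).card : ℝ) = c := by
      rw [hcdef]
      norm_cast
      refine Finset.card_bij (fun p _ => (p.2, p.1)) ?_ ?_ ?_
      · intro p hp
        simp only [Finset.mem_filter, Finset.mem_product] at hp ⊢
        exact ⟨⟨hp.1.2, hp.1.1⟩, hp.2.symm⟩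
      · intro p hp q hq h
        rw [Prod.ext_iff] at h ⊢
        exact ⟨h.2, h.1⟩
      · intro p hp
        simp only [Finset.mem_filter, Finset.mem_product] at hp
        refine ⟨(p.2, p.1), ?_, rfl⟩
        simp only [Finset.mem_filter, Finset.mem_product]
        exact ⟨⟨hp.1.2, hp.1.1⟩, hp.2.symm⟩
    have hcount : ∀ T U : Finset V, ∑ i ∈ T, ∑ j ∈ U, (if G.Adj i j then nn^2 else 0)
        = (((T ×ˢ U).filter fun p => G.Adj p.1 p.2).card : ℝ) * nn^2 := by
      intro T U
      rw [← Finset.sum_product']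
      rw [← Finset.sum_filter]
      rw [Finset.sum_const, nsmul_eq_mul]
    have hquad : ⟪x, (WithLp.toLp 2 ((G.lapMatrix ℝ) *ᵥ x) : EuclideanSpace ℝ V)⟫_ℝ = c * nn^2 := by
      have h1 : ⟪x, (WithLp.toLp 2 ((G.lapMatrix ℝ) *ᵥ x) : EuclideanSpace ℝ V)⟫_ℝ
          = (x : V → ℝ) ⬝ᵥ ((G.lapMatrix ℝ) *ᵥ (x : V → ℝ)) := by
        rw [hinner]; simp [dotProduct]
      rw [h1, ← Matrix.toLinearMap₂'_apply', SimpleGraph.lapMatrix_toLinearMap₂']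
      have hsplit : ∑ i : V, ∑ j : V, (if G.Adj i j then (x i - x j)^2 else 0)
          = ∑ i ∈ S, ∑ j ∈ S, (if G.Adj i j then (x i - x j)^2 else 0)
          + ∑ i ∈ S, ∑ j ∈ Sᶜ, (if G.Adj i j then (x i - x j)^2 else 0)
          + (∑ i ∈ Sᶜ, ∑ j ∈ S, (if G.Adj i j then (x i - x j)^2 else 0)
          + ∑ i ∈ Sᶜ, ∑ j ∈ Sᶜ, (if G.Adj i j then (x i - x j)^2 else 0)) := by
        rw [← Finset.sum_add_sum_compl S (fun i => ∑ j : V, (if G.Adj i j then (x i - x j)^2 else 0))]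
        congr 1
        · rw [← Finset.sum_add_distrib]
          exact Finset.sum_congr rfl fun i _ => (Finset.sum_add_sum_compl S _).symm
        · rw [← Finset.sum_add_distrib]
          exact Finset.sum_congr rfl fun i _ => (Finset.sum_add_sum_compl S _).symm
      rw [hsplit]
      have hSS : ∑ i ∈ S, ∑ j ∈ S, (if G.Adj i j then (x i - x j)^2 else 0) = 0 := by
        refine Finset.sum_eq_zero fun i hi => Finset.sum_eq_zero fun j hj => ?_
        rw [hxS i hi, hxS j hj]
        simp
      have hScSc : ∑ i ∈ Sᶜ, ∑ j ∈ Sᶜ, (if G.Adj i j then (x i - x j)^2 else 0) = 0 := by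
        refine Finset.sum_eq_zero fun i hi => Finset.sum_eq_zero fun j hj => ?_
        rw [hxSc i hi, hxSc j hj]
        simp
      have hSSc : ∑ i ∈ S, ∑ j ∈ Sᶜ, (if G.Adj i j then (x i - x j)^2 else 0) = c * nn^2 := by
        have h1 : ∀ i ∈ S, ∑ j ∈ Sᶜ, (if G.Adj i j then (x i - x j)^2 else 0)
            = ∑ j ∈ Sᶜ, (if G.Adj i j then nn^2 else 0) := by
          intro i hi
          refine Finset.sum_congr rfl fun j hj => ?_
          rw [hxS i hi, hxSc j hj, show (nn - s - -s)^2 = nn^2 by ring]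
        rw [Finset.sum_congr rfl h1]
        exact hcount S Sᶜ
      have hScS : ∑ i ∈ Sᶜ, ∑ j ∈ S, (if G.Adj i j then (x i - x j)^2 else 0) = c * nn^2 := by
        have h1 : ∀ i ∈ Sᶜ, ∑ j ∈ S, (if G.Adj i j then (x i - x j)^2 else 0)
            = ∑ j ∈ S, (if G.Adj i j then nn^2 else 0) := by
          intro i hi
          refine Finset.sum_congr rfl fun j hj => ?_
          rw [hxSc i hi, hxS j hj, show (-s - (nn - s))^2 = nn^2 by ring]
        rw [Finset.sum_congr rfl h1, hcount Sᶜ S, hswap]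
      rw [hSS, hScSc, hSSc, hScS]
      ring
    -- apply the spectral bound
    have hkey := key (G.lapMatrix ℝ) hL (lam ⟨1, hn⟩) (e i0) hμ x hx
    rw [hxx, hquad] at hkey
    have haux : 0 ≤ lam ⟨1, hn⟩ * s * nn * (nn - 2*s) :=
      mul_nonneg (mul_nonneg (mul_nonneg hlam1nn hs_pos.le) hnn_pos.le) (by linarith)
    have hfinal : lam ⟨1, hn⟩ / 2 * s * nn^2 ≤ c * nn^2 := by nlinarith [haux, hkey]
    have := le_of_mul_le_mul_right hfinal (by positivity : (0:ℝ) < nn^2)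
    exact this
  refine ⟨main, ?_⟩
  obtain ⟨S, hSne, hScard, hβeq⟩ := hβ.1
  have h := main S hSne hScard
  rw [hβeq, le_div_iff₀ (by exact_mod_cast hSne.card_pos)]
  exact h
end

section
/- Let X be a finite connected simple graph on n ≥ 2 vertices with maximal vertex degree d, let λ₂ be the second-smallest eigenvalue (with multiplicity) of its Laplacian matrix, and let β be its isoperimetric constant. Then β ≤ √(2·d·λ₂). -/
set_option maxHeartbeats 1000000

open Finset Matrix

section Aux

lemma aux_card (n m : ℕ) (h : m ≤ n) :
    ((Finset.univ : Finset (Fin n)).filter (fun i : Fin n => (i : ℕ) < m)).card = m := by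
  rw [show (Finset.univ : Finset (Fin n)).filter (fun i : Fin n => (i : ℕ) < m)
      = (Finset.range m).attachFin (fun x hx => lt_of_lt_of_le (Finset.mem_range.mp hx) h) by
    ext i; simp]
  rw [Finset.card_attachFin, Finset.card_range]

lemma aux_tele (n : ℕ) (hw : ℕ → ℝ) (h0 : hw n = 0) (i : ℕ) (hi : i ≤ n) :
    hw i = ∑ k ∈ Finset.range n, (hw k - hw (k+1)) * (if i ≤ k then 1 else 0) := by
  simp_rw [mul_ite, mul_one, mul_zero, Finset.sum_ite, Finset.sum_const_zero, add_zero]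
  rw [show (Finset.range n).filter (fun k => i ≤ k) = Finset.Ico i n by
    ext k; simp [Finset.mem_Ico, and_comm]]
  rw [Finset.sum_Ico_eq_sub _ hi, Finset.sum_range_sub' hw, Finset.sum_range_sub' hw, h0]
  ring

lemma aux_abs' (n : ℕ) (hw : ℕ → ℝ) (h0 : hw n = 0)
    (hstep : ∀ k, k < n → hw (k+1) ≤ hw k) (i j : ℕ) (hij : i ≤ j) (hj : j ≤ n) :
    |hw i - hw j| = ∑ k ∈ Finset.range n, (hw k - hw (k+1)) *
      |(if i ≤ k then (1:ℝ) else 0) - (if j ≤ k then (1:ℝ) else 0)| := by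
  have hi : i ≤ n := le_trans hij hj
  have key : ∀ k ∈ Finset.range n, (hw k - hw (k+1)) *
      |(if i ≤ k then (1:ℝ) else 0) - (if j ≤ k then (1:ℝ) else 0)|
      = (hw k - hw (k+1)) * ((if i ≤ k then (1:ℝ) else 0) - (if j ≤ k then (1:ℝ) else 0)) := by
    intro k hk
    congr 1
    split_ifs with h1 h2 h2 <;> simp_all <;> omega
  rw [Finset.sum_congr rfl key]
  have expand : ∑ k ∈ Finset.range n, (hw k - hw (k+1)) *
      ((if i ≤ k then (1:ℝ) else 0) - (if j ≤ k then (1:ℝ) else 0)) = hw i - hw j := by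
    simp_rw [mul_sub]
    rw [Finset.sum_sub_distrib, ← aux_tele n hw h0 i hi, ← aux_tele n hw h0 j hj]
  rw [expand, abs_of_nonneg]
  rw [← expand]
  apply Finset.sum_nonneg
  intro k hk
  apply mul_nonneg
  · have := hstep k (Finset.mem_range.mp hk); linarith
  · split_ifs with h1 h2 h2 <;> norm_num <;> omega

lemma aux_abs (n : ℕ) (hw : ℕ → ℝ) (h0 : hw n = 0)
    (hstep : ∀ k, k < n → hw (k+1) ≤ hw k) (i j : ℕ) (hi : i ≤ n) (hj : j ≤ n) :
    |hw i - hw j| = ∑ k ∈ Finset.range n, (hw k - hw (k+1)) *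
      |(if i ≤ k then (1:ℝ) else 0) - (if j ≤ k then (1:ℝ) else 0)| := by
  rcases le_total i j with hij | hij
  · exact aux_abs' n hw h0 hstep i j hij hj
  · rw [abs_sub_comm, aux_abs' n hw h0 hstep j i hij hi]
    apply Finset.sum_congr rfl
    intro k _
    rw [abs_sub_comm]

variable {V : Type*} [Fintype V] [DecidableEq V] (G : SimpleGraph V) [DecidableRel G.Adj]

lemma aux_cross (S : Finset V) :
    ∑ u : V, ∑ v : V, (if G.Adj u v then
        |(if u ∈ S then (1:ℝ) else 0) - (if v ∈ S then (1:ℝ) else 0)| else 0)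
      = 2 * ((((S ×ˢ Sᶜ).filter fun p => G.Adj p.1 p.2).card : ℝ)) := by
  have key : ∀ u v : V, (if G.Adj u v then
        |(if u ∈ S then (1:ℝ) else 0) - (if v ∈ S then (1:ℝ) else 0)| else 0)
      = (if u ∈ S ∧ v ∉ S ∧ G.Adj u v then (1:ℝ) else 0)
        + (if v ∈ S ∧ u ∉ S ∧ G.Adj u v then (1:ℝ) else 0) := by
    intro u v
    by_cases hu : u ∈ S <;> by_cases hv : v ∈ S <;> by_cases ha : G.Adj u v <;>
      simp [hu, hv, ha, abs_of_nonneg]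
  simp_rw [key, Finset.sum_add_distrib]
  have hcard : ((((S ×ˢ Sᶜ).filter fun p => G.Adj p.1 p.2).card : ℝ))
      = ∑ u : V, ∑ v : V, (if u ∈ S ∧ v ∉ S ∧ G.Adj u v then (1:ℝ) else 0) := by
    rw [show ((S ×ˢ Sᶜ).filter fun p => G.Adj p.1 p.2)
        = ((univ ×ˢ univ : Finset (V × V)).filter fun p => p.1 ∈ S ∧ p.2 ∉ S ∧ G.Adj p.1 p.2) by
      ext p; simp [and_assoc, and_comm, and_left_comm]]
    rw [Finset.card_filter]
    push_cast
    rw [Finset.sum_product]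
  have hswap : ∑ u : V, ∑ v : V, (if v ∈ S ∧ u ∉ S ∧ G.Adj u v then (1:ℝ) else 0)
      = ∑ u : V, ∑ v : V, (if u ∈ S ∧ v ∉ S ∧ G.Adj u v then (1:ℝ) else 0) := by
    rw [Finset.sum_comm]
    apply Finset.sum_congr rfl; intro u _
    apply Finset.sum_congr rfl; intro v _
    simp_rw [G.adj_comm u v]
  rw [hswap, hcard]; ring

lemma aux_deg (g : V → ℝ) :
    ∑ u : V, ∑ v : V, (if G.Adj u v then g u ^ 2 else 0)
      = ∑ u : V, (G.degree u : ℝ) * g u ^ 2 := by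
  apply Finset.sum_congr rfl; intro u _
  rw [Finset.sum_ite, Finset.sum_const_zero, add_zero, Finset.sum_const, nsmul_eq_mul]
  congr 2
  rw [← SimpleGraph.neighborFinset_eq_filter, SimpleGraph.card_neighborFinset_eq_degree]

lemma aux_qf (f : V → ℝ) (lam : ℝ) (heig : G.lapMatrix ℝ *ᵥ f = lam • f) :
    (∑ u : V, ∑ v : V, if G.Adj u v then (f u - f v)^2 else 0) = 2 * lam * ∑ v : V, f v ^ 2 := by
  have h := G.lapMatrix_toLinearMap₂' ℝ f
  rw [Matrix.toLinearMap₂'_apply', heig] at h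
  have hdot : f ⬝ᵥ lam • f = lam * ∑ v : V, f v ^ 2 := by
    rw [dotProduct_smul]
    simp [dotProduct, Finset.mul_sum, pow_two]
  rw [hdot] at h
  field_simp at h
  linarith

lemma aux_sum_zero (f : V → ℝ) (lam : ℝ) (hlam : lam ≠ 0)
    (heig : G.lapMatrix ℝ *ᵥ f = lam • f) : ∑ v : V, f v = 0 := by
  have hcol : ∀ u : V, ∑ v : V, G.lapMatrix ℝ v u = 0 := by
    intro u
    have h := congrFun (G.lapMatrix_mulVec_const_eq_zero (R := ℝ)) u
    simp only [mulVec, dotProduct, mul_one, Pi.zero_apply] at h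
    calc ∑ v : V, G.lapMatrix ℝ v u = ∑ v : V, G.lapMatrix ℝ u v := by
          apply Finset.sum_congr rfl; intro v _
          exact (congrFun (congrFun (G.isSymm_lapMatrix (R := ℝ)) u) v).symm ▸ rfl
      _ = 0 := h
  have hsum : ∑ u : V, (G.lapMatrix ℝ *ᵥ f) u = 0 := by
    simp only [mulVec, dotProduct]
    rw [Finset.sum_comm]
    calc ∑ v : V, ∑ u : V, G.lapMatrix ℝ u v * f v
        = ∑ v : V, (∑ u : V, G.lapMatrix ℝ u v) * f v := by
          simp [Finset.sum_mul]
      _ = 0 := by simp [hcol]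
  rw [heig] at hsum
  simp only [Pi.smul_apply, smul_eq_mul, ← Finset.mul_sum] at hsum
  exact (mul_eq_zero.mp hsum).resolve_left hlam

lemma aux_lam_ne (hconn : G.Connected) (hL : (G.lapMatrix ℝ).IsHermitian)
    (i0 i1 : V) (hne : i0 ≠ i1)
    (h0 : hL.eigenvalues i0 = 0) (h1 : hL.eigenvalues i1 = 0) : False := by
  set b := hL.eigenvectorBasis with hb
  have hconst : ∀ i : V, hL.eigenvalues i = 0 → ∀ u v : V, b i u = b i v := by
    intro i hi u v
    have heig := hL.mulVec_eigenvectorBasis i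
    rw [hi, zero_smul] at heig
    have : Matrix.toLin' (G.lapMatrix ℝ) (⇑(b i)) = 0 := by
      rw [Matrix.toLin'_apply]; exact heig
    rw [Matrix.toLin'_apply, G.lapMatrix_mulVec_eq_zero_iff_forall_reachable] at this
    exact this u v (hconn.preconnected u v)
  have horth : (inner ℝ (b i0) (b i1) : ℝ) = 0 := hL.eigenvectorBasis.orthonormal.2 hne
  rw [PiLp.inner_apply] at horth
  simp only [RCLike.inner_apply, starRingEnd_apply, star_trivial] at horth
  obtain ⟨v⟩ := hconn.nonempty
  have hb0 : ∀ u, b i0 u = b i0 v := fun u => hconst i0 h0 u v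
  have hb1 : ∀ u, b i1 u = b i1 v := fun u => hconst i1 h1 u v
  have hcard : 0 < (Fintype.card V : ℝ) := by
    have : 0 < Fintype.card V := Fintype.card_pos_iff.mpr ⟨v⟩
    exact_mod_cast this
  have hsum : ∑ u : V, (b i0 u) * (b i1 u) = (Fintype.card V : ℝ) * (b i0 v * b i1 v) := by
    rw [Finset.sum_congr rfl (fun u _ => by rw [hb0 u, hb1 u])]
    rw [Finset.sum_const, nsmul_eq_mul, Finset.card_univ]
  have horth' : b i0 v * b i1 v = 0 := by
    rw [show ∑ x, b i1 x * b i0 x = ∑ u, b i0 u * b i1 u from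
      Finset.sum_congr rfl (fun u _ => mul_comm _ _), hsum] at horth
    rcases mul_eq_zero.mp horth with h | h
    · exact absurd h (ne_of_gt hcard)
    · exact h
  rcases mul_eq_zero.mp horth' with h | h
  · exact b.orthonormal.ne_zero i0 (by ext u; simpa [hb0 u] using h)
  · exact b.orthonormal.ne_zero i1 (by ext u; simpa [hb1 u] using h)

end Aux

/-- **Dodziuk's bound (discrete Cheeger inequality).** For a finite connected simple graph on
`n ≥ 2` vertices with maximal degree `d` and Laplacian eigenvalues `0 = λ₁ ≤ λ₂ ≤ …`
(listed with multiplicity), the isoperimetric constant satisfies `β ≤ √(2 d λ₂)`. -/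
theorem stmt_18 {V : Type*} [Fintype V] [DecidableEq V] (G : SimpleGraph V)
    [DecidableRel G.Adj] (hconn : G.Connected) (hn : 2 ≤ Fintype.card V)
    (hL : (G.lapMatrix ℝ).IsHermitian)
    (lam : Fin (Fintype.card V) → ℝ) (hmono : Monotone lam)
    (e : Fin (Fintype.card V) ≃ V) (hlam : ∀ i, lam i = hL.eigenvalues (e i))
    (β : ℝ)
    (hβ : IsLeast {r : ℝ | ∃ S : Finset V, S.Nonempty ∧ 2 * S.card ≤ Fintype.card V ∧
        r = ((((S ×ˢ Sᶜ).filter fun p => G.Adj p.1 p.2).card : ℝ) / S.card)} β) :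
    β ≤ Real.sqrt (2 * (G.maxDegree : ℝ) * lam ⟨1, hn⟩) := by
  classical
  obtain ⟨hβmem, hβlb⟩ := hβ
  have hβ0 : 0 ≤ β := by
    obtain ⟨S, hS1, hS2, hS3⟩ := hβmem
    rw [hS3]; positivity
  have hβle : ∀ S : Finset V, S.Nonempty → 2 * S.card ≤ (Fintype.card V) →
      β * S.card ≤ (((S ×ˢ Sᶜ).filter fun p => G.Adj p.1 p.2).card : ℝ) := by
    intro S h1 h2
    have hmem : ((((S ×ˢ Sᶜ).filter fun p => G.Adj p.1 p.2).card : ℝ) / S.card) ∈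
        {r : ℝ | ∃ S : Finset V, S.Nonempty ∧ 2 * S.card ≤ Fintype.card V ∧
        r = ((((S ×ˢ Sᶜ).filter fun p => G.Adj p.1 p.2).card : ℝ) / S.card)} := ⟨S, h1, h2, rfl⟩
    have hle := hβlb hmem
    have hc : (0:ℝ) < S.card := by exact_mod_cast h1.card_pos
    rw [le_div_iff₀ hc] at hle
    exact hle
  -- the eigenvalue
  set lm : ℝ := lam ⟨1, hn⟩ with hlmdef
  have hpsd := G.posSemidef_lapMatrix (R := ℝ)
  have hlm_nonneg : ∀ i : Fin (Fintype.card V), 0 ≤ lam i := by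
    intro i; rw [hlam i]; exact hpsd.eigenvalues_nonneg (e i)
  have hlm_pos : 0 < lm := by
    rcases lt_or_eq_of_le (hlm_nonneg ⟨1, hn⟩) with h | h
    · exact h
    exfalso
    have h0n : (0:ℕ) < (Fintype.card V) := by omega
    have h00 : lam ⟨0, h0n⟩ = 0 := by
      have h1 := hlm_nonneg ⟨0, h0n⟩
      have h2 : lam ⟨0, h0n⟩ ≤ lam ⟨1, hn⟩ := hmono (by simp [Fin.mk_le_mk])
      linarith [h]
    have hne : e ⟨0, h0n⟩ ≠ e ⟨1, hn⟩ := by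
      intro hcontra
      have := e.injective hcontra
      simp [Fin.mk.injEq] at this
    exact aux_lam_ne G hconn hL (e ⟨0, h0n⟩) (e ⟨1, hn⟩) hne
      (by rw [← hlam]; exact h00) (by rw [← hlam]; exact h.symm)
  -- the eigenvector
  set f : V → ℝ := ⇑(hL.eigenvectorBasis (e ⟨1, hn⟩)) with hfdef
  have heig : G.lapMatrix ℝ *ᵥ f = lm • f := by
    rw [hlmdef, hlam]
    exact hL.mulVec_eigenvectorBasis (e ⟨1, hn⟩)
  have hfne : ∃ v, f v ≠ 0 := by
    by_contra hcon
    push_neg at hcon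
    exact hL.eigenvectorBasis.orthonormal.ne_zero (e ⟨1, hn⟩) (by ext u; exact hcon u)
  have hfsum : ∑ v : V, f v = 0 := aux_sum_zero G f lm (ne_of_gt hlm_pos) heig
  have hQf : (∑ u : V, ∑ v : V, if G.Adj u v then (f u - f v)^2 else 0)
      = 2 * lm * ∑ v : V, f v ^ 2 := aux_qf G f lm heig
  obtain ⟨v₀, hv₀⟩ := hfne
  have hfsq : 0 < ∑ v : V, f v ^ 2 :=
    Finset.sum_pos' (fun v _ => sq_nonneg _) ⟨v₀, Finset.mem_univ v₀, by positivity⟩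
  -- median
  set u0 : Fin (Fintype.card V) → ℝ := fun i => f (e i) with hu0def
  set σ : Equiv.Perm (Fin (Fintype.card V)) := Tuple.sort u0 with hσdef
  have hmonσ : Monotone (u0 ∘ σ) := Tuple.monotone_sort u0
  have hmn : (Fintype.card V) / 2 < (Fintype.card V) := Nat.div_lt_self (by omega) (by norm_num)
  set m : ℕ := (Fintype.card V) / 2 with hmdef
  set t : ℝ := f (e (σ ⟨m, hmn⟩)) with htdef
  set fp : V → ℝ := fun v => max (f v - t) 0 with hfpdef
  set fm : V → ℝ := fun v => max (t - f v) 0 with hfmdef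
  have hfp0 : ∀ v, 0 ≤ fp v := fun v => le_max_right _ _
  have hfm0 : ∀ v, 0 ≤ fm v := fun v => le_max_right _ _
  have hfp_ne : ∀ v, fp v ≠ 0 ↔ t < f v := by
    intro v
    constructor
    · intro h
      by_contra hcon
      push_neg at hcon
      exact h (max_eq_right (by linarith))
    · intro h
      have : fp v = f v - t := max_eq_left (by linarith)
      rw [this]; intro hc; linarith
  have hfm_ne : ∀ v, fm v ≠ 0 ↔ f v < t := by
    intro v
    constructor
    · intro h
      by_contra hcon
      push_neg at hcon
      exact h (max_eq_right (by linarith))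
    · intro h
      have : fm v = t - f v := max_eq_left (by linarith)
      rw [this]; intro hc; linarith
  -- support bounds
  have hψ : ∀ v : V, e (σ (σ.symm (e.symm v))) = v := by intro v; simp
  have hsuppp : 2 * (univ.filter fun v => fp v ≠ 0).card ≤ (Fintype.card V) := by
    have hsub : (univ.filter fun v => fp v ≠ 0).card ≤
        ((univ : Finset (Fin (Fintype.card V))).filter fun i : Fin (Fintype.card V) => m < (i : ℕ)).card := by
      apply Finset.card_le_card_of_injOn (fun v => σ.symm (e.symm v))
      · intro v hv
        simp only [Finset.mem_coe, Finset.mem_filter, Finset.mem_univ, true_and] at hv ⊢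
        rw [hfp_ne v] at hv
        by_contra hcon
        push_neg at hcon
        have hle : σ.symm (e.symm v) ≤ (⟨m, hmn⟩ : Fin (Fintype.card V)) := by
          rw [Fin.le_def]; exact hcon
        have := hmonσ hle
        simp only [Function.comp_apply] at this
        rw [show σ (σ.symm (e.symm v)) = e.symm v from σ.apply_symm_apply _] at this
        rw [hu0def] at this
        simp only at this
        rw [Equiv.apply_symm_apply] at this
        -- this : f v ≤ u0 (σ ⟨m, hmn⟩) = t
        rw [← htdef] at this
        linarith
      · intro a _ b _ hab
        have := σ.symm.injective hab
        exact e.symm.injective this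
    have hcomp : ((univ : Finset (Fin (Fintype.card V))).filter fun i : Fin (Fintype.card V) => m < (i : ℕ)).card
        = (Fintype.card V) - (m + 1) := by
      have h1 : ((univ : Finset (Fin (Fintype.card V))).filter fun i : Fin (Fintype.card V) => m < (i : ℕ))
          = ((univ : Finset (Fin (Fintype.card V))).filter fun i : Fin (Fintype.card V) => (i : ℕ) < m + 1)ᶜ := by
        ext i; simp
      rw [h1, Finset.card_compl, aux_card (Fintype.card V) (m+1) hmn, Fintype.card_fin]
    rw [hcomp] at hsub
    omega
  have hsuppm : 2 * (univ.filter fun v => fm v ≠ 0).card ≤ (Fintype.card V) := by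
    have hsub : (univ.filter fun v => fm v ≠ 0).card ≤
        ((univ : Finset (Fin (Fintype.card V))).filter fun i : Fin (Fintype.card V) => (i : ℕ) < m).card := by
      apply Finset.card_le_card_of_injOn (fun v => σ.symm (e.symm v))
      · intro v hv
        simp only [Finset.mem_coe, Finset.mem_filter, Finset.mem_univ, true_and] at hv ⊢
        rw [hfm_ne v] at hv
        by_contra hcon
        push_neg at hcon
        have hle : (⟨m, hmn⟩ : Fin (Fintype.card V)) ≤ σ.symm (e.symm v) := by
          rw [Fin.le_def]; exact hcon
        have := hmonσ hle
        simp only [Function.comp_apply] at this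
        rw [show σ (σ.symm (e.symm v)) = e.symm v from σ.apply_symm_apply _] at this
        rw [hu0def] at this
        simp only at this
        rw [Equiv.apply_symm_apply] at this
        rw [← htdef] at this
        linarith
      · intro a _ b _ hab
        have := σ.symm.injective hab
        exact e.symm.injective this
    rw [aux_card (Fintype.card V) m (le_of_lt hmn)] at hsub
    omega
  -- contraction
  have hpm : ∀ v, fp v - fm v = f v - t := by
    intro v
    rcases le_total (f v) t with h | h
    · rw [show fp v = 0 from max_eq_right (by linarith),
        show fm v = t - f v from max_eq_left (by linarith)]; ring
    · rw [show fp v = f v - t from max_eq_left (by linarith),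
        show fm v = 0 from max_eq_right (by linarith)]; ring
  have hprod : ∀ v, fp v * fm v = 0 := by
    intro v
    rcases le_total (f v) t with h | h
    · rw [show fp v = 0 from max_eq_right (by linarith)]; ring
    · rw [show fm v = 0 from max_eq_right (by linarith)]; ring
  have hsq : ∀ v, fp v ^ 2 + fm v ^ 2 = (f v - t)^2 := by
    intro v
    have h3 : fp v ^ 2 + fm v ^ 2 = (fp v - fm v)^2 + 2 * (fp v * fm v) := by ring
    rw [h3, hpm v, hprod v]; ring
  have hcon : (∑ u : V, ∑ v : V, if G.Adj u v then (fp u - fp v)^2 else 0)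
      + (∑ u : V, ∑ v : V, if G.Adj u v then (fm u - fm v)^2 else 0)
      ≤ ∑ u : V, ∑ v : V, if G.Adj u v then (f u - f v)^2 else 0 := by
    rw [← Finset.sum_add_distrib]
    apply Finset.sum_le_sum
    intro u _
    rw [← Finset.sum_add_distrib]
    apply Finset.sum_le_sum
    intro v _
    split_ifs with h
    · have key : (f u - f v)^2 - (fp u - fp v)^2 - (fm u - fm v)^2
          = 2*(fp u * fm v) + 2*(fp v * fm u) - 2*(fp u * fm u) - 2*(fp v * fm v) := by
        have hff : f u - f v = (fp u - fm u) - (fp v - fm v) := by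
          rw [hpm u, hpm v]; ring
        rw [hff]; ring
      rw [hprod u, hprod v] at key
      have k1 := mul_nonneg (hfp0 u) (hfm0 v)
      have k2 := mul_nonneg (hfp0 v) (hfm0 u)
      linarith
    · simp

  -- sum of squares comparison
  have hsumsq : (∑ v : V, f v ^ 2) ≤ (∑ v : V, fp v ^ 2) + (∑ v : V, fm v ^ 2) := by
    rw [← Finset.sum_add_distrib, Finset.sum_congr rfl (fun v _ => hsq v)]
    have expand : ∑ v : V, (f v - t)^2
        = (∑ v : V, f v ^ 2) - 2 * t * (∑ v : V, f v) + (Fintype.card V) * t^2 := by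
      simp_rw [sub_sq]
      rw [Finset.sum_add_distrib, Finset.sum_sub_distrib, Finset.sum_const, nsmul_eq_mul,
        Finset.card_univ]
      have hmul : ∑ v : V, 2 * f v * t = 2 * t * ∑ v : V, f v := by
        rw [Finset.mul_sum]; apply Finset.sum_congr rfl; intro v _; ring
      rw [hmul]
    rw [expand, hfsum]
    have hnt : 0 ≤ (Fintype.card V : ℝ) * t^2 := by positivity
    linarith
  -- choice of g
  set Qp := ∑ u : V, ∑ v : V, if G.Adj u v then (fp u - fp v)^2 else 0 with hQpdef
  set Qm := ∑ u : V, ∑ v : V, if G.Adj u v then (fm u - fm v)^2 else 0 with hQmdef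
  have hQp0 : 0 ≤ Qp := by
    rw [hQpdef]
    apply Finset.sum_nonneg; intro u _; apply Finset.sum_nonneg; intro v _
    split_ifs; exacts [sq_nonneg _, le_refl 0]
  have hQm0 : 0 ≤ Qm := by
    rw [hQmdef]
    apply Finset.sum_nonneg; intro u _; apply Finset.sum_nonneg; intro v _
    split_ifs; exacts [sq_nonneg _, le_refl 0]
  set ap := ∑ v : V, fp v ^ 2 with hapdef
  set bm := ∑ v : V, fm v ^ 2 with hbmdef
  have hap0 : 0 ≤ ap := Finset.sum_nonneg fun v _ => sq_nonneg _
  have hbm0 : 0 ≤ bm := Finset.sum_nonneg fun v _ => sq_nonneg _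
  have hchoice : (0 < ap ∧ Qp ≤ 2 * lm * ap) ∨ (0 < bm ∧ Qm ≤ 2 * lm * bm) := by
    have htot : Qp + Qm ≤ 2 * lm * (ap + bm) := by
      have h1 : Qp + Qm ≤ 2 * lm * ∑ v : V, f v ^ 2 := by rw [← hQf]; exact hcon
      have h2 : 2 * lm * (∑ v : V, f v ^ 2) ≤ 2 * lm * (ap + bm) :=
        mul_le_mul_of_nonneg_left hsumsq (by linarith)
      linarith
    by_contra hc
    push_neg at hc
    obtain ⟨hc1, hc2⟩ := hc
    have hab : 0 < ap + bm := lt_of_lt_of_le hfsq hsumsq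
    rcases eq_or_lt_of_le hap0 with ha | ha
    · rcases eq_or_lt_of_le hbm0 with hb | hb
      · rw [← ha, ← hb] at hab; norm_num at hab
      · have h3 := hc2 hb
        rw [← ha] at htot
        nlinarith
    · have h3 := hc1 ha
      rcases eq_or_lt_of_le hbm0 with hb | hb
      · rw [← hb] at htot
        nlinarith
      · have h4 := hc2 hb
        nlinarith
  -- the sweep argument, common to both choices
  suffices key : ∀ g : V → ℝ, (∀ v, 0 ≤ g v) →
      2 * (univ.filter fun v => g v ≠ 0).card ≤ Fintype.card V →
      0 < ∑ v : V, g v ^ 2 →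
      (∑ u : V, ∑ v : V, if G.Adj u v then (g u - g v)^2 else 0) ≤ 2 * lm * ∑ v : V, g v ^ 2 →
      β ≤ Real.sqrt (2 * (G.maxDegree : ℝ) * lm) by
    rcases hchoice with ⟨h1, h2⟩ | ⟨h1, h2⟩
    · exact key fp hfp0 hsuppp h1 (by rw [← hQpdef, ← hapdef]; exact h2)
    · exact key fm hfm0 hsuppm h1 (by rw [← hQmdef, ← hbmdef]; exact h2)
  intro g hg0 hgsupp hgT hgQ
  set T := ∑ v : V, g v ^ 2 with hTdef
  set τ : Equiv.Perm (Fin (Fintype.card V)) := Tuple.sort (fun i => -(g (e i))^2) with hτdef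
  have hmonτ : Monotone ((fun i => -(g (e i))^2) ∘ τ) := Tuple.monotone_sort _
  set φ : V → ℕ := fun v => ((τ.symm (e.symm v)) : ℕ) with hφdef
  have hφlt : ∀ v, φ v < Fintype.card V := fun v => (τ.symm (e.symm v)).isLt
  set hw : ℕ → ℝ := fun k => if hk : k < Fintype.card V then (g (e (τ ⟨k, hk⟩)))^2 else 0
    with hhwdef
  have hw_nonneg : ∀ k, 0 ≤ hw k := by
    intro k; rw [hhwdef]; dsimp only; split_ifs
    exacts [sq_nonneg _, le_refl 0]
  have hwφ : ∀ v, hw (φ v) = g v ^ 2 := by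
    intro v
    rw [hhwdef]; dsimp only
    rw [dif_pos (hφlt v)]
    have hfin : (⟨φ v, hφlt v⟩ : Fin (Fintype.card V)) = τ.symm (e.symm v) := by
      apply Fin.ext; rfl
    rw [hfin, Equiv.apply_symm_apply, Equiv.apply_symm_apply]
  have hw0 : hw (Fintype.card V) = 0 := by rw [hhwdef]; simp
  have hstep : ∀ k, hw (k+1) ≤ hw k := by
    intro k
    by_cases h1 : k + 1 < Fintype.card V
    · have h2 : k < Fintype.card V := by omega
      rw [hhwdef]; dsimp only
      rw [dif_pos h1, dif_pos h2]
      have hle : (⟨k, h2⟩ : Fin (Fintype.card V)) ≤ ⟨k+1, h1⟩ := by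
        exact Fin.mk_le_mk.mpr (by omega)
      have hm2 := hmonτ hle
      simp only [Function.comp_apply] at hm2
      linarith
    · rw [hhwdef]; dsimp only
      rw [dif_neg h1]
      split_ifs with h2
      · exact sq_nonneg _
      · exact le_refl 0
  have hwanti : Antitone hw := antitone_nat_of_succ_le hstep
  have hstep' : ∀ k, k < Fintype.card V → hw (k+1) ≤ hw k := fun k _ => hstep k
  set S : ℕ → Finset V := fun k => univ.filter fun v => φ v ≤ k with hSdef
  have hmemS : ∀ v k, v ∈ S k ↔ φ v ≤ k := by intro v k; rw [hSdef]; simp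
  have hcardS : ∀ k, k < Fintype.card V → (S k).card = k + 1 := by
    intro k hk
    have himg : S k = Finset.image (fun i : Fin (Fintype.card V) => e (τ i))
        ((univ : Finset (Fin (Fintype.card V))).filter fun i => (i:ℕ) < k + 1) := by
      ext v
      rw [hmemS]
      simp only [Finset.mem_image, Finset.mem_filter, Finset.mem_univ, true_and]
      constructor
      · intro h
        refine ⟨τ.symm (e.symm v), ?_, ?_⟩
        · rw [hφdef] at h; dsimp only at h; omega
        · rw [Equiv.apply_symm_apply, Equiv.apply_symm_apply]
      · rintro ⟨i, hi, rfl⟩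
        have hφi : φ (e (τ i)) = (i : ℕ) := by rw [hφdef]; simp
        omega
    have hinj : Function.Injective (fun i : Fin (Fintype.card V) => e (τ i)) :=
      fun a b hab => τ.injective (e.injective hab)
    rw [himg, Finset.card_image_of_injective _ hinj, aux_card _ _ hk]
  have hSne : ∀ k, (S k).Nonempty := by
    intro k
    have h0 : (0:ℕ) < Fintype.card V := by omega
    refine ⟨e (τ ⟨0, h0⟩), ?_⟩
    rw [hmemS]
    have hφ0 : φ (e (τ ⟨0, h0⟩)) = 0 := by rw [hφdef]; simp
    omega
  have hSsub : ∀ k, hw k ≠ 0 → 2 * (S k).card ≤ Fintype.card V := by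
    intro k hk
    have hsub : S k ⊆ univ.filter fun v => g v ≠ 0 := by
      intro v hv
      rw [hmemS] at hv
      simp only [Finset.mem_filter, Finset.mem_univ, true_and]
      intro hg
      have h1 : hw k ≤ hw (φ v) := hwanti hv
      rw [hwφ v, hg] at h1
      norm_num at h1
      exact hk (le_antisymm h1 (hw_nonneg k))
    have hcle := Finset.card_le_card hsub
    omega
  have hd0 : ∀ k, 0 ≤ hw k - hw (k+1) := fun k => by linarith [hstep k]
  -- T as a weighted sum of level set sizes
  have hTsum : T = ∑ k ∈ Finset.range (Fintype.card V), (hw k - hw (k+1)) * ((S k).card : ℝ) := by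
    rw [hTdef]
    calc ∑ v : V, g v ^ 2
        = ∑ v : V, ∑ k ∈ Finset.range (Fintype.card V), (hw k - hw (k+1)) * (if φ v ≤ k then 1 else 0) := by
          apply Finset.sum_congr rfl; intro v _
          rw [← hwφ v]
          exact aux_tele _ hw hw0 (φ v) (le_of_lt (hφlt v))
      _ = ∑ k ∈ Finset.range (Fintype.card V), ∑ v : V, (hw k - hw (k+1)) * (if φ v ≤ k then 1 else 0) :=
          Finset.sum_comm
      _ = ∑ k ∈ Finset.range (Fintype.card V), (hw k - hw (k+1)) * ((S k).card : ℝ) := by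
          apply Finset.sum_congr rfl; intro k _
          rw [← Finset.mul_sum]
          congr 1
          rw [Finset.sum_boole]
  -- the edge sum of |g u ^ 2 - g v ^ 2|
  set bc : ℕ → ℝ := fun k => (((S k ×ˢ (S k)ᶜ).filter fun p => G.Adj p.1 p.2).card : ℝ)
    with hbcdef
  have hcross : ∀ k : ℕ, (∑ u : V, ∑ v : V, (if G.Adj u v then
        |(if φ u ≤ k then (1:ℝ) else 0) - (if φ v ≤ k then (1:ℝ) else 0)| else 0))
      = 2 * bc k := by
    intro k
    rw [hbcdef]; dsimp only
    rw [← aux_cross G (S k)]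
    apply Finset.sum_congr rfl; intro u _
    apply Finset.sum_congr rfl; intro v _
    by_cases h1 : φ u ≤ k <;> by_cases h2 : φ v ≤ k <;>
      simp [h1, h2, hmemS]
  have hEdge : (∑ u : V, ∑ v : V, if G.Adj u v then |g u ^ 2 - g v ^ 2| else 0)
      = ∑ k ∈ Finset.range (Fintype.card V), (hw k - hw (k+1)) * (2 * bc k) := by
    have hpair : ∀ u v : V, (if G.Adj u v then |g u ^ 2 - g v ^ 2| else 0)
        = ∑ k ∈ Finset.range (Fintype.card V), (if G.Adj u v then (hw k - hw (k+1)) *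
            |(if φ u ≤ k then (1:ℝ) else 0) - (if φ v ≤ k then (1:ℝ) else 0)| else 0) := by
      intro u v
      split_ifs with h
      · rw [← hwφ u, ← hwφ v,
          aux_abs _ hw hw0 hstep' (φ u) (φ v) (le_of_lt (hφlt u)) (le_of_lt (hφlt v))]
      · rw [Finset.sum_const_zero]
    calc (∑ u : V, ∑ v : V, if G.Adj u v then |g u ^ 2 - g v ^ 2| else 0)
        = ∑ u : V, ∑ v : V, ∑ k ∈ Finset.range (Fintype.card V), (if G.Adj u v then (hw k - hw (k+1)) *
            |(if φ u ≤ k then (1:ℝ) else 0) - (if φ v ≤ k then (1:ℝ) else 0)| else 0) := by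
          apply Finset.sum_congr rfl; intro u _
          apply Finset.sum_congr rfl; intro v _
          exact hpair u v
      _ = ∑ u : V, ∑ k ∈ Finset.range (Fintype.card V), ∑ v : V, (if G.Adj u v then (hw k - hw (k+1)) *
            |(if φ u ≤ k then (1:ℝ) else 0) - (if φ v ≤ k then (1:ℝ) else 0)| else 0) := by
          apply Finset.sum_congr rfl; intro u _
          exact Finset.sum_comm
      _ = ∑ k ∈ Finset.range (Fintype.card V), ∑ u : V, ∑ v : V, (if G.Adj u v then (hw k - hw (k+1)) *
            |(if φ u ≤ k then (1:ℝ) else 0) - (if φ v ≤ k then (1:ℝ) else 0)| else 0) :=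
          Finset.sum_comm
      _ = ∑ k ∈ Finset.range (Fintype.card V), (hw k - hw (k+1)) * (2 * bc k) := by
          apply Finset.sum_congr rfl; intro k _
          rw [← hcross k, Finset.mul_sum]
          apply Finset.sum_congr rfl; intro u _
          rw [Finset.mul_sum]
          apply Finset.sum_congr rfl; intro v _
          split_ifs <;> simp
  -- the level set inequality
  have hmain : 2 * β * T ≤ ∑ u : V, ∑ v : V, if G.Adj u v then |g u ^ 2 - g v ^ 2| else 0 := by
    rw [hEdge, hTsum, Finset.mul_sum]
    apply Finset.sum_le_sum
    intro k hk
    rcases eq_or_lt_of_le (hd0 k) with h | h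
    · rw [← h]; simp
    · have hwk : hw k ≠ 0 := by
        have hd := hw_nonneg (k+1)
        intro hz; rw [hz] at h; linarith
      have hcard := hcardS k (Finset.mem_range.mp hk)
      have hadm := hSsub k hwk
      have hineq := hβle (S k) (hSne k) hadm
      rw [hcard] at hineq
      push_cast at hineq
      rw [hcard]
      push_cast
      rw [hbcdef]
      nlinarith [h, hineq]
  -- Cauchy-Schwarz
  set EA := ∑ u : V, ∑ v : V, if G.Adj u v then |g u ^ 2 - g v ^ 2| else 0 with hEAdef
  set QS := ∑ u : V, ∑ v : V, if G.Adj u v then (g u + g v)^2 else 0 with hQSdef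
  have hQS0 : 0 ≤ QS := by
    rw [hQSdef]
    apply Finset.sum_nonneg; intro u _; apply Finset.sum_nonneg; intro v _
    split_ifs; exacts [sq_nonneg _, le_refl 0]
  have hCS : EA ^ 2 ≤ (∑ u : V, ∑ v : V, if G.Adj u v then (g u - g v)^2 else 0) * QS := by
    have hFH : EA = ∑ p ∈ (univ ×ˢ univ : Finset (V × V)),
        (if G.Adj p.1 p.2 then |g p.1 - g p.2| else 0) *
        (if G.Adj p.1 p.2 then g p.1 + g p.2 else 0) := by
      rw [hEAdef, Finset.sum_product]
      apply Finset.sum_congr rfl; intro u _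
      apply Finset.sum_congr rfl; intro v _
      split_ifs with h
      · rw [show g u ^ 2 - g v ^ 2 = (g u - g v) * (g u + g v) by ring, abs_mul,
          abs_of_nonneg (add_nonneg (hg0 u) (hg0 v))]
      · ring
    have hF2 : ∑ p ∈ (univ ×ˢ univ : Finset (V × V)),
        (if G.Adj p.1 p.2 then |g p.1 - g p.2| else 0) ^ 2
        = ∑ u : V, ∑ v : V, if G.Adj u v then (g u - g v)^2 else 0 := by
      rw [Finset.sum_product]
      apply Finset.sum_congr rfl; intro u _
      apply Finset.sum_congr rfl; intro v _
      split_ifs with h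
      · exact sq_abs _
      · ring
    have hH2 : ∑ p ∈ (univ ×ˢ univ : Finset (V × V)),
        (if G.Adj p.1 p.2 then g p.1 + g p.2 else 0) ^ 2 = QS := by
      rw [hQSdef, Finset.sum_product]
      apply Finset.sum_congr rfl; intro u _
      apply Finset.sum_congr rfl; intro v _
      split_ifs with h
      · rfl
      · ring
    rw [hFH, ← hF2, ← hH2]
    exact Finset.sum_mul_sq_le_sq_mul_sq _ _ _
  -- bound on QS
  have hplus : QS ≤ 4 * (G.maxDegree : ℝ) * T := by
    have hstep1 : QS ≤ ∑ u : V, ∑ v : V, ((if G.Adj u v then 2 * g u ^ 2 else 0)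
        + (if G.Adj u v then 2 * g v ^ 2 else 0)) := by
      rw [hQSdef]
      apply Finset.sum_le_sum; intro u _
      apply Finset.sum_le_sum; intro v _
      split_ifs with h
      · nlinarith [sq_nonneg (g u - g v)]
      · norm_num
    have hsplit : ∑ u : V, ∑ v : V, ((if G.Adj u v then 2 * g u ^ 2 else 0)
        + (if G.Adj u v then 2 * g v ^ 2 else 0))
        = 2 * (∑ u : V, (G.degree u : ℝ) * g u ^ 2)
          + 2 * (∑ u : V, (G.degree u : ℝ) * g u ^ 2) := by
      simp_rw [Finset.sum_add_distrib]
      congr 1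
      · have hh : ∀ u v : V, (if G.Adj u v then 2 * g u ^ 2 else 0)
            = 2 * (if G.Adj u v then g u ^ 2 else 0) := by
          intro u v; split_ifs <;> ring
        simp_rw [hh, ← Finset.mul_sum]
        rw [aux_deg G g]
      · have hh : ∀ u v : V, (if G.Adj u v then 2 * g v ^ 2 else 0)
            = 2 * (if G.Adj v u then g v ^ 2 else 0) := by
          intro u v; rw [if_congr (G.adj_comm u v) rfl rfl]; split_ifs <;> ring
        simp_rw [hh, ← Finset.mul_sum]
        rw [Finset.sum_comm, aux_deg G g]
    have hdeg : (∑ u : V, (G.degree u : ℝ) * g u ^ 2) ≤ (G.maxDegree : ℝ) * T := by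
      rw [hTdef, Finset.mul_sum]
      apply Finset.sum_le_sum; intro u _
      apply mul_le_mul_of_nonneg_right _ (sq_nonneg _)
      exact_mod_cast G.degree_le_maxDegree u
    calc QS ≤ _ := hstep1
      _ = 2 * (∑ u : V, (G.degree u : ℝ) * g u ^ 2)
          + 2 * (∑ u : V, (G.degree u : ℝ) * g u ^ 2) := hsplit
      _ ≤ 2 * ((G.maxDegree : ℝ) * T) + 2 * ((G.maxDegree : ℝ) * T) := by linarith
      _ = 4 * (G.maxDegree : ℝ) * T := by ring
  -- finish
  have h2βT : 0 ≤ 2 * β * T := by positivity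
  have hfin : (2 * β * T)^2 ≤ (2 * lm * T) * (4 * (G.maxDegree : ℝ) * T) := by
    have h1 : (2 * β * T)^2 ≤ EA^2 := by
      apply pow_le_pow_left₀ h2βT
      rw [hEAdef]
      exact hmain
    have h2 : (∑ u : V, ∑ v : V, if G.Adj u v then (g u - g v)^2 else 0) * QS
        ≤ (2 * lm * T) * (4 * (G.maxDegree : ℝ) * T) := by
      apply mul_le_mul hgQ hplus hQS0
      have : 0 < T := hgT
      positivity
    linarith [hCS]
  have hβsq : β^2 ≤ 2 * (G.maxDegree : ℝ) * lm := by
    nlinarith [hfin, mul_pos hgT hgT, hgT]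
  calc β = Real.sqrt (β^2) := (Real.sqrt_sq hβ0).symm
    _ ≤ Real.sqrt (2 * (G.maxDegree : ℝ) * lm) := Real.sqrt_le_sqrt hβsq
end

section
/- Let X be a finite connected non-bipartite d-regular simple graph on n vertices with adjacency eigenvalues d = α_1 > α_2 ≥ … ≥ α_n (listed with multiplicity), and set α = max{α_2, −α_n}. Then for all vertex subsets S and T, |e(S,T) − (d/n)·|S|·|T|| ≤ (α/n)·√(|S|·|T|·(n−|S|)·(n−|T|)), where e(S,T) = #{(u,v) ∈ S × T : u is adjacent to v}. -/
open Matrix Finset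

section Helpers

variable {V : Type*} [Fintype V] [DecidableEq V]

private lemma eml_parseval {A : Matrix V V ℝ} (hA : A.IsHermitian) (x y : V → ℝ) :
    x ⬝ᵥ y = ∑ j, ((hA.eigenvectorBasis j : V → ℝ) ⬝ᵥ x) *
      ((hA.eigenvectorBasis j : V → ℝ) ⬝ᵥ y) := by
  have hU : (hA.eigenvectorUnitary : Matrix V V ℝ) * star (hA.eigenvectorUnitary : Matrix V V ℝ) = 1 :=
    Matrix.mem_unitaryGroup_iff.mp hA.eigenvectorUnitary.2
  calc x ⬝ᵥ y = x ⬝ᵥ (((hA.eigenvectorUnitary : Matrix V V ℝ) * star (hA.eigenvectorUnitary : Matrix V V ℝ)) *ᵥ y) := by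
        rw [hU, one_mulVec]
    _ = (x ᵥ* (hA.eigenvectorUnitary : Matrix V V ℝ)) ⬝ᵥ (star (hA.eigenvectorUnitary : Matrix V V ℝ) *ᵥ y) := by
        rw [← mulVec_mulVec, dotProduct_mulVec]
    _ = _ := by
        simp only [dotProduct, vecMul, mulVec, Matrix.star_apply, star_trivial,
          Matrix.IsHermitian.eigenvectorUnitary_apply]
        refine Finset.sum_congr rfl fun j _ => ?_
        congr 1
        · exact Finset.sum_congr rfl fun i _ => mul_comm _ _

private lemma eml_spec {A : Matrix V V ℝ} (hA : A.IsHermitian) (x y : V → ℝ) :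
    x ⬝ᵥ (A *ᵥ y) = ∑ j, hA.eigenvalues j * ((hA.eigenvectorBasis j : V → ℝ) ⬝ᵥ x) *
      ((hA.eigenvectorBasis j : V → ℝ) ⬝ᵥ y) := by
  conv_lhs => rw [hA.spectral_theorem, Unitary.conjStarAlgAut_apply]
  rw [← mulVec_mulVec, dotProduct_mulVec, ← vecMul_vecMul]
  simp only [dotProduct, vecMul_diagonal]
  simp only [Matrix.star_apply, star_trivial, mulVec, vecMul,
    Matrix.IsHermitian.eigenvectorUnitary_apply, Function.comp_apply, dotProduct,
    RCLike.ofReal_real_eq_id, id_eq]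
  refine Finset.sum_congr rfl fun j _ => ?_
  rw [Finset.sum_congr rfl fun i (_ : i ∈ Finset.univ) => mul_comm (x i) ((hA.eigenvectorBasis j) i)]
  ring

private lemma eml_eig_const {G : SimpleGraph V} [DecidableRel G.Adj] {d : ℕ}
    (hconn : G.Connected) (hreg : G.IsRegularOfDegree d)
    (hA : (G.adjMatrix ℝ).IsHermitian) {j : V} (hj : hA.eigenvalues j = d)
    {x : V → ℝ} (hx : ∑ i, x i = 0) :
    (hA.eigenvectorBasis j : V → ℝ) ⬝ᵥ x = 0 := by
  set u : V → ℝ := (hA.eigenvectorBasis j : V → ℝ) with hu_def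
  have hu : G.adjMatrix ℝ *ᵥ u = (d : ℝ) • u := by
    have := hA.mulVec_eigenvectorBasis j
    rw [hj] at this
    exact this
  have hL : G.lapMatrix ℝ *ᵥ u = 0 := by
    ext i
    rw [SimpleGraph.lapMatrix, Matrix.sub_mulVec, hu]
    simp [SimpleGraph.degMatrix_mulVec_apply, hreg i]
  have hconst : ∀ i k : V, u i = u k := by
    have h2 := (G.lapMatrix_mulVec_eq_zero_iff_forall_reachable (x := u)).mp
      hL
    exact fun i k => h2 i k (hconn.preconnected i k)
  obtain ⟨i0⟩ := hconn.nonempty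
  calc u ⬝ᵥ x = ∑ i, u i0 * x i :=
        Finset.sum_congr rfl fun i _ => by rw [hconst i i0]
    _ = u i0 * ∑ i, x i := by rw [Finset.mul_sum]
    _ = 0 := by rw [hx, mul_zero]

private lemma eml_bound {G : SimpleGraph V} [DecidableRel G.Adj] {d : ℕ}
    (hconn : G.Connected) (hreg : G.IsRegularOfDegree d)
    (hA : (G.adjMatrix ℝ).IsHermitian) {β : ℝ} (hβ0 : 0 ≤ β)
    (hβ : ∀ j : V, hA.eigenvalues j ≠ (d : ℝ) → |hA.eigenvalues j| ≤ β)
    (x y : V → ℝ) (hx : ∑ i, x i = 0) :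
    |x ⬝ᵥ (G.adjMatrix ℝ *ᵥ y)| ≤ β * Real.sqrt (x ⬝ᵥ x) * Real.sqrt (y ⬝ᵥ y) := by
  rw [eml_spec hA]
  set c : V → ℝ := fun j => (hA.eigenvectorBasis j : V → ℝ) ⬝ᵥ x with hc
  set e : V → ℝ := fun j => (hA.eigenvectorBasis j : V → ℝ) ⬝ᵥ y with he
  have hcx : ∑ j, |c j| ^ 2 = x ⬝ᵥ x := by
    simp_rw [sq_abs, sq]; exact (eml_parseval hA x x).symm
  have hey : ∑ j, |e j| ^ 2 = y ⬝ᵥ y := by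
    simp_rw [sq_abs, sq]; exact (eml_parseval hA y y).symm
  calc |∑ j, hA.eigenvalues j * c j * e j| ≤ ∑ j, |hA.eigenvalues j * c j * e j| :=
        Finset.abs_sum_le_sum_abs _ _
    _ ≤ ∑ j, β * (|c j| * |e j|) := by
        refine Finset.sum_le_sum fun j _ => ?_
        by_cases hj : hA.eigenvalues j = (d : ℝ)
        · have hc0 : c j = 0 := eml_eig_const hconn hreg hA hj hx
          rw [abs_mul, abs_mul, hc0]
          simp [mul_nonneg hβ0 (mul_nonneg (abs_nonneg _) (abs_nonneg _))]
        · rw [abs_mul, abs_mul, mul_assoc]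
          exact mul_le_mul_of_nonneg_right (hβ j hj) (by positivity)
    _ = β * ∑ j, |c j| * |e j| := by rw [Finset.mul_sum]
    _ ≤ β * (Real.sqrt (∑ j, |c j| ^ 2) * Real.sqrt (∑ j, |e j| ^ 2)) :=
        mul_le_mul_of_nonneg_left (Real.sum_mul_le_sqrt_mul_sqrt _ _ _) hβ0
    _ = β * Real.sqrt (x ⬝ᵥ x) * Real.sqrt (y ⬝ᵥ y) := by
        rw [hcx, hey, mul_assoc]

private lemma eml_chi_adj_chi {G : SimpleGraph V} [DecidableRel G.Adj] (S T : Finset V) :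
    (fun i => if i ∈ S then (1:ℝ) else 0) ⬝ᵥ
        (G.adjMatrix ℝ *ᵥ (fun j => if j ∈ T then (1:ℝ) else 0))
      = (((S ×ˢ T).filter fun p => G.Adj p.1 p.2).card : ℝ) := by
  rw [Finset.card_filter]
  push_cast
  rw [Finset.sum_product]
  simp only [dotProduct, mulVec, SimpleGraph.adjMatrix_apply, dotProduct, ite_mul, mul_ite,
    one_mul, mul_one, zero_mul, mul_zero, Finset.sum_ite_mem, Finset.univ_inter]

private lemma eml_sum_chi (S : Finset V) : ∑ i, (if i ∈ S then (1:ℝ) else 0) = S.card := by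
  simp [Finset.sum_boole, Finset.filter_mem_eq_inter]

private lemma eml_one_adj {G : SimpleGraph V} [DecidableRel G.Adj] {d : ℕ}
    (hreg : G.IsRegularOfDegree d) (w : V → ℝ) :
    (fun _ => (1:ℝ)) ⬝ᵥ (G.adjMatrix ℝ *ᵥ w) = d * ∑ i, w i := by
  rw [dotProduct_mulVec]
  have h1 : (fun _ => (1:ℝ)) ᵥ* G.adjMatrix ℝ = fun _ => (d : ℝ) := by
    have hs : (G.adjMatrix ℝ)ᵀ = G.adjMatrix ℝ := (G.isSymm_adjMatrix).eq
    rw [← hs, vecMul_transpose]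
    funext v
    simpa using G.adjMatrix_mulVec_const_apply_of_regular (a := (1:ℝ)) hreg (v := v)
  rw [h1]
  simp [dotProduct, Finset.mul_sum]

private lemma eml_adj_one {G : SimpleGraph V} [DecidableRel G.Adj] {d : ℕ}
    (hreg : G.IsRegularOfDegree d) (w : V → ℝ) :
    w ⬝ᵥ (G.adjMatrix ℝ *ᵥ (fun _ => (1:ℝ))) = d * ∑ i, w i := by
  have h1 : (G.adjMatrix ℝ *ᵥ (fun _ => (1:ℝ))) = fun _ => (d:ℝ) := by
    funext v
    simpa using G.adjMatrix_mulVec_const_apply_of_regular (a := (1:ℝ)) hreg (v := v)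
  rw [h1]
  simp only [dotProduct]
  rw [mul_comm (d:ℝ), Finset.sum_mul]

end Helpers

/-- **Expander mixing lemma (non-bipartite case).** Let `X` be a finite connected
non-bipartite `d`-regular simple graph on `n` vertices with adjacency eigenvalues
`d = α₁ > α₂ ≥ … ≥ α_n` listed in decreasing order with multiplicity, and set
`α = max (α₂, -α_n)`. Then for all vertex subsets `S, T`,
`|e(S,T) - (d/n)|S||T|| ≤ (α/n) √(|S||T|(n-|S|)(n-|T|))`, where
`e(S,T)` is the number of pairs `(u,v) ∈ S × T` with `u` adjacent to `v`. -/
theorem stmt_19 {V : Type*} [Fintype V] [DecidableEq V] (G : SimpleGraph V)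
    [DecidableRel G.Adj] (d : ℕ) (hconn : G.Connected) (hnb : ¬ G.Colorable 2)
    (hreg : G.IsRegularOfDegree d) (hn : 2 ≤ Fintype.card V)
    (hA : (G.adjMatrix ℝ).IsHermitian)
    (α : Fin (Fintype.card V) → ℝ) (hanti : Antitone α)
    (e : Fin (Fintype.card V) ≃ V) (hα : ∀ i, α i = hA.eigenvalues (e i))
    (hα1 : α ⟨0, by omega⟩ = d) :
    ∀ S T : Finset V,
      |((((S ×ˢ T).filter fun p => G.Adj p.1 p.2).card : ℝ) -
          (d : ℝ) / (Fintype.card V : ℝ) * S.card * T.card)| ≤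
        max (α ⟨1, hn⟩) (-α ⟨Fintype.card V - 1, by omega⟩) / (Fintype.card V : ℝ) *
          Real.sqrt ((S.card : ℝ) * T.card * ((Fintype.card V : ℝ) - S.card) *
            ((Fintype.card V : ℝ) - T.card)) := by
  intro S T
  have hN : (0:ℝ) < (Fintype.card V : ℝ) := by
    have : 0 < Fintype.card V := by omega
    exact_mod_cast this
  set β : ℝ := max (α ⟨1, hn⟩) (-α ⟨Fintype.card V - 1, by omega⟩) with hβdef
  have h1max : α ⟨1, hn⟩ ≤ β := le_max_left _ _
  have h2max : -α ⟨Fintype.card V - 1, by omega⟩ ≤ β := le_max_right _ _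
  have hle : α ⟨Fintype.card V - 1, by omega⟩ ≤ α ⟨1, hn⟩ := by
    apply hanti
    rw [Fin.mk_le_mk]
    omega
  have hβ0 : 0 ≤ β := by linarith
  have hβ : ∀ j : V, hA.eigenvalues j ≠ (d:ℝ) → |hA.eigenvalues j| ≤ β := by
    intro j hj
    have hj' : hA.eigenvalues j = α (e.symm j) := by
      rw [hα (e.symm j), Equiv.apply_symm_apply]
    have h0 : ((e.symm j : Fin (Fintype.card V)) : ℕ) ≠ 0 := by
      intro h
      exact hj (by rw [hj', show e.symm j = ⟨0, by omega⟩ from Fin.ext h, hα1])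
    have hup : α (e.symm j) ≤ α ⟨1, hn⟩ := by
      apply hanti
      rw [Fin.le_def]
      simp only []
      omega
    have hlo : α ⟨Fintype.card V - 1, by omega⟩ ≤ α (e.symm j) := by
      apply hanti
      rw [Fin.le_def]
      have := (e.symm j).isLt
      simp only []
      omega
    rw [hj', abs_le]
    constructor
    · linarith
    · linarith
  -- indicator vectors
  set χS : V → ℝ := fun i => if i ∈ S then 1 else 0 with hχSdef
  set χT : V → ℝ := fun i => if i ∈ T then 1 else 0 with hχTdef
  set x : V → ℝ := χS - ((S.card : ℝ) / (Fintype.card V : ℝ)) • (fun _ => (1:ℝ)) with hxdef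
  set y : V → ℝ := χT - ((T.card : ℝ) / (Fintype.card V : ℝ)) • (fun _ => (1:ℝ)) with hydef
  have hone : ∑ _i : V, (1:ℝ) = (Fintype.card V : ℝ) := by simp
  have hxsum : ∑ i, x i = 0 := by
    rw [hxdef]
    simp only [Pi.sub_apply, Pi.smul_apply, smul_eq_mul, mul_one, Finset.sum_sub_distrib,
      hχSdef, eml_sum_chi, Finset.sum_const, Finset.card_univ, nsmul_eq_mul]
    field_simp
    ring
  have hysum : ∑ i, y i = 0 := by
    rw [hydef]
    simp only [Pi.sub_apply, Pi.smul_apply, smul_eq_mul, mul_one, Finset.sum_sub_distrib,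
      hχTdef, eml_sum_chi, Finset.sum_const, Finset.card_univ, nsmul_eq_mul]
    field_simp
    ring
  have hAy : x ⬝ᵥ (G.adjMatrix ℝ *ᵥ y) =
      (((S ×ˢ T).filter fun p => G.Adj p.1 p.2).card : ℝ)
        - (d : ℝ) / (Fintype.card V : ℝ) * S.card * T.card := by
    rw [hxdef, hydef, Matrix.mulVec_sub, Matrix.mulVec_smul, sub_dotProduct, dotProduct_sub,
      dotProduct_sub, smul_dotProduct, smul_dotProduct, dotProduct_smul, dotProduct_smul,
      eml_chi_adj_chi, eml_adj_one hreg, eml_one_adj hreg, eml_one_adj hreg,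
      eml_sum_chi, eml_sum_chi, hone]
    simp only [smul_eq_mul]
    field_simp
    ring
  have hSle : (S.card : ℝ) ≤ (Fintype.card V : ℝ) := by
    exact_mod_cast (Finset.card_le_univ S).trans_eq Finset.card_univ
  have hTle : (T.card : ℝ) ≤ (Fintype.card V : ℝ) := by
    exact_mod_cast (Finset.card_le_univ T).trans_eq Finset.card_univ
  have hchiS : χS ⬝ᵥ χS = (S.card : ℝ) := by
    rw [hχSdef]
    simp only [dotProduct, ite_mul, one_mul, zero_mul, if_pos, ite_eq_ite]
    rw [← eml_sum_chi S]
    refine Finset.sum_congr rfl fun i _ => ?_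
    split_ifs <;> simp_all
  have hchiT : χT ⬝ᵥ χT = (T.card : ℝ) := by
    rw [hχTdef]
    simp only [dotProduct, ite_mul, one_mul, zero_mul, if_pos, ite_eq_ite]
    rw [← eml_sum_chi T]
    refine Finset.sum_congr rfl fun i _ => ?_
    split_ifs <;> simp_all
  have hchiSone : χS ⬝ᵥ (fun _ => (1:ℝ)) = (S.card : ℝ) := by
    rw [hχSdef]
    simp only [dotProduct, mul_one]
    exact eml_sum_chi S
  have honechiS : (fun _ => (1:ℝ)) ⬝ᵥ χS = (S.card : ℝ) := by
    rw [hχSdef]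
    simp only [dotProduct, one_mul]
    exact eml_sum_chi S
  have hchiTone : χT ⬝ᵥ (fun _ => (1:ℝ)) = (T.card : ℝ) := by
    rw [hχTdef]
    simp only [dotProduct, mul_one]
    exact eml_sum_chi T
  have honechiT : (fun _ => (1:ℝ)) ⬝ᵥ χT = (T.card : ℝ) := by
    rw [hχTdef]
    simp only [dotProduct, one_mul]
    exact eml_sum_chi T
  have honeone : (fun _ => (1:ℝ)) ⬝ᵥ (fun _ : V => (1:ℝ)) = (Fintype.card V : ℝ) := by
    simp [dotProduct]
  have hxx : x ⬝ᵥ x = (S.card : ℝ) * ((Fintype.card V : ℝ) - S.card) / (Fintype.card V : ℝ) := by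
    rw [hxdef, sub_dotProduct, dotProduct_sub, dotProduct_sub, smul_dotProduct, smul_dotProduct,
      dotProduct_smul, dotProduct_smul, hchiS, hchiSone, honechiS, honeone]
    simp only [smul_eq_mul]
    field_simp
    ring
  have hyy : y ⬝ᵥ y = (T.card : ℝ) * ((Fintype.card V : ℝ) - T.card) / (Fintype.card V : ℝ) := by
    rw [hydef, sub_dotProduct, dotProduct_sub, dotProduct_sub, smul_dotProduct, smul_dotProduct,
      dotProduct_smul, dotProduct_smul, hchiT, hchiTone, honechiT, honeone]
    simp only [smul_eq_mul]
    field_simp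
    ring
  have key := eml_bound hconn hreg hA hβ0 hβ x y hxsum
  rw [hAy, hxx, hyy] at key
  refine key.trans (le_of_eq ?_)
  have ha : (0:ℝ) ≤ (S.card : ℝ) * ((Fintype.card V : ℝ) - S.card) / (Fintype.card V : ℝ) := by
    apply div_nonneg _ hN.le
    exact mul_nonneg (Nat.cast_nonneg _) (by linarith)
  have hP : (0:ℝ) ≤ (S.card : ℝ) * T.card * ((Fintype.card V : ℝ) - S.card) *
      ((Fintype.card V : ℝ) - T.card) := by
    have h1 : (0:ℝ) ≤ (S.card : ℝ) := Nat.cast_nonneg _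
    have h2 : (0:ℝ) ≤ (T.card : ℝ) := Nat.cast_nonneg _
    have h3 : (0:ℝ) ≤ (Fintype.card V : ℝ) - S.card := by linarith
    have h4 : (0:ℝ) ≤ (Fintype.card V : ℝ) - T.card := by linarith
    positivity
  rw [mul_assoc, ← Real.sqrt_mul ha]
  have heq : (S.card : ℝ) * ((Fintype.card V : ℝ) - S.card) / (Fintype.card V : ℝ) *
      ((T.card : ℝ) * ((Fintype.card V : ℝ) - T.card) / (Fintype.card V : ℝ)) =
      ((S.card : ℝ) * T.card * ((Fintype.card V : ℝ) - S.card) *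
        ((Fintype.card V : ℝ) - T.card)) * ((Fintype.card V : ℝ)⁻¹) ^ 2 := by
    field_simp
  rw [heq, Real.sqrt_mul hP, Real.sqrt_sq (by positivity)]
  rw [hβdef]
  ring
end
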